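/- arXiv:1511.07471 — 5 statements merged into one kernel-verified Lean document; each statement's English description precedes it below -/
import Mathlib

section
/- Under Assumption 1, the matrix C = −Φᵀ M̄ (I − P^λ_{π,γ}) Φ is negative definite (i.e., there exists c > 0 with θᵀCθ ≤ −c|θ|² for all θ ∈ ℝⁿ) if and only if Assumption 2 holds. -/
/-!
Statement 0: Under Assumption 1 (on target and behavior policies), the ETD(λ) matrix
`C = −Φᵀ M̄ (I − P^λ_{π,γ}) Φ` is negative definite (∃ c > 0 with θᵀCθ ≤ −c|θ|² for all θ)
if and only if Assumption 2 holds (the feature vectors of emphasized states contain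
n linearly independent vectors).
-/

open Matrix Finset Filter Topology
open scoped Classical NNReal

noncomputable section
namespace ETD0

/-- Transition matrix on states induced by a policy `pol` in the MDP with transitions `p`. -/
def Pmat {N M : ℕ} (p : Fin N → Fin M → Fin N → ℝ) (pol : Fin N → Fin M → ℝ) :
    Matrix (Fin N) (Fin N) ℝ :=
  Matrix.of fun s s' => ∑ a, pol s a * p s a s'

/-- The substochastic matrix `P^λ_{π,γ} = I − (I − P_π Γ Λ)⁻¹ (I − P_π Γ)`. -/
def Plam {N M : ℕ} (p : Fin N → Fin M → Fin N → ℝ) (pol : Fin N → Fin M → ℝ)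
    (γf lf : Fin N → ℝ) : Matrix (Fin N) (Fin N) ℝ :=
  1 - (1 - Pmat p pol * Matrix.diagonal γf * Matrix.diagonal lf)⁻¹ *
      (1 - Pmat p pol * Matrix.diagonal γf)

/-- Diagonal entries of `M̄`: `diag(M̄) = d_{π°,i}ᵀ (I − P^λ_{π,γ})⁻¹`, where
`d_{π°,i}(s) = d_{π°}(s)·i(s)`. -/
def MbarDiag {N M : ℕ} (p : Fin N → Fin M → Fin N → ℝ) (pol : Fin N → Fin M → ℝ)
    (γf lf d iF : Fin N → ℝ) : Fin N → ℝ :=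
  Matrix.vecMul (fun s => d s * iF s) (1 - Plam p pol γf lf)⁻¹

/-- The ETD(λ) matrix `C = −Φᵀ M̄ (I − P^λ_{π,γ}) Φ`. -/
def Cmat {N M n : ℕ} (p : Fin N → Fin M → Fin N → ℝ) (pol : Fin N → Fin M → ℝ)
    (γf lf d iF : Fin N → ℝ) (Φ : Matrix (Fin N) (Fin n) ℝ) : Matrix (Fin n) (Fin n) ℝ :=
  -(Φᵀ * Matrix.diagonal (MbarDiag p pol γf lf d iF) * (1 - Plam p pol γf lf) * Φ)


/-! ### Auxiliary lemmas -/

variable {N : ℕ}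

/-- Entrywise nonnegativity of a product. -/
lemma entry_nonneg_mul {A B : Matrix (Fin N) (Fin N) ℝ}
    (hA : ∀ i j, 0 ≤ A i j) (hB : ∀ i j, 0 ≤ B i j) : ∀ i j, 0 ≤ (A * B) i j := by
  intro i j
  rw [Matrix.mul_apply]
  exact Finset.sum_nonneg fun k _ => mul_nonneg (hA i k) (hB k j)

lemma entry_nonneg_pow {A : Matrix (Fin N) (Fin N) ℝ}
    (hA : ∀ i j, 0 ≤ A i j) : ∀ k i j, 0 ≤ (A ^ k) i j := by
  intro k
  induction k with
  | zero => intro i j; simp [Matrix.one_apply]; split <;> norm_num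
  | succ k ih => rw [pow_succ]; exact entry_nonneg_mul ih hA

lemma entry_pow_le_pow {A B : Matrix (Fin N) (Fin N) ℝ}
    (hA : ∀ i j, 0 ≤ A i j) (hAB : ∀ i j, A i j ≤ B i j) :
    ∀ k i j, (A ^ k) i j ≤ (B ^ k) i j := by
  intro k
  induction k with
  | zero => intro i j; simp
  | succ k ih =>
      intro i j
      rw [pow_succ, pow_succ, Matrix.mul_apply, Matrix.mul_apply]
      apply Finset.sum_le_sum
      intro u _
      exact mul_le_mul ((ih i u)) (hAB u j) (hA u j) (le_trans (entry_nonneg_pow hA k i u) (ih i u))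

/-- Entry of a product dominates a single term of the defining sum, for nonneg matrices. -/
lemma entry_mul_ge {A B : Matrix (Fin N) (Fin N) ℝ}
    (hA : ∀ i j, 0 ≤ A i j) (hB : ∀ i j, 0 ≤ B i j) (i k j : Fin N) :
    A i k * B k j ≤ (A * B) i j := by
  rw [Matrix.mul_apply]
  exact Finset.single_le_sum (f := fun u => A i u * B u j)
    (fun u _ => mul_nonneg (hA i u) (hB u j)) (Finset.mem_univ k)


lemma exists_pow_rowsum_lt {B : Matrix (Fin N) (Fin N) ℝ}
    (h0 : ∀ i j, 0 ≤ B i j) (h1 : ∀ i, ∑ j, B i j ≤ 1) (hu : IsUnit (1 - B)) :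
    ∃ m, ∀ i, ∑ j, (B ^ m) i j < 1 := by
  set w : ℕ → Fin N → ℝ := fun k => (B ^ k) *ᵥ (fun _ => 1) with hw
  have hw0 : w 0 = fun _ => 1 := by simp [hw]
  have hwsucc : ∀ k, w (k + 1) = B *ᵥ w k := by
    intro k
    simp only [hw, pow_succ']
    rw [← Matrix.mulVec_mulVec]
  have hnn : ∀ k i, 0 ≤ w k i := by
    intro k
    induction k with
    | zero => intro i; simp [hw0]
    | succ k ih =>
        intro i
        rw [hwsucc]
        show 0 ≤ ∑ j, B i j * w k j
        exact Finset.sum_nonneg fun j _ => mul_nonneg (h0 i j) (ih j)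
  have hle1 : ∀ k i, w k i ≤ 1 := by
    intro k
    induction k with
    | zero => intro i; simp [hw0]
    | succ k ih =>
        intro i
        rw [hwsucc]
        calc (B *ᵥ w k) i = ∑ j, B i j * w k j := rfl
          _ ≤ ∑ j, B i j * 1 := Finset.sum_le_sum fun j _ =>
              mul_le_mul_of_nonneg_left (ih j) (h0 i j)
          _ ≤ 1 := by simpa using h1 i
  have hanti : ∀ i, Antitone fun k => w k i := by
    have hstep : ∀ k i, w (k + 1) i ≤ w k i := by
      intro k
      induction k with
      | zero => intro i; rw [hw0]; exact hle1 1 i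
      | succ k ih =>
          intro i
          have e1 : w (k+1+1) i = ∑ j, B i j * w (k+1) j := by rw [hwsucc (k+1)]; rfl
          have e2 : w (k+1) i = ∑ j, B i j * w k j := by rw [hwsucc k]; rfl
          rw [e1, e2]
          exact Finset.sum_le_sum fun j _ => mul_le_mul_of_nonneg_left (ih j) (h0 i j)
    intro i
    exact antitone_nat_of_succ_le fun k => hstep k i
  -- limits
  set L : Fin N → ℝ := fun i => ⨅ k, w k i with hL
  have htend : ∀ i, Tendsto (fun k => w k i) atTop (𝓝 (L i)) := by
    intro i
    apply tendsto_atTop_ciInf (hanti i)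
    exact ⟨0, by rintro x ⟨k, rfl⟩; exact hnn k i⟩
  have hfix : B *ᵥ L = L := by
    funext i
    have h2 : Tendsto (fun k => w (k + 1) i) atTop (𝓝 (L i)) :=
      (htend i).comp (tendsto_add_atTop_nat 1)
    have h3 : Tendsto (fun k => (B *ᵥ w k) i) atTop (𝓝 ((B *ᵥ L) i)) := by
      have : ∀ k, (B *ᵥ w k) i = ∑ j, B i j * w k j := fun k => rfl
      simp only [this]
      have : (B *ᵥ L) i = ∑ j, B i j * L j := rfl
      rw [this]
      exact tendsto_finset_sum _ fun j _ => (htend j).const_mul _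
    have h4 : ∀ k, (B *ᵥ w k) i = w (k + 1) i := fun k => by rw [hwsucc k]
    simp only [h4] at h3
    exact tendsto_nhds_unique h3 h2
  have hL0 : L = 0 := by
    have hker : (1 - B) *ᵥ L = 0 := by
      rw [Matrix.sub_mulVec, Matrix.one_mulVec, hfix, sub_self]
    have hdet := (Matrix.isUnit_iff_isUnit_det _).mp hu
    have := congrArg (fun v => (1 - B)⁻¹ *ᵥ v) hker
    simpa [Matrix.mulVec_mulVec, Matrix.nonsing_inv_mul _ hdet, Matrix.one_mulVec] using this
  have hev : ∀ᶠ k in (atTop : Filter ℕ), ∀ i, w k i < 1 := by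
    rw [Filter.eventually_all]
    intro i
    have : Tendsto (fun k => w k i) atTop (𝓝 0) := by
      have := htend i; rwa [show L i = 0 by rw [hL0]; rfl] at this
    exact this.eventually_lt_const one_pos
  obtain ⟨m, hm⟩ := hev.exists
  refine ⟨m, fun i => ?_⟩
  have : w m i = ∑ j, (B ^ m) i j := by
    simp [hw, Matrix.mulVec, dotProduct]
  rw [← this]
  exact hm i


section Normed

attribute [local instance] Matrix.linftyOpNormedRing Matrix.linftyOpNormedSpace
  Matrix.linftyOpNormedAlgebra

lemma norm_lt_one_of_rowsum_lt {X : Matrix (Fin N) (Fin N) ℝ}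
    (h0 : ∀ i j, 0 ≤ X i j) (h1 : ∀ i, ∑ j, X i j < 1) : ‖X‖ < 1 := by
  rw [Matrix.linfty_opNorm_def]
  rw [show (1:ℝ) = ((1:ℝ≥0):ℝ) by norm_num, NNReal.coe_lt_coe]
  rw [Finset.sup_lt_iff (show (⊥ : ℝ≥0) < 1 by norm_num)]
  intro i _
  rw [← NNReal.coe_lt_coe]
  push_cast
  calc ∑ j, (‖X i j‖₊ : ℝ) = ∑ j, X i j := by
        refine Finset.sum_congr rfl fun j _ => ?_
        rw [coe_nnnorm, Real.norm_eq_abs, abs_of_nonneg (h0 i j)]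
    _ < 1 := h1 i

lemma entry_hasSum {f : ℕ → Matrix (Fin N) (Fin N) ℝ} {S : Matrix (Fin N) (Fin N) ℝ}
    (h : HasSum f S) (i j : Fin N) : HasSum (fun k => f k i j) (S i j) := by
  let ℓ : Matrix (Fin N) (Fin N) ℝ →ₗ[ℝ] ℝ :=
    { toFun := fun A => A i j, map_add' := fun _ _ => rfl, map_smul' := fun _ _ => rfl }
  have hc : Continuous ℓ := ℓ.continuous_of_finiteDimensional
  exact h.map ℓ hc

lemma one_sub_inv_package {X : Matrix (Fin N) (Fin N) ℝ}
    (h0 : ∀ i j, 0 ≤ X i j) (h1 : ∀ i, ∑ j, X i j < 1) :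
    IsUnit (1 - X) ∧ HasSum (fun k => X ^ k) (1 - X)⁻¹ := by
  have hn := norm_lt_one_of_rowsum_lt h0 h1
  have hs : Summable (fun k => X ^ k) := summable_geometric_of_norm_lt_one hn
  have hinv : (1 - X)⁻¹ = ∑' k, X ^ k := Matrix.inv_eq_right_inv (mul_neg_geom_series X hn)
  exact ⟨isUnit_one_sub_of_norm_lt_one hn, hinv ▸ hs.hasSum⟩

end Normed


/-- `(1-B) * ∑_{t<m} B^t = 1 - B^m`. -/
lemma one_sub_mul_geom (B : Matrix (Fin N) (Fin N) ℝ) (m : ℕ) :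
    (1 - B) * (∑ t ∈ Finset.range m, B ^ t) = 1 - B ^ m := by
  have hcomm : Commute B (∑ t ∈ Finset.range m, B ^ t) := by
    apply Commute.sum_right
    intro t _
    exact (Commute.refl B).pow_right t
  have h1 : (1 - B) * (∑ t ∈ Finset.range m, B ^ t)
      = -((∑ t ∈ Finset.range m, B ^ t) * (B - 1)) := by
    rw [Matrix.mul_sub, Matrix.sub_mul, Matrix.one_mul, Matrix.mul_one, hcomm.eq, neg_sub]
  rw [h1, geom_sum_mul, neg_sub]

lemma isUnit_one_sub_of_le {A B : Matrix (Fin N) (Fin N) ℝ}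
    (hB0 : ∀ i j, 0 ≤ B i j) (hB1 : ∀ i, ∑ j, B i j ≤ 1) (hBu : IsUnit (1 - B))
    (hA0 : ∀ i j, 0 ≤ A i j) (hAB : ∀ i j, A i j ≤ B i j) : IsUnit (1 - A) := by
  obtain ⟨m, hm⟩ := exists_pow_rowsum_lt hB0 hB1 hBu
  have hAm : ∀ i, ∑ j, (A ^ m) i j < 1 := fun i =>
    lt_of_le_of_lt (Finset.sum_le_sum fun j _ => entry_pow_le_pow hA0 hAB m i j) (hm i)
  have hXu : IsUnit (1 - A ^ m) :=
    (one_sub_inv_package (entry_nonneg_pow hA0 m) hAm).1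
  have hgeom := one_sub_mul_geom A m
  have hcomm : Commute (1 - A) (∑ t ∈ Finset.range m, A ^ t) := by
    apply Commute.sub_left (Commute.one_left _)
    apply Commute.sum_right
    intro t _
    exact (Commute.refl A).pow_right t
  have := hcomm.isUnit_mul_iff.mp (hgeom ▸ hXu)
  exact this.1

/-- Main package: for a nonnegative substochastic matrix with `1 - B` invertible,
the inverse is entrywise nonnegative, dominates all powers, and positivity of an
entry forces positivity of some power entry. -/
lemma inv_one_sub_package {B : Matrix (Fin N) (Fin N) ℝ}
    (h0 : ∀ i j, 0 ≤ B i j) (h1 : ∀ i, ∑ j, B i j ≤ 1) (hu : IsUnit (1 - B)) :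
    (∀ i j, 0 ≤ (1 - B)⁻¹ i j) ∧
    (∀ k i j, (B ^ k) i j ≤ (1 - B)⁻¹ i j) ∧
    (∀ i j, 0 < (1 - B)⁻¹ i j → ∃ k, 0 < (B ^ k) i j) := by
  obtain ⟨m, hm⟩ := exists_pow_rowsum_lt h0 h1 hu
  set X := B ^ m with hX
  have hX0 : ∀ i j, 0 ≤ X i j := entry_nonneg_pow h0 m
  obtain ⟨hXu, hXsum⟩ := one_sub_inv_package hX0 hm
  set S := ∑ t ∈ Finset.range m, B ^ t with hS
  have hS0 : ∀ i j, 0 ≤ S i j := by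
    intro i j
    rw [hS, Matrix.sum_apply]
    exact Finset.sum_nonneg fun t _ => entry_nonneg_pow h0 t i j
  have hF0 : ∀ i j, 0 ≤ (1 - X)⁻¹ i j := by
    intro i j
    exact hasSum_mono hasSum_zero (entry_hasSum hXsum i j) fun k => entry_nonneg_pow hX0 k i j
  -- (1-B)⁻¹ = S * (1-X)⁻¹
  have hEeq : (1 - B)⁻¹ = S * (1 - X)⁻¹ := by
    apply Matrix.inv_eq_right_inv
    rw [← Matrix.mul_assoc, one_sub_mul_geom B m, ← hX,
      Matrix.mul_nonsing_inv _ ((Matrix.isUnit_iff_isUnit_det _).mp hXu)]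
  have hE0 : ∀ i j, 0 ≤ (1 - B)⁻¹ i j := by
    rw [hEeq]; exact entry_nonneg_mul hS0 hF0
  refine ⟨hE0, ?_, ?_⟩
  · -- E ≥ B^k entrywise
    have hdet := (Matrix.isUnit_iff_isUnit_det _).mp hu
    have hrec : (1 - B)⁻¹ = 1 + B * (1 - B)⁻¹ := by
      have h := Matrix.mul_nonsing_inv _ hdet
      rw [Matrix.sub_mul, Matrix.one_mul] at h
      linear_combination (norm := module) h
    have hiter : ∀ K, (1 - B)⁻¹ = (∑ t ∈ Finset.range K, B ^ t) + B ^ K * (1 - B)⁻¹ := by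
      intro K
      induction K with
      | zero => simp
      | succ K ih =>
          rw [Finset.sum_range_succ]
          calc (1 - B)⁻¹ = (∑ t ∈ Finset.range K, B ^ t) + B ^ K * (1 - B)⁻¹ := ih
            _ = (∑ t ∈ Finset.range K, B ^ t) + B ^ K * (1 + B * (1 - B)⁻¹) := by rw [← hrec]
            _ = ((∑ t ∈ Finset.range K, B ^ t) + B ^ K) + B ^ (K + 1) * (1 - B)⁻¹ := by
                rw [Matrix.mul_add, Matrix.mul_one, pow_succ, Matrix.mul_assoc, ← add_assoc]
    intro k i j
    have h := hiter (k + 1)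
    have h2 : (1 - B)⁻¹ i j = (∑ t ∈ Finset.range (k+1), (B ^ t) i j) + (B ^ (k+1) * (1 - B)⁻¹) i j := by
      conv_lhs => rw [h]
      simp [Matrix.add_apply, Matrix.sum_apply]
    rw [h2]
    have t1 : (B ^ k) i j ≤ ∑ t ∈ Finset.range (k+1), (B ^ t) i j :=
      Finset.single_le_sum (f := fun t => (B ^ t) i j)
        (fun t _ => entry_nonneg_pow h0 t i j) (Finset.self_mem_range_succ k)
    have t2 : 0 ≤ (B ^ (k+1) * (1 - B)⁻¹) i j :=
      entry_nonneg_mul (entry_nonneg_pow h0 (k+1)) hE0 i j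
    linarith
  · -- positivity transfer
    intro i j hpos
    rw [hEeq, Matrix.mul_apply] at hpos
    have h1' : ∃ u, 0 < S i u * (1 - X)⁻¹ u j := by
      by_contra hcon
      push_neg at hcon
      have : ∀ u ∈ Finset.univ, S i u * (1 - X)⁻¹ u j = 0 := fun u _ =>
        le_antisymm (hcon u) (mul_nonneg (hS0 i u) (hF0 u j))
      rw [Finset.sum_eq_zero this] at hpos
      exact lt_irrefl _ hpos
    obtain ⟨u, hu'⟩ := h1'
    have hSiu : 0 < S i u := by
      rcases lt_or_ge 0 (S i u) with h | h
      · exact h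
      · exfalso; nlinarith [hF0 u j, hS0 i u]
    have hFuj : 0 < (1 - X)⁻¹ u j := by
      rcases lt_or_ge 0 ((1 - X)⁻¹ u j) with h | h
      · exact h
      · exfalso; nlinarith [hS0 i u]
    -- S i u > 0 ⟹ some power t < m with (B^t) i u > 0
    have hSsum : S i u = ∑ t ∈ Finset.range m, (B ^ t) i u := by
      rw [hS, Matrix.sum_apply]
    have h2' : ∃ t, 0 < (B ^ t) i u := by
      by_contra hcon
      push_neg at hcon
      have : ∀ t ∈ Finset.range m, (B ^ t) i u = 0 := fun t _ =>
        le_antisymm (hcon t) (entry_nonneg_pow h0 t i u)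
      rw [hSsum, Finset.sum_eq_zero this] at hSiu
      exact lt_irrefl _ hSiu
    obtain ⟨t, ht⟩ := h2'
    -- F u j > 0 ⟹ some (X^q) u j > 0
    have h3' : ∃ q, 0 < (X ^ q) u j := by
      by_contra hcon
      push_neg at hcon
      have hz : ∀ q, (X ^ q) u j = 0 := fun q =>
        le_antisymm (hcon q) (entry_nonneg_pow hX0 q u j)
      have := entry_hasSum hXsum u j
      simp only [hz] at this
      have := this.unique hasSum_zero
      rw [this] at hFuj
      exact lt_irrefl _ hFuj
    obtain ⟨q, hq⟩ := h3'
    refine ⟨t + m * q, ?_⟩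
    have hXq : (X ^ q) = B ^ (m * q) := by rw [hX, ← pow_mul]
    rw [hXq] at hq
    have := entry_mul_ge (entry_nonneg_pow h0 t) (entry_nonneg_pow h0 (m*q)) i u j
    rw [← pow_add] at this
    nlinarith


/-- Key algebraic identity: symmetrized decomposition of the ETD quadratic form. -/
lemma quad_identity (m di : Fin N → ℝ) (Q : Matrix (Fin N) (Fin N) ℝ)
    (hcol : ∀ s, di s = m s - ∑ t, m t * Q t s) (x : Fin N → ℝ) :
    2 * (∑ s, m s * x s * (x s - ∑ s', Q s s' * x s')) =
      (∑ s, (m s * (1 - ∑ s', Q s s') + di s) * (x s)^2)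
      + ∑ s, ∑ s', m s * Q s s' * (x s - x s')^2 := by
  set A := ∑ s, m s * x s * x s with hA
  set Bd := ∑ s, ∑ s', m s * Q s s' * (x s * x s') with hBd
  set Cd := ∑ s, ∑ s', m s * Q s s' * (x s * x s) with hCd
  set Dd := ∑ s, ∑ s', m s * Q s s' * (x s' * x s') with hDd
  have e1 : ∑ s, m s * x s * (x s - ∑ s', Q s s' * x s') = A - Bd := by
    rw [hA, hBd, ← Finset.sum_sub_distrib]
    refine Finset.sum_congr rfl fun s _ => ?_
    rw [mul_sub, Finset.mul_sum]
    congr 1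
    refine Finset.sum_congr rfl fun s' _ => ?_
    ring
  have e2 : ∑ s, (m s * (1 - ∑ s', Q s s') + di s) * (x s)^2 = 2*A - Cd - Dd := by
    have swap : Dd = ∑ s, ∑ t, m t * Q t s * (x s * x s) := by
      rw [hDd]; rw [Finset.sum_comm]
    have step : ∀ s : Fin N, (m s * (1 - ∑ s', Q s s') + di s) * (x s)^2
        = 2*(m s * x s * x s) - (∑ s', m s * Q s s' * (x s * x s))
          - (∑ t, m t * Q t s * (x s * x s)) := by
      intro s
      rw [hcol s]
      rw [show ∑ s', m s * Q s s' * (x s * x s) = (∑ s', Q s s') * (m s * (x s * x s)) by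
        rw [Finset.sum_mul]; exact Finset.sum_congr rfl fun s' _ => by ring]
      rw [show (∑ t, m t * Q t s * (x s * x s)) = (∑ t, m t * Q t s) * (x s * x s) by
        rw [Finset.sum_mul]]
      ring
    calc ∑ s, (m s * (1 - ∑ s', Q s s') + di s) * (x s)^2
        = ∑ s, (2*(m s * x s * x s) - (∑ s', m s * Q s s' * (x s * x s))
            - (∑ t, m t * Q t s * (x s * x s))) := Finset.sum_congr rfl fun s _ => step s
      _ = 2*A - Cd - Dd := by
          rw [Finset.sum_sub_distrib, Finset.sum_sub_distrib, hA, hCd, swap, ← Finset.mul_sum]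
  have e3 : ∑ s, ∑ s', m s * Q s s' * (x s - x s')^2 = Cd - 2*Bd + Dd := by
    have step : ∀ s s' : Fin N, m s * Q s s' * (x s - x s')^2
        = m s * Q s s' * (x s * x s) - 2*(m s * Q s s' * (x s * x s'))
          + m s * Q s s' * (x s' * x s') := fun s s' => by ring
    calc ∑ s, ∑ s', m s * Q s s' * (x s - x s')^2
        = ∑ s, ∑ s', (m s * Q s s' * (x s * x s) - 2*(m s * Q s s' * (x s * x s'))
            + m s * Q s s' * (x s' * x s')) := by
          exact Finset.sum_congr rfl fun s _ => Finset.sum_congr rfl fun s' _ => step s s'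
      _ = Cd - 2*Bd + Dd := by
          rw [hCd, hBd, hDd]
          rw [show (2:ℝ) * ∑ s, ∑ s', m s * Q s s' * (x s * x s')
              = ∑ s, ∑ s', 2 * (m s * Q s s' * (x s * x s')) by
            rw [Finset.mul_sum]; exact Finset.sum_congr rfl fun s _ => Finset.mul_sum _ _ _]
          rw [← Finset.sum_sub_distrib, ← Finset.sum_add_distrib]
          refine Finset.sum_congr rfl fun s _ => ?_
          rw [← Finset.sum_sub_distrib, ← Finset.sum_add_distrib]
  rw [e1, e2, e3]
  ring


lemma sandwich {k l : ℕ} (Φ : Matrix (Fin k) (Fin l) ℝ) (R : Matrix (Fin k) (Fin k) ℝ)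
    (θ : Fin l → ℝ) :
    θ ⬝ᵥ ((Φᵀ * (R * Φ)) *ᵥ θ) = (Φ *ᵥ θ) ⬝ᵥ (R *ᵥ (Φ *ᵥ θ)) := by
  rw [← Matrix.mulVec_mulVec, Matrix.dotProduct_mulVec, Matrix.vecMul_transpose,
    ← Matrix.mulVec_mulVec]

lemma dot_diag {k : ℕ} (mb : Fin k → ℝ) (y x : Fin k → ℝ) :
    x ⬝ᵥ (Matrix.diagonal mb *ᵥ y) = ∑ s, x s * (mb s * y s) := by
  refine Finset.sum_congr rfl fun s _ => ?_
  rw [Matrix.mulVec_diagonal]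

lemma sub_entry {k : ℕ} (Q : Matrix (Fin k) (Fin k) ℝ) (x : Fin k → ℝ) (s : Fin k) :
    ((1 - Q) *ᵥ x) s = x s - ∑ s', Q s s' * x s' := by
  rw [Matrix.sub_mulVec, Matrix.one_mulVec, Pi.sub_apply]
  rfl

lemma mulVec_entry {k l : ℕ} (A : Matrix (Fin k) (Fin l) ℝ) (v : Fin l → ℝ) (s : Fin k) :
    (A *ᵥ v) s = ∑ t, A s t * v t := rfl


set_option maxHeartbeats 1000000 in
theorem C_negDef_iff_assumption2
    {N M n : ℕ}
    (p : Fin N → Fin M → Fin N → ℝ)        -- transition probabilities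
    (π πb : Fin N → Fin M → ℝ)             -- target and behavior policies
    (γf lf iF d : Fin N → ℝ)               -- discount factors, λ-function, interest, steady-state
    (Φ : Matrix (Fin N) (Fin n) ℝ)         -- feature matrix (rows φ(s)ᵀ)
    -- MDP data conditions
    (hp0 : ∀ s a s', 0 ≤ p s a s') (hp1 : ∀ s a, ∑ s', p s a s' = 1)
    (hπ0 : ∀ s a, 0 ≤ π s a) (hπ1 : ∀ s, ∑ a, π s a = 1)
    (hπb0 : ∀ s a, 0 ≤ πb s a) (hπb1 : ∀ s, ∑ a, πb s a = 1)
    (hγ : ∀ s, 0 ≤ γf s ∧ γf s ≤ 1) (hγ1 : ∃ s, γf s < 1)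
    (hlf : ∀ s, 0 ≤ lf s ∧ lf s ≤ 1)
    (hi : ∀ s, 0 ≤ iF s)
    -- Assumption 1(i): (I − P_π Γ)⁻¹ exists
    (hA1i : IsUnit (1 - Pmat p π * Matrix.diagonal γf))
    -- Assumption 1(ii): π° induces an irreducible chain and covers the support of π
    (hirr : ∀ s s', ∃ k : ℕ, 1 ≤ k ∧ 0 < (Pmat p πb ^ k) s s')
    (hsupp : ∀ s a, 0 < π s a → 0 < πb s a)
    -- d is the steady-state distribution of the behavior policy's state chain
    (hd0 : ∀ s, 0 < d s) (hd1 : ∑ s, d s = 1)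
    (hdstat : ∀ s', ∑ s, d s * Pmat p πb s s' = d s') :
    -- C is negative definite ↔ Assumption 2
    (∃ c : ℝ, 0 < c ∧ ∀ θ : Fin n → ℝ,
        θ ⬝ᵥ (Cmat p π γf lf d iF Φ).mulVec θ ≤ -c * (θ ⬝ᵥ θ))
      ↔
    (∃ f : Fin n → Fin N, (∀ j, 0 < MbarDiag p π γf lf d iF (f j)) ∧
        LinearIndependent ℝ fun j => (Φ (f j) : Fin n → ℝ)) := by
  classical
  -- basic structural facts
  set P := Pmat p π with hPdef
  have hP0 : ∀ s s', 0 ≤ P s s' := by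
    intro s s'
    show (0:ℝ) ≤ ∑ a, π s a * p s a s'
    exact Finset.sum_nonneg fun a _ => mul_nonneg (hπ0 s a) (hp0 s a s')
  have hP1 : ∀ s, ∑ s', P s s' = 1 := by
    intro s
    show ∑ s', ∑ a, π s a * p s a s' = 1
    rw [Finset.sum_comm]
    calc ∑ a, ∑ s', π s a * p s a s' = ∑ a, π s a * ∑ s', p s a s' := by
          exact Finset.sum_congr rfl fun a _ => (Finset.mul_sum _ _ _).symm
      _ = ∑ a, π s a := by
          exact Finset.sum_congr rfl fun a _ => by rw [hp1 s a, mul_one]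
      _ = 1 := hπ1 s
  set B1 := P * Matrix.diagonal γf with hB1def
  set A1 := P * Matrix.diagonal γf * Matrix.diagonal lf with hA1def
  have hB1e : ∀ s s', B1 s s' = P s s' * γf s' := fun s s' => Matrix.mul_diagonal _ _ _ _
  have hA1e : ∀ s s', A1 s s' = P s s' * γf s' * lf s' := by
    intro s s'
    rw [hA1def, Matrix.mul_diagonal, ← hB1def, hB1e]
  have hB10 : ∀ s s', 0 ≤ B1 s s' := fun s s' => by
    rw [hB1e]; exact mul_nonneg (hP0 s s') (hγ s').1
  have hB11 : ∀ s, ∑ s', B1 s s' ≤ 1 := by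
    intro s
    calc ∑ s', B1 s s' ≤ ∑ s', P s s' := Finset.sum_le_sum fun s' _ => by
          rw [hB1e]
          nlinarith [hP0 s s', (hγ s').1, (hγ s').2]
      _ = 1 := hP1 s
  have hA10 : ∀ s s', 0 ≤ A1 s s' := fun s s' => by
    rw [hA1e]; exact mul_nonneg (mul_nonneg (hP0 s s') (hγ s').1) (hlf s').1
  have hAB : ∀ s s', A1 s s' ≤ B1 s s' := fun s s' => by
    rw [hA1e, hB1e]
    nlinarith [mul_nonneg (mul_nonneg (hP0 s s') (hγ s').1) (sub_nonneg.mpr (hlf s').2)]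
  have hA1rows : ∀ s, ∑ s', A1 s s' ≤ 1 := fun s =>
    le_trans (Finset.sum_le_sum fun s' _ => hAB s s') (hB11 s)
  have hA1u : IsUnit (1 - A1) := isUnit_one_sub_of_le hB10 hB11 hA1i hA10 hAB
  set EA := (1 - A1)⁻¹ with hEAdef
  have hEA0 : ∀ i j, 0 ≤ EA i j := (inv_one_sub_package hA10 hA1rows hA1u).1
  have h1A1 : EA * (1 - A1) = 1 :=
    Matrix.nonsing_inv_mul _ ((Matrix.isUnit_iff_isUnit_det _).mp hA1u)
  set Q := Plam p π γf lf with hQdef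
  have hQform : Q = 1 - EA * (1 - B1) := rfl
  have hQeq : Q = EA * (B1 - A1) := by
    calc Q = 1 - EA * (1 - B1) := hQform
      _ = EA * (1 - A1) - EA * (1 - B1) := by rw [h1A1]
      _ = EA * ((1 - A1) - (1 - B1)) := by rw [← Matrix.mul_sub]
      _ = EA * (B1 - A1) := by congr 1; abel
  have h1mQ : (1 : Matrix (Fin N) (Fin N) ℝ) - Q = EA * (1 - B1) := by
    rw [hQform, sub_sub_cancel]
  have hBA0 : ∀ s s', 0 ≤ (B1 - A1) s s' := by
    intro s s'
    rw [Matrix.sub_apply, hB1e, hA1e]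
    nlinarith [mul_nonneg (mul_nonneg (hP0 s s') (hγ s').1) (sub_nonneg.mpr (hlf s').2)]
  have hQ0 : ∀ s s', 0 ≤ Q s s' := by rw [hQeq]; exact entry_nonneg_mul hEA0 hBA0
  have hQrow : ∀ s, ∑ s', Q s s' ≤ 1 := by
    intro s
    have key : 1 - ∑ s', Q s s' = ∑ u, EA s u * (1 - ∑ j, B1 u j) := by
      have lhs : ∑ s', ((1 : Matrix (Fin N) (Fin N) ℝ) - Q) s s' = 1 - ∑ s', Q s s' := by
        simp only [Matrix.sub_apply, Matrix.one_apply]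
        rw [Finset.sum_sub_distrib]
        congr 1
        simp
      have rhs : ∑ s', (EA * (1 - B1)) s s' = ∑ u, EA s u * (1 - ∑ j, B1 u j) := by
        simp only [Matrix.mul_apply]
        rw [Finset.sum_comm]
        refine Finset.sum_congr rfl fun u _ => ?_
        rw [← Finset.mul_sum]
        congr 1
        simp only [Matrix.sub_apply, Matrix.one_apply]
        rw [Finset.sum_sub_distrib]
        congr 1
        simp
      rw [← lhs, h1mQ, rhs]
    have : 0 ≤ 1 - ∑ s', Q s s' := by
      rw [key]
      exact Finset.sum_nonneg fun u _ => mul_nonneg (hEA0 s u) (by linarith [hB11 u])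
    linarith
  have h1Qu : IsUnit (1 - Q) := by
    rw [h1mQ]
    exact (Matrix.isUnit_nonsing_inv_iff.mpr hA1u).mul hA1i
  obtain ⟨hEQ0, hEQge, hEQpos⟩ := inv_one_sub_package hQ0 hQrow h1Qu
  set EQ := (1 - Q)⁻¹ with hEQdef
  set di : Fin N → ℝ := fun s => d s * iF s with hdidef
  have hdi0 : ∀ s, 0 ≤ di s := fun s => mul_nonneg (hd0 s).le (hi s)
  set mb := MbarDiag p π γf lf d iF with hmbdef
  have hmbe : ∀ s, mb s = ∑ t, di t * EQ t s := fun s => rfl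
  have hmb0 : ∀ s, 0 ≤ mb s := fun s => by
    rw [hmbe]
    exact Finset.sum_nonneg fun t _ => mul_nonneg (hdi0 t) (hEQ0 t s)
  have hcol : ∀ s, di s = mb s - ∑ t, mb t * Q t s := by
    have hvec : Matrix.vecMul mb (1 - Q) = di := by
      have : mb = Matrix.vecMul di EQ := rfl
      rw [this, Matrix.vecMul_vecMul,
        Matrix.nonsing_inv_mul _ ((Matrix.isUnit_iff_isUnit_det _).mp h1Qu),
        Matrix.vecMul_one]
    intro s
    have hent : (Matrix.vecMul mb (1 - Q)) s = mb s - ∑ t, mb t * Q t s := by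
      show ∑ t, mb t * ((1 : Matrix (Fin N) (Fin N) ℝ) - Q) t s = _
      simp only [Matrix.sub_apply, Matrix.one_apply, mul_sub]
      rw [Finset.sum_sub_distrib]
      congr 1
      simp [mul_ite]
    rw [← hent, hvec]
  -- the quadratic form
  set qf : (Fin N → ℝ) → ℝ :=
    fun x => ∑ s, mb s * x s * (x s - ∑ s', Q s s' * x s') with hqfdef
  have hqf_id := quad_identity mb di Q hcol
  have hS1nn : ∀ x : Fin N → ℝ, 0 ≤ ∑ s, (mb s * (1 - ∑ s', Q s s') + di s) * (x s)^2 :=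
    fun x => Finset.sum_nonneg fun s _ => mul_nonneg
      (add_nonneg (mul_nonneg (hmb0 s) (by linarith [hQrow s])) (hdi0 s)) (sq_nonneg _)
  have hS2nn : ∀ x : Fin N → ℝ, 0 ≤ ∑ s, ∑ s', mb s * Q s s' * (x s - x s')^2 :=
    fun x => Finset.sum_nonneg fun s _ => Finset.sum_nonneg fun s' _ =>
      mul_nonneg (mul_nonneg (hmb0 s) (hQ0 s s')) (sq_nonneg _)
  have hqf_nonneg : ∀ x, 0 ≤ qf x := by
    intro x
    have := hqf_id x
    have h1 := hS1nn x
    have h2 := hS2nn x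
    rw [hqfdef]
    dsimp only
    linarith
  -- vanishing on emphasized states when the form is zero
  have hzero : ∀ x : Fin N → ℝ, qf x = 0 → ∀ s, 0 < mb s → x s = 0 := by
    intro x hx
    have hid := hqf_id x
    rw [hqfdef] at hx
    dsimp only at hx
    rw [hx, mul_zero] at hid
    have h1 := hS1nn x
    have h2 := hS2nn x
    have hS1 : ∑ s, (mb s * (1 - ∑ s', Q s s') + di s) * (x s)^2 = 0 := by linarith
    have hS2 : ∑ s, ∑ s', mb s * Q s s' * (x s - x s')^2 = 0 := by linarith
    have hz1 : ∀ s, 0 < di s → x s = 0 := by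
      intro s hds
      have hterm : (mb s * (1 - ∑ s', Q s s') + di s) * (x s)^2 = 0 := by
        have := (Finset.sum_eq_zero_iff_of_nonneg (fun s _ => mul_nonneg
          (add_nonneg (mul_nonneg (hmb0 s) (by linarith [hQrow s])) (hdi0 s))
          (sq_nonneg _))).mp hS1 s (Finset.mem_univ s)
        exact this
      have hco : 0 ≤ mb s * (1 - ∑ s', Q s s') := mul_nonneg (hmb0 s) (by linarith [hQrow s])
      by_contra hxs
      have : 0 < (x s)^2 := by positivity
      nlinarith
    have hz2 : ∀ s s', 0 < mb s * Q s s' → x s = x s' := by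
      intro s s' hpos
      have houter : ∑ s', mb s * Q s s' * (x s - x s')^2 = 0 :=
        (Finset.sum_eq_zero_iff_of_nonneg (fun s _ => Finset.sum_nonneg fun s' _ =>
          mul_nonneg (mul_nonneg (hmb0 s) (hQ0 s s')) (sq_nonneg _))).mp hS2 s
          (Finset.mem_univ s)
      have hterm : mb s * Q s s' * (x s - x s')^2 = 0 :=
        (Finset.sum_eq_zero_iff_of_nonneg (fun s' _ =>
          mul_nonneg (mul_nonneg (hmb0 s) (hQ0 s s')) (sq_nonneg _))).mp houter s'
          (Finset.mem_univ s')
      have : (x s - x s')^2 = 0 := by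
        rcases mul_eq_zero.mp hterm with h | h
        · exact absurd h (ne_of_gt hpos)
        · exact h
      have := pow_eq_zero_iff (n := 2) (by norm_num) |>.mp this
      linarith [sub_eq_zero.mp this]
    have key : ∀ k t s, 0 < di t → 0 < (Q ^ k) t s → x s = 0 := by
      intro k
      induction k with
      | zero =>
          intro t s hdt hq
          rw [pow_zero] at hq
          by_cases hts : t = s
          · subst hts; exact hz1 t hdt
          · rw [Matrix.one_apply_ne hts] at hq; exact absurd hq (lt_irrefl 0)
      | succ k ih =>
          intro t s hdt hq
          rw [pow_succ, Matrix.mul_apply] at hq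
          have hex : ∃ u, 0 < (Q ^ k) t u * Q u s := by
            by_contra hcon
            push_neg at hcon
            have : ∀ u ∈ Finset.univ, (Q ^ k) t u * Q u s = 0 := fun u _ =>
              le_antisymm (hcon u) (mul_nonneg (entry_nonneg_pow hQ0 k t u) (hQ0 u s))
            rw [Finset.sum_eq_zero this] at hq
            exact lt_irrefl _ hq
          obtain ⟨u, hu⟩ := hex
          have h1' : 0 < (Q ^ k) t u := by
            rcases lt_or_ge 0 ((Q ^ k) t u) with h | h
            · exact h
            · nlinarith [hQ0 u s, entry_nonneg_pow hQ0 k t u]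
          have h2' : 0 < Q u s := by
            rcases lt_or_ge 0 (Q u s) with h | h
            · exact h
            · nlinarith [entry_nonneg_pow hQ0 k t u]
          have hxu : x u = 0 := ih t u hdt h1'
          have hmu : 0 < mb u := by
            rw [hmbe]
            have hsingle : di t * EQ t u ≤ ∑ t', di t' * EQ t' u :=
              Finset.single_le_sum (f := fun t' => di t' * EQ t' u)
                (fun t' _ => mul_nonneg (hdi0 t') (hEQ0 t' u)) (Finset.mem_univ t)
            have hEQtu : (Q ^ k) t u ≤ EQ t u := hEQge k t u
            have hstep : 0 < di t * (Q ^ k) t u := mul_pos hdt h1'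
            have : 0 < di t * EQ t u :=
              lt_of_lt_of_le hstep (mul_le_mul_of_nonneg_left hEQtu (hdi0 t))
            linarith
          have := hz2 u s (mul_pos hmu h2')
          rw [← this, hxu]
    intro s hms
    rw [hmbe] at hms
    have hex : ∃ t, 0 < di t * EQ t s := by
      by_contra hcon
      push_neg at hcon
      have : ∀ t ∈ Finset.univ, di t * EQ t s = 0 := fun t _ =>
        le_antisymm (hcon t) (mul_nonneg (hdi0 t) (hEQ0 t s))
      rw [Finset.sum_eq_zero this] at hms
      exact lt_irrefl _ hms
    obtain ⟨t, ht⟩ := hex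
    have hdt : 0 < di t := by
      rcases lt_or_ge 0 (di t) with h | h
      · exact h
      · nlinarith [hEQ0 t s, hdi0 t]
    have hEts : 0 < EQ t s := by
      rcases lt_or_ge 0 (EQ t s) with h | h
      · exact h
      · nlinarith [hdi0 t]
    obtain ⟨k, hk⟩ := hEQpos t s hEts
    exact key k t s hdt hk
  -- link between the quadratic form and the matrix C
  have hlink : ∀ θ : Fin n → ℝ,
      θ ⬝ᵥ (Cmat p π γf lf d iF Φ).mulVec θ = -qf (Φ *ᵥ θ) := by
    intro θ
    have hC : Cmat p π γf lf d iF Φ = -(Φᵀ * Matrix.diagonal mb * (1 - Q) * Φ) := rfl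
    rw [hC, Matrix.neg_mulVec, dotProduct_neg, neg_inj]
    simp only [hqfdef]
    rw [Matrix.mul_assoc (Φᵀ * Matrix.diagonal mb), Matrix.mul_assoc Φᵀ,
      ← Matrix.mul_assoc (Matrix.diagonal mb)]
    rw [sandwich Φ (Matrix.diagonal mb * (1 - Q))]
    rw [← Matrix.mulVec_mulVec, dot_diag]
    refine Finset.sum_congr rfl fun s _ => ?_
    rw [sub_entry]
    ring
  constructor
  · -- negative definiteness implies Assumption 2
    rintro ⟨c, hc, hneg⟩
    set ee := (WithLp.linearEquiv 2 ℝ (Fin n → ℝ)).symm with heedef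
    set SE : Set (EuclideanSpace ℝ (Fin n)) := {v | ∃ s, 0 < mb s ∧ v = ee (Φ s)} with hSE
    have hspanE : Submodule.span ℝ SE = ⊤ := by
      by_contra hne
      have hOrth : (Submodule.span ℝ SE)ᗮ ≠ ⊥ := by
        rwa [Ne, Submodule.orthogonal_eq_bot_iff]
      obtain ⟨θE, hθmem, hθne⟩ := (Submodule.ne_bot_iff _).mp hOrth
      set θ : Fin n → ℝ := ee.symm θE with hθdef
      have hθne' : θ ≠ 0 := by
        intro h
        apply hθne
        have : θE = ee θ := (LinearEquiv.apply_symm_apply ee θE).symm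
        rw [this, h, map_zero]
      have hx0 : ∀ s, 0 < mb s → (Φ *ᵥ θ) s = 0 := by
        intro s hs
        have hmem : ee (Φ s) ∈ Submodule.span ℝ SE := Submodule.subset_span ⟨s, hs, rfl⟩
        have hinner := (Submodule.mem_orthogonal _ θE).mp hθmem (ee (Φ s)) hmem
        rw [PiLp.inner_apply] at hinner
        simp only [RCLike.inner_apply, conj_trivial] at hinner
        show ∑ t, Φ s t * θ t = 0
        convert hinner using 1
        exact Finset.sum_congr rfl fun t _ => mul_comm _ _
      have hqf0 : qf (Φ *ᵥ θ) = 0 := by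
        apply Finset.sum_eq_zero
        intro s _
        rcases (hmb0 s).lt_or_eq with h | h
        · rw [hx0 s h]; ring
        · rw [← h]; ring
      have hbad := hneg θ
      rw [hlink θ, hqf0] at hbad
      have hθpos : 0 < θ ⬝ᵥ θ := by
        rcases (Finset.sum_nonneg fun i (_ : i ∈ Finset.univ) =>
          mul_self_nonneg (θ i)).lt_or_eq with h | h
        · exact h
        · exact absurd (dotProduct_self_eq_zero.mp h.symm) hθne'
      nlinarith
    obtain ⟨T, hTsub, hTspan, hTli⟩ := exists_linearIndependent ℝ SE
    rw [hspanE] at hTspan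
    have hTfin : T.Finite := hTli.setFinite
    haveI := hTfin.fintype
    have hcard : T.toFinset.card = n := by
      have h1 := finrank_span_set_eq_card hTli
      rw [hTspan, finrank_top] at h1
      rw [← h1, finrank_euclideanSpace_fin]
    have hcard' : Fintype.card T = n := by rw [← Set.toFinset_card, hcard]
    let eqv : Fin n ≃ T := Fintype.equivOfCardEq (by rw [Fintype.card_fin, hcard'])
    have hmemSE : ∀ j, ((eqv j : T) : EuclideanSpace ℝ (Fin n)) ∈ SE := fun j => hTsub (eqv j).2
    set f : Fin n → Fin N := fun j => Classical.choose (hmemSE j) with hfdef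
    have hfspec : ∀ j, 0 < mb (f j) ∧ ((eqv j : T) : EuclideanSpace ℝ (Fin n)) = ee (Φ (f j)) :=
      fun j => Classical.choose_spec (hmemSE j)
    refine ⟨f, fun j => (hfspec j).1, ?_⟩
    have hli1 : LinearIndependent ℝ (fun j : Fin n => ((eqv j : T) : EuclideanSpace ℝ (Fin n))) :=
      hTli.comp eqv eqv.injective
    have hli2 : LinearIndependent ℝ
        (fun j : Fin n => ee.symm ((eqv j : T) : EuclideanSpace ℝ (Fin n))) :=
      hli1.map' ee.symm.toLinearMap (LinearEquiv.ker _)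
    have hfe : (fun j => (Φ (f j) : Fin n → ℝ))
        = fun j => ee.symm ((eqv j : T) : EuclideanSpace ℝ (Fin n)) := by
      funext j
      rw [(hfspec j).2, LinearEquiv.symm_apply_apply]
    rw [hfe]
    exact hli2
  · -- Assumption 2 implies negative definiteness
    rintro ⟨f, hfm, hfli⟩
    by_cases hn : n = 0
    · subst hn
      refine ⟨1, one_pos, fun θ => ?_⟩
      have hθ : θ = 0 := funext fun i => i.elim0
      subst hθ
      simp [dotProduct]
    · have hn' : 0 < n := Nat.pos_of_ne_zero hn
      haveI : Nonempty (Fin n) := ⟨⟨0, hn'⟩⟩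
      have hpos : ∀ θ : Fin n → ℝ, θ ≠ 0 → 0 < qf (Φ *ᵥ θ) := by
        intro θ hθ
        rcases (hqf_nonneg (Φ *ᵥ θ)).lt_or_eq with h | h
        · exact h
        · exfalso
          have hxz : ∀ s, 0 < mb s → (Φ *ᵥ θ) s = 0 := hzero _ h.symm
          have hjz : ∀ j, (Φ *ᵥ θ) (f j) = 0 := fun j => hxz (f j) (hfm j)
          have hspan := hfli.span_eq_top_of_card_eq_finrank (by
            rw [Fintype.card_fin, Module.finrank_fin_fun])
          let g : (Fin n → ℝ) →ₗ[ℝ] ℝ :=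
            { toFun := fun v => v ⬝ᵥ θ,
              map_add' := fun a b => add_dotProduct a b θ,
              map_smul' := fun r a => smul_dotProduct r a θ }
          have hker : Submodule.span ℝ (Set.range fun j => (Φ (f j) : Fin n → ℝ))
              ≤ LinearMap.ker g := by
            rw [Submodule.span_le]
            rintro v ⟨j, rfl⟩
            rw [SetLike.mem_coe, LinearMap.mem_ker]
            show (Φ (f j)) ⬝ᵥ θ = 0
            exact hjz j
          rw [hspan] at hker
          have hgz : g θ = 0 := hker Submodule.mem_top
          have : θ ⬝ᵥ θ = 0 := hgz
          exact hθ (dotProduct_self_eq_zero.mp this)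
      have hxc : ∀ s, Continuous fun θ : Fin n → ℝ => (Φ *ᵥ θ) s := by
        intro s
        show Continuous fun θ : Fin n → ℝ => ∑ t, Φ s t * θ t
        exact continuous_finset_sum _ fun t _ => continuous_const.mul (continuous_apply t)
      have hgc : Continuous fun θ : Fin n → ℝ => qf (Φ *ᵥ θ) := by
        apply continuous_finset_sum
        intro s _
        exact (continuous_const.mul (hxc s)).mul
          ((hxc s).sub (continuous_finset_sum _ fun s' _ => continuous_const.mul (hxc s')))
      set sph : Set (Fin n → ℝ) := {θ | θ ⬝ᵥ θ = 1} with hsph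
      have hsphc : IsCompact sph := by
        have hcl : IsClosed sph := by
          have hct : Continuous fun θ : Fin n → ℝ => θ ⬝ᵥ θ :=
            continuous_finset_sum _ fun i _ => (continuous_apply i).mul (continuous_apply i)
          exact isClosed_eq hct continuous_const
        have hbd : Bornology.IsBounded sph := by
          apply Bornology.IsBounded.subset
            (Metric.isBounded_closedBall (x := (0 : Fin n → ℝ)) (r := 1))
          intro θ hθ
          have hθ1 : θ ⬝ᵥ θ = 1 := hθ
          rw [Metric.mem_closedBall, dist_zero_right]
          rw [pi_norm_le_iff_of_nonneg zero_le_one]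
          intro i
          rw [Real.norm_eq_abs, abs_le]
          have h1 : θ i * θ i ≤ 1 := by
            have hs := Finset.single_le_sum (f := fun t => θ t * θ t)
              (fun t _ => mul_self_nonneg _) (Finset.mem_univ i)
            rw [show (∑ t, θ t * θ t) = θ ⬝ᵥ θ from rfl, hθ1] at hs
            exact hs
          constructor <;> nlinarith
        exact Metric.isCompact_of_isClosed_isBounded hcl hbd
      have hsphne : sph.Nonempty := by
        refine ⟨Pi.single ⟨0, hn'⟩ 1, ?_⟩
        show (Pi.single ⟨0, hn'⟩ 1 : Fin n → ℝ) ⬝ᵥ (Pi.single ⟨0, hn'⟩ 1) = 1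
        rw [dotProduct]
        simp [Pi.single_apply]
      obtain ⟨θ0, hθ0mem, hθ0min⟩ := hsphc.exists_isMinOn hsphne hgc.continuousOn
      have hθ0ne : θ0 ≠ 0 := by
        intro h
        have h1 : θ0 ⬝ᵥ θ0 = 1 := hθ0mem
        rw [h] at h1
        simp [zero_dotProduct] at h1
      set c := qf (Φ *ᵥ θ0) with hcdef
      have hcpos : 0 < c := hpos θ0 hθ0ne
      refine ⟨c, hcpos, fun θ => ?_⟩
      show θ ⬝ᵥ (Cmat p π γf lf d iF Φ) *ᵥ θ ≤ _
      rw [hlink θ]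
      rcases eq_or_ne θ 0 with rfl | hθ
      · have h1 : Φ *ᵥ (0 : Fin n → ℝ) = 0 := Matrix.mulVec_zero Φ
        have h2 : qf (0 : Fin N → ℝ) = 0 := by
          apply Finset.sum_eq_zero
          intro s _
          simp
        rw [h1, h2]
        simp [dotProduct_zero]
      · have hd2 : 0 < θ ⬝ᵥ θ := by
          rcases (Finset.sum_nonneg fun i (_ : i ∈ Finset.univ) =>
            mul_self_nonneg (θ i)).lt_or_eq with h | h
          · exact h
          · exact absurd (dotProduct_self_eq_zero.mp h.symm) hθ
        set r := Real.sqrt (θ ⬝ᵥ θ) with hr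
        have hrpos : 0 < r := Real.sqrt_pos.mpr hd2
        have hr2 : r * r = θ ⬝ᵥ θ := Real.mul_self_sqrt hd2.le
        have hmem : (r⁻¹ • θ) ∈ sph := by
          show (r⁻¹ • θ) ⬝ᵥ (r⁻¹ • θ) = 1
          rw [smul_dotProduct, dotProduct_smul, smul_eq_mul, smul_eq_mul, ← hr2]
          field_simp
        have hmin := hθ0min hmem
        have hsc : qf (Φ *ᵥ (r⁻¹ • θ)) = (r⁻¹ * r⁻¹) * qf (Φ *ᵥ θ) := by
          rw [Matrix.mulVec_smul]
          generalize Φ *ᵥ θ = x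
          show ∑ s, mb s * (r⁻¹ • x) s * ((r⁻¹ • x) s - ∑ s', Q s s' * (r⁻¹ • x) s') = _
          rw [Finset.mul_sum]
          refine Finset.sum_congr rfl fun s _ => ?_
          simp only [Pi.smul_apply, smul_eq_mul]
          rw [show (∑ s', Q s s' * (r⁻¹ * x s')) = r⁻¹ * ∑ s', Q s s' * x s' by
            rw [Finset.mul_sum]; exact Finset.sum_congr rfl fun s' _ => by ring]
          ring
        have hmin' : c ≤ (r⁻¹ * r⁻¹) * qf (Φ *ᵥ θ) := by rw [← hsc]; exact hmin
        have hfin : c * (θ ⬝ᵥ θ) ≤ qf (Φ *ᵥ θ) := by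
          have hrr : r * r > 0 := mul_pos hrpos hrpos
          have h3 := mul_le_mul_of_nonneg_left hmin' hrr.le
          rw [← hr2]
          calc c * (r * r) = (r * r) * c := by ring
            _ ≤ (r * r) * ((r⁻¹ * r⁻¹) * qf (Φ *ᵥ θ)) := h3
            _ = qf (Φ *ᵥ θ) := by field_simp
        linarith

end ETD0
end
end

section
/- Let c > 0 be such that xᵀCx ≤ −c|x|² for all x ∈ ℝⁿ, and suppose the closed ball B ⊂ ℝⁿ centered at the origin has radius r_B > |b|/c. Then: θ* lies in the interior of B; every solution x(τ), τ ∈ [0,∞), of the projected ODE ẋ = h̄(x) + z, z ∈ −N_B(x), with initial condition x(0) ∈ B coincides with the unique solution of ẋ = h̄(x) and has boundary reflection term z(·) ≡ 0; and the only solution x(τ), τ ∈ (−∞,∞), of the projected ODE that remains in B is the constant solution x(·) ≡ θ*. -/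
/-!
Statement 1 (Lemma 2.2): with h̄(x) = Cx + b, C negative definite with modulus c > 0,
and B the closed ball of radius r_B > |b|/c centered at the origin:
θ* lies in the interior of B; every solution of the projected ODE
ẋ = h̄(x) + z, z ∈ −N_B(x) on [0,∞) with x(0) ∈ B has boundary reflection z ≡ 0 and
coincides with the unique solution of ẋ = h̄(x); and the only solution of the projected
ODE on (−∞,∞) staying in B is x ≡ θ*.
-/

open Matrix Set
open scoped Classical

noncomputable section
namespace ETD1

/-- Euclidean norm on `ℝⁿ`. -/
def eunorm {n : ℕ} (x : Fin n → ℝ) : ℝ := Real.sqrt (∑ j, x j ^ 2)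

/-- The normal cone of the closed ball of radius `rB` centered at the origin, at the
point `x`: `{0}` in the interior, `{a • x | a ≥ 0}` on the boundary. -/
def normalCone {n : ℕ} (rB : ℝ) (x : Fin n → ℝ) : Set (Fin n → ℝ) :=
  if eunorm x < rB then {0} else {y | ∃ a : ℝ, 0 ≤ a ∧ y = a • x}

variable {n : ℕ}

lemma eunorm_nonneg (x : Fin n → ℝ) : 0 ≤ eunorm x := Real.sqrt_nonneg _

lemma eunorm_sq (x : Fin n → ℝ) : eunorm x ^ 2 = x ⬝ᵥ x := by
  rw [eunorm, Real.sq_sqrt (by positivity)]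
  simp [dotProduct, sq]

lemma dot_self_nonneg (x : Fin n → ℝ) : 0 ≤ x ⬝ᵥ x := by
  rw [← eunorm_sq]; positivity

lemma eunorm_neg (x : Fin n → ℝ) : eunorm (-x) = eunorm x := by
  simp [eunorm]

lemma dot_self_eq_zero {x : Fin n → ℝ} (h : x ⬝ᵥ x ≤ 0) : x = 0 := by
  have h2 : ∑ j, x j ^ 2 = 0 := by
    have h0 : (0:ℝ) ≤ ∑ j, x j ^ 2 := by positivity
    have hx : ∑ j, x j ^ 2 ≤ 0 := by
      calc ∑ j, x j ^ 2 = x ⬝ᵥ x := by simp [dotProduct, sq]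
        _ ≤ 0 := h
    linarith
  funext j
  have := (Finset.sum_eq_zero_iff_of_nonneg (fun i _ => sq_nonneg (x i))).mp h2 j
    (Finset.mem_univ j)
  exact pow_eq_zero_iff (by norm_num) |>.mp this

lemma cauchy_schwarz (x y : Fin n → ℝ) : x ⬝ᵥ y ≤ eunorm x * eunorm y := by
  have hsq : (x ⬝ᵥ y) ^ 2 ≤ (eunorm x * eunorm y) ^ 2 := by
    rw [mul_pow, eunorm_sq, eunorm_sq]
    have := Finset.sum_mul_sq_le_sq_mul_sq Finset.univ x y
    simpa [dotProduct, sq] using this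
  calc x ⬝ᵥ y ≤ |x ⬝ᵥ y| := le_abs_self _
    _ = Real.sqrt ((x ⬝ᵥ y) ^ 2) := (Real.sqrt_sq_eq_abs _).symm
    _ ≤ Real.sqrt ((eunorm x * eunorm y) ^ 2) := Real.sqrt_le_sqrt hsq
    _ = eunorm x * eunorm y := Real.sqrt_sq (mul_nonneg (eunorm_nonneg x) (eunorm_nonneg y))

lemma hasDerivWithinAt_dot {x y : ℝ → Fin n → ℝ} {vx vy : Fin n → ℝ} {s : Set ℝ} {τ : ℝ}
    (hx : HasDerivWithinAt x vx s τ) (hy : HasDerivWithinAt y vy s τ) :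
    HasDerivWithinAt (fun t => x t ⬝ᵥ y t) (vx ⬝ᵥ y τ + x τ ⬝ᵥ vy) s τ := by
  have hx' := hasDerivWithinAt_pi.mp hx
  have hy' := hasDerivWithinAt_pi.mp hy
  have h : HasDerivWithinAt (fun t => ∑ j, x t j * y t j)
      (∑ j, (vx j * y τ j + x τ j * vy j)) s τ :=
    HasDerivWithinAt.fun_sum (fun j _ => (hx' j).mul (hy' j))
  simpa [dotProduct, Finset.sum_add_distrib] using h

lemma key_neg {C : Matrix (Fin n) (Fin n) ℝ} {b : Fin n → ℝ} {c rB : ℝ} (hc : 0 < c)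
    (hC : ∀ x : Fin n → ℝ, x ⬝ᵥ C.mulVec x ≤ -c * (x ⬝ᵥ x)) (hrB : eunorm b / c < rB)
    {xτ zτ : Fin n → ℝ} {a : ℝ} (hx : eunorm xτ = rB) (ha : 0 ≤ a) (hz : -zτ = a • xτ) :
    xτ ⬝ᵥ (C.mulVec xτ + b + zτ) < 0 := by
  have hrB0 : 0 < rB := lt_of_le_of_lt (div_nonneg (eunorm_nonneg b) hc.le) hrB
  have hb : eunorm b < c * rB := by
    rw [div_lt_iff₀ hc] at hrB; linarith
  have hdot : xτ ⬝ᵥ xτ = rB ^ 2 := by rw [← eunorm_sq, hx]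
  have h1 : xτ ⬝ᵥ C.mulVec xτ ≤ -c * rB ^ 2 := by
    have := hC xτ; rwa [hdot] at this
  have h2 : xτ ⬝ᵥ b ≤ rB * eunorm b := by
    have := cauchy_schwarz xτ b; rwa [hx] at this
  have h3 : xτ ⬝ᵥ zτ ≤ 0 := by
    have hzτ : zτ = -(a • xτ) := by rw [← hz, neg_neg]
    rw [hzτ, dotProduct_neg, dotProduct_smul, smul_eq_mul, hdot]
    have : 0 ≤ a * rB ^ 2 := by positivity
    linarith
  rw [dotProduct_add, dotProduct_add]
  nlinarith [mul_lt_mul_of_pos_left hb hrB0]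

/-- At a point where the solution has a (full) derivative and stays in the ball near the
point, it must be in the open ball. -/
lemma not_boundary {C : Matrix (Fin n) (Fin n) ℝ} {b : Fin n → ℝ} {c rB : ℝ} (hc : 0 < c)
    (hC : ∀ x : Fin n → ℝ, x ⬝ᵥ C.mulVec x ≤ -c * (x ⬝ᵥ x)) (hrB : eunorm b / c < rB)
    {x z : ℝ → Fin n → ℝ} {τ0 : ℝ}
    (hball : ∀ᶠ t in nhds τ0, eunorm (x t) ≤ rB)
    (hcone : -z τ0 ∈ normalCone rB (x τ0))
    (hder : HasDerivAt x (C.mulVec (x τ0) + b + z τ0) τ0) :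
    eunorm (x τ0) < rB := by
  by_contra h
  have heq : eunorm (x τ0) = rB := le_antisymm (hball.self_of_nhds) (not_lt.mp h)
  rw [normalCone, if_neg (not_lt.mpr (le_of_eq heq.symm))] at hcone
  obtain ⟨a, ha, hz⟩ := hcone
  set v := C.mulVec (x τ0) + b + z τ0 with hv
  have hg : HasDerivAt (fun t => x t ⬝ᵥ x t) (v ⬝ᵥ x τ0 + x τ0 ⬝ᵥ v) τ0 := by
    have := hasDerivWithinAt_dot (hder.hasDerivWithinAt (s := univ))
      (hder.hasDerivWithinAt (s := univ))
    exact this.hasDerivAt Filter.univ_mem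
  have hmax : IsLocalMax (fun t => x t ⬝ᵥ x t) τ0 := by
    refine hball.mono (fun t ht => ?_)
    have h1 : x t ⬝ᵥ x t ≤ rB ^ 2 := by
      have := pow_le_pow_left₀ (eunorm_nonneg _) ht 2
      rwa [eunorm_sq] at this
    have h2 : x τ0 ⬝ᵥ x τ0 = rB ^ 2 := by rw [← eunorm_sq, heq]
    simpa [h2] using h1
  have hz0 := hmax.hasDerivAt_eq_zero hg
  have hneg : x τ0 ⬝ᵥ v < 0 := key_neg hc hC hrB heq ha hz
  rw [dotProduct_comm] at hz0
  linarith

lemma gronwall_anti {C : Matrix (Fin n) (Fin n) ℝ} {c : ℝ} (hc : 0 < c)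
    (hC : ∀ x : Fin n → ℝ, x ⬝ᵥ C.mulVec x ≤ -c * (x ⬝ᵥ x)) {w : ℝ → Fin n → ℝ} {s : Set ℝ}
    (hs : Convex ℝ s) (hw : ∀ τ ∈ s, HasDerivWithinAt w (C.mulVec (w τ)) s τ) :
    AntitoneOn (fun t => Real.exp (2 * c * t) * (w t ⬝ᵥ w t)) s := by
  have hexp : ∀ τ : ℝ, HasDerivAt (fun t => Real.exp (2 * c * t))
      (Real.exp (2 * c * τ) * (2 * c)) τ := by
    intro τ
    exact (Real.hasDerivAt_exp _).comp τ (by simpa using (hasDerivAt_id τ).const_mul (2 * c))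
  have hg : ∀ τ ∈ s, HasDerivWithinAt (fun t => w t ⬝ᵥ w t)
      (C.mulVec (w τ) ⬝ᵥ w τ + w τ ⬝ᵥ C.mulVec (w τ)) s τ :=
    fun τ hτ => hasDerivWithinAt_dot (hw τ hτ) (hw τ hτ)
  have hφ : ∀ τ ∈ s, HasDerivWithinAt (fun t => Real.exp (2 * c * t) * (w t ⬝ᵥ w t))
      (Real.exp (2 * c * τ) * (2 * c) * (w τ ⬝ᵥ w τ) +
        Real.exp (2 * c * τ) * (C.mulVec (w τ) ⬝ᵥ w τ + w τ ⬝ᵥ C.mulVec (w τ))) s τ :=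
    fun τ hτ => ((hexp τ).hasDerivWithinAt).mul (hg τ hτ)
  have hder_nonpos : ∀ τ : ℝ,
      Real.exp (2 * c * τ) * (2 * c) * (w τ ⬝ᵥ w τ) +
        Real.exp (2 * c * τ) * (C.mulVec (w τ) ⬝ᵥ w τ + w τ ⬝ᵥ C.mulVec (w τ)) ≤ 0 := by
    intro τ
    have h1 : w τ ⬝ᵥ C.mulVec (w τ) ≤ -c * (w τ ⬝ᵥ w τ) := hC (w τ)
    have h2 : C.mulVec (w τ) ⬝ᵥ w τ = w τ ⬝ᵥ C.mulVec (w τ) := dotProduct_comm _ _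
    have h3 := (Real.exp_pos (2 * c * τ)).le
    nlinarith [dot_self_nonneg (w τ), Real.exp_pos (2 * c * τ)]
  apply antitoneOn_of_deriv_nonpos hs
  · exact fun τ hτ => (hφ τ hτ).continuousWithinAt
  · intro τ hτ
    have hmem : s ∈ nhds τ := mem_interior_iff_mem_nhds.mp hτ
    exact ((hφ τ (interior_subset hτ)).hasDerivAt hmem).differentiableAt.differentiableWithinAt
  · intro τ hτ
    have hmem : s ∈ nhds τ := mem_interior_iff_mem_nhds.mp hτ
    rw [((hφ τ (interior_subset hτ)).hasDerivAt hmem).deriv]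
    exact hder_nonpos τ


theorem lemma_pode {n : ℕ} (C : Matrix (Fin n) (Fin n) ℝ) (b θstar : Fin n → ℝ)
    (c rB : ℝ) (hc : 0 < c)
    -- C is negative definite with modulus c: xᵀCx ≤ −c|x|²
    (hC : ∀ x : Fin n → ℝ, x ⬝ᵥ C.mulVec x ≤ -c * (x ⬝ᵥ x))
    -- θ* solves Cθ + b = 0
    (hθstar : C.mulVec θstar + b = 0)
    -- the ball radius exceeds the threshold |b|/c
    (hrB : eunorm b / c < rB) :
    -- (a) θ* lies in the interior of B
    eunorm θstar < rB ∧
    -- (b) every solution of the projected ODE on [0,∞) starting in B has z ≡ 0,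
    --     solves ẋ = h̄(x), and is the unique such solution with its initial condition
    (∀ x z : ℝ → (Fin n → ℝ),
      (∀ τ ∈ Ici (0:ℝ),
          eunorm (x τ) ≤ rB ∧ -z τ ∈ normalCone rB (x τ) ∧
          HasDerivWithinAt x (C.mulVec (x τ) + b + z τ) (Ici (0:ℝ)) τ) →
      (∀ τ ∈ Ici (0:ℝ), z τ = 0) ∧
      (∀ τ ∈ Ici (0:ℝ), HasDerivWithinAt x (C.mulVec (x τ) + b) (Ici (0:ℝ)) τ) ∧
      (∀ y : ℝ → (Fin n → ℝ), y 0 = x 0 →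
        (∀ τ ∈ Ici (0:ℝ), HasDerivWithinAt y (C.mulVec (y τ) + b) (Ici (0:ℝ)) τ) →
        ∀ τ ∈ Ici (0:ℝ), y τ = x τ)) ∧
    -- (c) the only solution of the projected ODE on (−∞,∞) remaining in B is x ≡ θ*
    (∀ x z : ℝ → (Fin n → ℝ),
      (∀ τ : ℝ, eunorm (x τ) ≤ rB ∧ -z τ ∈ normalCone rB (x τ) ∧
          HasDerivAt x (C.mulVec (x τ) + b + z τ) τ) →
      ∀ τ : ℝ, x τ = θstar) := by
  have hrB0 : 0 < rB := lt_of_le_of_lt (div_nonneg (eunorm_nonneg b) hc.le) hrB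
  have hCθ : C.mulVec θstar = -b := by
    have := hθstar
    funext j
    have := congrFun hθstar j
    simpa [Pi.add_apply] using eq_neg_of_add_eq_zero_left this
  have hθlt : eunorm θstar < rB := by
    by_contra h
    push_neg at h
    have h1 : c * (θstar ⬝ᵥ θstar) ≤ θstar ⬝ᵥ b := by
      have h2 := hC θstar
      rw [hCθ, dotProduct_neg] at h2
      linarith
    have h2 : θstar ⬝ᵥ b ≤ eunorm θstar * eunorm b := cauchy_schwarz _ _
    have h3 : eunorm b < c * rB := by rw [div_lt_iff₀ hc] at hrB; linarith
    have h4 : θstar ⬝ᵥ θstar = eunorm θstar ^ 2 := (eunorm_sq _).symm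
    have ht : 0 < eunorm θstar := lt_of_lt_of_le hrB0 h
    nlinarith [mul_lt_mul_of_pos_left h3 ht,
      mul_le_mul_of_nonneg_left h (by positivity : (0:ℝ) ≤ c * eunorm θstar)]
  refine ⟨hθlt, ?_, ?_⟩
  · -- part (b)
    intro x z hxz
    have hball : ∀ τ ∈ Ici (0:ℝ), eunorm (x τ) ≤ rB := fun τ hτ => (hxz τ hτ).1
    have hint : ∀ τ : ℝ, 0 < τ → eunorm (x τ) < rB := by
      intro τ hτ
      have hmem : Ici (0:ℝ) ∈ nhds τ := Ici_mem_nhds hτ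
      refine not_boundary hc hC hrB ?_ (hxz τ hτ.le).2.1 ((hxz τ hτ.le).2.2.hasDerivAt hmem)
      exact Filter.eventually_of_mem hmem (fun t ht => hball t ht)
    have hz0 : ∀ τ : ℝ, 0 < τ → z τ = 0 := by
      intro τ hτ
      have h := (hxz τ hτ.le).2.1
      rw [normalCone, if_pos (hint τ hτ)] at h
      simpa [neg_eq_zero] using h
    have hode : ∀ τ : ℝ, 0 < τ → HasDerivAt x (C.mulVec (x τ) + b) τ := by
      intro τ hτ
      have h := (hxz τ hτ.le).2.2.hasDerivAt (Ici_mem_nhds hτ)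
      rwa [hz0 τ hτ, add_zero] at h
    have hz00 : z 0 = 0 := by
      rcases lt_or_eq_of_le (hball 0 self_mem_Ici) with hlt | heq
      · have h := (hxz 0 self_mem_Ici).2.1
        rw [normalCone, if_pos hlt] at h
        simpa [neg_eq_zero] using h
      · have hcont : ContinuousWithinAt x (Ioi (0:ℝ)) 0 :=
          ((hxz 0 self_mem_Ici).2.2.continuousWithinAt).mono Ioi_subset_Ici_self
        have hdiff : DifferentiableOn ℝ x (Ioi 0) :=
          fun τ hτ => (hode τ hτ).differentiableAt.differentiableWithinAt
        have htend : Filter.Tendsto (fun τ => deriv x τ) (nhdsWithin 0 (Ioi 0))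
            (nhds (C.mulVec (x 0) + b)) := by
          have hx0 : Filter.Tendsto x (nhdsWithin 0 (Ioi 0)) (nhds (x 0)) := hcont
          have hco : Continuous (fun v : Fin n → ℝ => C.mulVec v + b) :=
            (continuous_const.matrix_mulVec continuous_id).add continuous_const
          have h2 := (hco.tendsto (x 0)).comp hx0
          refine Filter.Tendsto.congr' ?_ h2
          filter_upwards [self_mem_nhdsWithin] with τ hτ
          exact ((hode τ hτ).deriv).symm
        have hext : HasDerivWithinAt x (C.mulVec (x 0) + b) (Ici 0) 0 :=
          hasDerivWithinAt_Ici_of_tendsto_deriv hdiff hcont self_mem_nhdsWithin htend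
        have h1 := (hxz 0 self_mem_Ici).2.2
        have hu : UniqueDiffWithinAt ℝ (Ici (0:ℝ)) 0 := uniqueDiffOn_Ici 0 0 self_mem_Ici
        have h3 : C.mulVec (x 0) + b + z 0 = C.mulVec (x 0) + b :=
          (h1.derivWithin hu).symm.trans (hext.derivWithin hu)
        exact add_eq_left.mp h3
    have hzAll : ∀ τ ∈ Ici (0:ℝ), z τ = 0 := by
      intro τ hτ
      rcases eq_or_lt_of_le (mem_Ici.mp hτ) with h | h
      · rw [← h]; exact hz00
      · exact hz0 τ h
    refine ⟨hzAll, ?_, ?_⟩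
    · intro τ hτ
      have h := (hxz τ hτ).2.2
      rwa [hzAll τ hτ, add_zero] at h
    · intro y hy0 hy τ hτ
      set w := fun t => y t - x t with hwdef
      have hw : ∀ σ ∈ Ici (0:ℝ), HasDerivWithinAt w (C.mulVec (w σ)) (Ici 0) σ := by
        intro σ hσ
        have hxσ := (hxz σ hσ).2.2
        rw [hzAll σ hσ, add_zero] at hxσ
        have h := (hy σ hσ).sub hxσ
        have heq : C.mulVec (y σ) + b - (C.mulVec (x σ) + b) = C.mulVec (w σ) := by
          simp [hwdef, Matrix.mulVec_sub]
        rwa [heq] at h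
      have hanti := gronwall_anti hc hC (convex_Ici 0) hw
      have h0 : w 0 = 0 := by simp [hwdef, hy0]
      have hφτ : Real.exp (2 * c * τ) * (w τ ⬝ᵥ w τ) ≤
          Real.exp (2 * c * 0) * (w 0 ⬝ᵥ w 0) := hanti self_mem_Ici hτ hτ
      have hφ0 : Real.exp (2 * c * 0) * (w 0 ⬝ᵥ w 0) = 0 := by simp [h0]
      rw [hφ0] at hφτ
      have hg0 : w τ ⬝ᵥ w τ ≤ 0 := by
        nlinarith [Real.exp_pos (2 * c * τ), dot_self_nonneg (w τ)]
      have := dot_self_eq_zero hg0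
      have : y τ - x τ = 0 := this
      exact sub_eq_zero.mp this
  · -- part (c)
    intro x z hxz
    have hint : ∀ τ : ℝ, eunorm (x τ) < rB := fun τ =>
      not_boundary hc hC hrB (Filter.Eventually.of_forall (fun t => (hxz t).1))
        (hxz τ).2.1 (hxz τ).2.2
    have hz0 : ∀ τ : ℝ, z τ = 0 := by
      intro τ
      have h := (hxz τ).2.1
      rw [normalCone, if_pos (hint τ)] at h
      simpa [neg_eq_zero] using h
    have hode : ∀ τ : ℝ, HasDerivAt x (C.mulVec (x τ) + b) τ := by
      intro τ
      have h := (hxz τ).2.2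
      rwa [hz0 τ, add_zero] at h
    intro τ
    set w := fun t => x t - θstar with hwdef
    have hw : ∀ σ : ℝ, HasDerivAt w (C.mulVec (w σ)) σ := by
      intro σ
      have h := (hode σ).sub_const θstar
      have heq : C.mulVec (x σ) + b = C.mulVec (w σ) := by
        simp [hwdef, Matrix.mulVec_sub, hCθ]
      rwa [heq] at h
    have hanti := gronwall_anti hc hC convex_univ
      (fun σ _ => (hw σ).hasDerivWithinAt)
    set T := eunorm θstar with hT
    have hbound : ∀ s : ℝ, w s ⬝ᵥ w s ≤ rB ^ 2 + rB * T + T * rB + T ^ 2 := by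
      intro s
      have h1 : x s ⬝ᵥ x s ≤ rB ^ 2 := by
        have := pow_le_pow_left₀ (eunorm_nonneg _) (hxz s).1 2
        rwa [eunorm_sq] at this
      have h2 : -(x s ⬝ᵥ θstar) ≤ rB * T := by
        have h := cauchy_schwarz (-(x s)) θstar
        rw [eunorm_neg, neg_dotProduct] at h
        exact h.trans (mul_le_mul_of_nonneg_right (hxz s).1 (eunorm_nonneg _))
      have h3 : -(θstar ⬝ᵥ x s) ≤ T * rB := by
        have h := cauchy_schwarz (-θstar) (x s)
        rw [eunorm_neg, neg_dotProduct] at h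
        exact h.trans (mul_le_mul_of_nonneg_left (hxz s).1 (eunorm_nonneg _))
      have h4 : θstar ⬝ᵥ θstar = T ^ 2 := (eunorm_sq _).symm
      have h5 : w s ⬝ᵥ w s =
          x s ⬝ᵥ x s - x s ⬝ᵥ θstar - θstar ⬝ᵥ x s + θstar ⬝ᵥ θstar := by
        simp [hwdef, sub_dotProduct, dotProduct_sub]
        ring
      linarith
    set K := rB ^ 2 + rB * T + T * rB + T ^ 2 with hK
    have hle : ∀ s : ℝ, s ≤ τ →
        Real.exp (2 * c * τ) * (w τ ⬝ᵥ w τ) ≤ Real.exp (2 * c * s) * K := by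
      intro s hs
      refine (hanti (mem_univ s) (mem_univ τ) hs).trans ?_
      exact mul_le_mul_of_nonneg_left (hbound s) (Real.exp_pos _).le
    have htend : Filter.Tendsto (fun s : ℝ => Real.exp (2 * c * s) * K)
        Filter.atBot (nhds 0) := by
      have h1 : Filter.Tendsto (fun s : ℝ => 2 * c * s) Filter.atBot Filter.atBot :=
        Filter.Tendsto.const_mul_atBot (by positivity) Filter.tendsto_id
      have := (Real.tendsto_exp_atBot.comp h1).mul_const K
      simpa using this
    have hle0 : Real.exp (2 * c * τ) * (w τ ⬝ᵥ w τ) ≤ 0 :=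
      ge_of_tendsto htend (Filter.eventually_atBot.mpr ⟨τ, fun s hs => hle s hs⟩)
    have hg0 : w τ ⬝ᵥ w τ ≤ 0 := by
      nlinarith [Real.exp_pos (2 * c * τ), dot_self_nonneg (w τ)]
    have h := dot_self_eq_zero hg0
    have h2 : x τ - θstar = 0 := h
    exact sub_eq_zero.mp h2


end ETD1
end
end

section
/- Let Assumption 1 hold, and suppose i(s) > 0 for at least one state s ∈ 𝒮. Then C = −Φ₁ᵀ Ĝ Φ₁, where Ĝ = M̂(I − Q̂) is a positive definite matrix (xᵀĜx > 0 for all x ≠ 0), Φ₁ is the submatrix of Φ of the rows φ(s)ᵀ with s ∈ 𝒥₁ = {s : M̄_{ss} > 0}, Q̂ is the submatrix of P^λ_{π,γ} with row and column indices in 𝒥₁, M̂ is the diagonal matrix with diagonal entries M̄_{ss}, s ∈ 𝒥₁, and diag(M̂) = (d¹_{π°,i})ᵀ(I − Q̂)⁻¹ with d¹_{π°,i}(s) = d_{π°}(s)·i(s) for s ∈ 𝒥₁. -/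
open Matrix
open scoped Classical

noncomputable section

section GeneralMatrixLemmas
variable {ι : Type*} [Fintype ι] [DecidableEq ι]

omit [Fintype ι] [DecidableEq ι] in
lemma sum_subtype_mem' (A : Finset ι) (f : ι → ℝ) :
    ∑ x : {i // i ∈ A}, f x.val = ∑ x ∈ A, f x :=
  (Finset.sum_subtype A (fun _ => Iff.rfl) f).symm

/-- A closed stochastic set makes `1 - B` singular. -/
lemma css_det_zero (B : Matrix ι ι ℝ) (hB0 : ∀ i j, 0 ≤ B i j)
    (hrow : ∀ i, ∑ j, B i j ≤ 1) (A : Finset ι) (hA : A.Nonempty)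
    (hst : ∀ i ∈ A, ∑ j ∈ A, B i j = 1) : (1 - B).det = 0 := by
  have hclosed : ∀ i ∈ A, ∀ j, j ∉ A → B i j = 0 := by
    intro i hi j hj
    have hsplit := Finset.sum_add_sum_compl A (fun j => B i j)
    have h1 : ∑ j ∈ Aᶜ, B i j ≤ 0 := by
      have := hrow i
      rw [← hsplit, hst i hi] at this
      linarith
    have h2 : ∑ j ∈ Aᶜ, B i j = 0 :=
      le_antisymm h1 (Finset.sum_nonneg fun j _ => hB0 i j)
    exact (Finset.sum_eq_zero_iff_of_nonneg (fun j _ => hB0 i j)).mp h2 j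
      (Finset.mem_compl.mpr hj)
  classical
  set C := 1 - B with hC
  set M11 : Matrix {i // i ∈ A} {i // i ∈ A} ℝ := C.submatrix Subtype.val Subtype.val with hM11
  set M21 : Matrix {i // i ∉ A} {i // i ∈ A} ℝ := C.submatrix Subtype.val Subtype.val with hM21
  set M22 : Matrix {i // i ∉ A} {i // i ∉ A} ℝ := C.submatrix Subtype.val Subtype.val with hM22
  set e : {i // i ∈ A} ⊕ {i // i ∉ A} ≃ ι := Equiv.sumCompl (· ∈ A) with he
  have hsub : C.submatrix e e = Matrix.fromBlocks M11 0 M21 M22 := by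
    ext i j
    rcases i with i | i <;> rcases j with j | j <;>
      simp only [he, Matrix.submatrix_apply, Equiv.sumCompl_apply_inl, Equiv.sumCompl_apply_inr,
        Matrix.fromBlocks_apply₁₁, Matrix.fromBlocks_apply₁₂, Matrix.fromBlocks_apply₂₁,
        Matrix.fromBlocks_apply₂₂, hM11, hM21, hM22, Matrix.zero_apply]
    · have hne : (i : ι) ≠ (j : ι) := fun h => j.2 (h ▸ i.2)
      simp [hC, Matrix.sub_apply, Matrix.one_apply, hne, hclosed i.1 i.2 j.1 j.2]
  have h11 : M11.det = 0 := by
    rw [← Matrix.exists_mulVec_eq_zero_iff]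
    refine ⟨fun _ => 1, ?_, ?_⟩
    · obtain ⟨a, ha⟩ := hA
      intro h
      have := congrFun h ⟨a, ha⟩
      norm_num at this
    · funext i
      simp only [Matrix.mulVec, dotProduct, mul_one, Pi.zero_apply, hM11,
        Matrix.submatrix_apply]
      rw [sum_subtype_mem' A (fun x => C i.val x)]
      have : ∑ x ∈ A, C i.val x = ∑ x ∈ A, ((1 : Matrix ι ι ℝ) i.val x - B i.val x) := by
        simp [hC, Matrix.sub_apply]
      rw [this, Finset.sum_sub_distrib, hst _ i.2]
      have hone : ∑ x ∈ A, (1 : Matrix ι ι ℝ) i.val x = 1 := by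
        rw [Finset.sum_eq_single (i.val : ι)]
        · simp [Matrix.one_apply]
        · intro b _ hb; simp [Matrix.one_apply, (Ne.symm hb)]
        · intro h; exact absurd i.2 h
      rw [hone]; ring
  have : (C.submatrix e e).det = C.det := Matrix.det_submatrix_equiv_self e C
  rw [← this, hsub, Matrix.det_fromBlocks_zero₁₂, h11, zero_mul]

/-- If `1 - B` is singular for a nonnegative substochastic `B`, there is a
closed stochastic set. -/
lemma css_of_det_zero (B : Matrix ι ι ℝ) (hB0 : ∀ i j, 0 ≤ B i j)
    (hrow : ∀ i, ∑ j, B i j ≤ 1) (hdet : (1 - B).det = 0) :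
    ∃ A : Finset ι, A.Nonempty ∧ ∀ i ∈ A, ∑ j ∈ A, B i j = 1 := by
  obtain ⟨v, hv0, hv⟩ := Matrix.exists_mulVec_eq_zero_iff.mpr hdet
  set w : ι → ℝ := fun i => |v i| with hw
  have hι : Nonempty ι := by
    by_contra h
    exact hv0 (funext fun i => absurd ⟨i⟩ h)
  obtain ⟨i₀, -, hi₀⟩ := Finset.exists_max_image Finset.univ w Finset.univ_nonempty
  set c : ℝ := w i₀ with hc
  have hcpos : 0 < c := by
    obtain ⟨k, hk⟩ := Function.ne_iff.mp hv0
    have : 0 < w k := abs_pos.mpr hk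
    exact lt_of_lt_of_le this (hi₀ k (Finset.mem_univ k))
  have hfix : ∀ i, v i = ∑ j, B i j * v j := by
    intro i
    have := congrFun hv i
    simp only [Matrix.mulVec, dotProduct, Matrix.sub_apply, Pi.zero_apply,
      sub_mul] at this
    rw [Finset.sum_sub_distrib] at this
    have hone : ∑ j, (1 : Matrix ι ι ℝ) i j * v j = v i := by
      rw [Finset.sum_eq_single i] <;> simp [Matrix.one_apply]
      intro b hb; simp [Ne.symm hb]
    rw [hone] at this
    linarith
  refine ⟨Finset.univ.filter (fun i => w i = c), ⟨i₀, by simp [hc]⟩, ?_⟩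
  intro i hi
  have hwi : w i = c := (Finset.mem_filter.mp hi).2
  have h1 : c ≤ ∑ j, B i j * w j := by
    calc c = |v i| := hwi.symm
      _ = |∑ j, B i j * v j| := by rw [hfix i]
      _ ≤ ∑ j, |B i j * v j| := Finset.abs_sum_le_sum_abs _ _
      _ = ∑ j, B i j * w j := by
          apply Finset.sum_congr rfl; intro j _
          rw [abs_mul, abs_of_nonneg (hB0 i j)]
  have h2 : ∑ j, B i j * w j ≤ (∑ j, B i j) * c := by
    rw [Finset.sum_mul]
    exact Finset.sum_le_sum fun j _ =>
      mul_le_mul_of_nonneg_left (hi₀ j (Finset.mem_univ j)) (hB0 i j)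
  have h3 : (∑ j, B i j) * c ≤ c := by
    nlinarith [hrow i, hcpos]
  have heq1 : ∑ j, B i j * w j = c := le_antisymm (le_trans h2 h3) h1
  have heq2 : (∑ j, B i j) * c = c := le_antisymm h3 (heq1 ▸ h2)
  have hrowi : ∑ j, B i j = 1 :=
    mul_right_cancel₀ (ne_of_gt hcpos) (by rw [heq2, one_mul])
  have hterm : ∀ j, B i j * (c - w j) = 0 := by
    have hsum : ∑ j, B i j * (c - w j) = 0 := by
      have : ∑ j, B i j * (c - w j) = (∑ j, B i j) * c - ∑ j, B i j * w j := by
        rw [Finset.sum_mul, ← Finset.sum_sub_distrib]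
        apply Finset.sum_congr rfl; intro j _; ring
      rw [this, hrowi, heq1]; ring
    intro j
    have hnn : ∀ j ∈ Finset.univ, 0 ≤ B i j * (c - w j) := by
      intro j _
      apply mul_nonneg (hB0 i j)
      have := hi₀ j (Finset.mem_univ j)
      linarith
    exact (Finset.sum_eq_zero_iff_of_nonneg hnn).mp hsum j (Finset.mem_univ j)
  rw [← hrowi]
  symm
  rw [← Finset.sum_filter_add_sum_filter_not Finset.univ (fun j => w j = c) (fun j => B i j)]
  have : ∑ j ∈ Finset.univ.filter (fun j => ¬ w j = c), B i j = 0 := by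
    apply Finset.sum_eq_zero
    intro j hj
    have hjne := (Finset.mem_filter.mp hj).2
    rcases mul_eq_zero.mp (hterm j) with h | h
    · exact h
    · exfalso; apply hjne; linarith
  rw [this, add_zero]

lemma unit_of_no_css (B : Matrix ι ι ℝ) (hB0 : ∀ i j, 0 ≤ B i j)
    (hrow : ∀ i, ∑ j, B i j ≤ 1)
    (hnc : ¬ ∃ A : Finset ι, A.Nonempty ∧ ∀ i ∈ A, ∑ j ∈ A, B i j = 1) :
    IsUnit (1 - B) := by
  rw [Matrix.isUnit_iff_isUnit_det, isUnit_iff_ne_zero]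
  intro h
  exact hnc (css_of_det_zero B hB0 hrow h)

lemma det_unit_of_no_css (B : Matrix ι ι ℝ) (hB0 : ∀ i j, 0 ≤ B i j)
    (hrow : ∀ i, ∑ j, B i j ≤ 1)
    (hnc : ¬ ∃ A : Finset ι, A.Nonempty ∧ ∀ i ∈ A, ∑ j ∈ A, B i j = 1) :
    IsUnit (1 - B).det :=
  (Matrix.isUnit_iff_isUnit_det _).mp (unit_of_no_css B hB0 hrow hnc)

/-- monotonicity: (1-B) x ≥ 0 entrywise implies x ≥ 0, when 1-B nonsingular. -/
lemma mono_of_unit (B : Matrix ι ι ℝ) (hB0 : ∀ i j, 0 ≤ B i j)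
    (hrow : ∀ i, ∑ j, B i j ≤ 1) (hdet : (1 - B).det ≠ 0)
    (x : ι → ℝ) (hx : ∀ i, 0 ≤ ((1 - B) *ᵥ x) i) : ∀ i, 0 ≤ x i := by
  by_contra hneg
  push_neg at hneg
  obtain ⟨k, hk⟩ := hneg
  have hι : Nonempty ι := ⟨k⟩
  obtain ⟨i₀, -, hi₀⟩ := Finset.exists_min_image Finset.univ x Finset.univ_nonempty
  set c : ℝ := x i₀ with hc
  have hcneg : c < 0 := lt_of_le_of_lt (hi₀ k (Finset.mem_univ k)) hk
  have happ : ∀ i, ((1 - B) *ᵥ x) i = x i - ∑ j, B i j * x j := by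
    intro i
    simp only [Matrix.mulVec, dotProduct, Matrix.sub_apply, sub_mul]
    rw [Finset.sum_sub_distrib]
    congr 1
    rw [Finset.sum_eq_single i] <;> simp [Matrix.one_apply]
    intro b hb; simp [Ne.symm hb]
  apply hdet
  apply css_det_zero B hB0 hrow (Finset.univ.filter (fun i => x i = c)) ⟨i₀, by simp [hc]⟩
  intro i hi
  have hxi : x i = c := (Finset.mem_filter.mp hi).2
  have h1 : ∑ j, B i j * x j ≥ (∑ j, B i j) * c := by
    rw [Finset.sum_mul]
    exact Finset.sum_le_sum fun j _ =>
      mul_le_mul_of_nonneg_left (hi₀ j (Finset.mem_univ j)) (hB0 i j)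
  have h2 : (∑ j, B i j) * c ≥ c := by nlinarith [hrow i]
  have h3 : 0 ≤ x i - ∑ j, B i j * x j := by rw [← happ i]; exact hx i
  have heq1 : ∑ j, B i j * x j = c := by
    have : ∑ j, B i j * x j ≤ c := by rw [← hxi] at *; linarith
    linarith
  have heq2 : (∑ j, B i j) * c = c := le_antisymm (by linarith) h2
  have hrowi : ∑ j, B i j = 1 :=
    mul_right_cancel₀ (ne_of_lt hcneg) (by rw [heq2, one_mul])
  have hterm : ∀ j, B i j * (x j - c) = 0 := by
    have hsum : ∑ j, B i j * (x j - c) = 0 := by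
      have : ∑ j, B i j * (x j - c) = ∑ j, B i j * x j - (∑ j, B i j) * c := by
        rw [Finset.sum_mul, ← Finset.sum_sub_distrib]
        apply Finset.sum_congr rfl; intro j _; ring
      rw [this, heq1, heq2]; ring
    intro j
    have hnn : ∀ j ∈ Finset.univ, 0 ≤ B i j * (x j - c) := fun j _ =>
      mul_nonneg (hB0 i j) (by have := hi₀ j (Finset.mem_univ j); linarith)
    exact (Finset.sum_eq_zero_iff_of_nonneg hnn).mp hsum j (Finset.mem_univ j)
  rw [← hrowi]
  symm
  rw [← Finset.sum_filter_add_sum_filter_not Finset.univ (fun j => x j = c) (fun j => B i j)]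
  have : ∑ j ∈ Finset.univ.filter (fun j => ¬ x j = c), B i j = 0 := by
    apply Finset.sum_eq_zero
    intro j hj
    have hjne := (Finset.mem_filter.mp hj).2
    rcases mul_eq_zero.mp (hterm j) with h | h
    · exact h
    · exfalso; apply hjne; linarith
  rw [this, add_zero]

/-- The inverse of 1-B is entrywise nonnegative. -/
lemma inv_entry_nonneg (B : Matrix ι ι ℝ) (hB0 : ∀ i j, 0 ≤ B i j)
    (hrow : ∀ i, ∑ j, B i j ≤ 1) (hu : IsUnit (1 - B)) :
    ∀ i j, 0 ≤ (1 - B)⁻¹ i j := by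
  have hdet : IsUnit (1 - B).det := (Matrix.isUnit_iff_isUnit_det _).mp hu
  intro i j
  have hmul : (1 - B) * (1 - B)⁻¹ = 1 := Matrix.mul_nonsing_inv _ hdet
  have := mono_of_unit B hB0 hrow (isUnit_iff_ne_zero.mp hdet)
    (fun k => (1 - B)⁻¹ k j) ?_ i
  · exact this
  · intro k
    have : ((1 - B) *ᵥ fun k => (1 - B)⁻¹ k j) k = ((1 - B) * (1 - B)⁻¹) k j := by
      simp [Matrix.mulVec, Matrix.mul_apply, dotProduct]
    rw [this, hmul]
    by_cases h : k = j <;> simp [Matrix.one_apply, h]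

end GeneralMatrixLemmas




/-!
Statement 13 (Theorem 5.1): under Assumption 1 and with i(s) > 0 for at least one
state, C = −Φ₁ᵀ Ĝ Φ₁ where Ĝ = M̂(I − Q̂) is positive definite, Φ₁, Q̂, M̂ are the
restrictions to the emphasized states 𝒥₁ = {s : M̄_{ss} > 0}, and
diag(M̂) = (d¹_{π°,i})ᵀ (I − Q̂)⁻¹.
-/

open Matrix
open scoped Classical

noncomputable section
namespace ETD13

def Pmat {N M : ℕ} (p : Fin N → Fin M → Fin N → ℝ) (pol : Fin N → Fin M → ℝ) :
    Matrix (Fin N) (Fin N) ℝ :=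
  Matrix.of fun s s' => ∑ a, pol s a * p s a s'

def Plam {N M : ℕ} (p : Fin N → Fin M → Fin N → ℝ) (pol : Fin N → Fin M → ℝ)
    (γf lf : Fin N → ℝ) : Matrix (Fin N) (Fin N) ℝ :=
  1 - (1 - Pmat p pol * Matrix.diagonal γf * Matrix.diagonal lf)⁻¹ *
      (1 - Pmat p pol * Matrix.diagonal γf)

def MbarDiag {N M : ℕ} (p : Fin N → Fin M → Fin N → ℝ) (pol : Fin N → Fin M → ℝ)
    (γf lf d iF : Fin N → ℝ) : Fin N → ℝ :=
  Matrix.vecMul (fun s => d s * iF s) (1 - Plam p pol γf lf)⁻¹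

def Cmat {N M n : ℕ} (p : Fin N → Fin M → Fin N → ℝ) (pol : Fin N → Fin M → ℝ)
    (γf lf d iF : Fin N → ℝ) (Φ : Matrix (Fin N) (Fin n) ℝ) : Matrix (Fin n) (Fin n) ℝ :=
  -(Φᵀ * Matrix.diagonal (MbarDiag p pol γf lf d iF) * (1 - Plam p pol γf lf) * Φ)

/-- The set 𝒥₁ of emphasized states, as a subtype. -/
def EmphIdx {N M : ℕ} (p : Fin N → Fin M → Fin N → ℝ) (pol : Fin N → Fin M → ℝ)
    (γf lf d iF : Fin N → ℝ) : Type :=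
  {s : Fin N // 0 < MbarDiag p pol γf lf d iF s}

instance {N M : ℕ} (p : Fin N → Fin M → Fin N → ℝ) (pol : Fin N → Fin M → ℝ)
    (γf lf d iF : Fin N → ℝ) : Fintype (EmphIdx p pol γf lf d iF) :=
  Subtype.fintype _

instance {N M : ℕ} (p : Fin N → Fin M → Fin N → ℝ) (pol : Fin N → Fin M → ℝ)
    (γf lf d iF : Fin N → ℝ) : DecidableEq (EmphIdx p pol γf lf d iF) :=
  fun x y => Classical.dec _

/-- Q̂ : the submatrix of P^λ_{π,γ} with row and column indices in 𝒥₁. -/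
def Qhat {N M : ℕ} (p : Fin N → Fin M → Fin N → ℝ) (pol : Fin N → Fin M → ℝ)
    (γf lf d iF : Fin N → ℝ) :
    Matrix (EmphIdx p pol γf lf d iF) (EmphIdx p pol γf lf d iF) ℝ :=
  (Plam p pol γf lf).submatrix Subtype.val Subtype.val

/-- M̂ : the diagonal matrix with entries M̄_{ss}, s ∈ 𝒥₁. -/
def Mhat {N M : ℕ} (p : Fin N → Fin M → Fin N → ℝ) (pol : Fin N → Fin M → ℝ)
    (γf lf d iF : Fin N → ℝ) :
    Matrix (EmphIdx p pol γf lf d iF) (EmphIdx p pol γf lf d iF) ℝ :=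
  Matrix.diagonal (fun s => MbarDiag p pol γf lf d iF s.1)

/-- Φ₁ : the rows of Φ corresponding to emphasized states. -/
def Phi1 {N M n : ℕ} (p : Fin N → Fin M → Fin N → ℝ) (pol : Fin N → Fin M → ℝ)
    (γf lf d iF : Fin N → ℝ) (Φ : Matrix (Fin N) (Fin n) ℝ) :
    Matrix (EmphIdx p pol γf lf d iF) (Fin n) ℝ :=
  Φ.submatrix Subtype.val id

set_option maxHeartbeats 3200000 in
theorem structure_of_C
    {N M n : ℕ}
    (p : Fin N → Fin M → Fin N → ℝ) (π πb : Fin N → Fin M → ℝ)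
    (γf lf iF d : Fin N → ℝ) (Φ : Matrix (Fin N) (Fin n) ℝ)
    (hp0 : ∀ s a s', 0 ≤ p s a s') (hp1 : ∀ s a, ∑ s', p s a s' = 1)
    (hπ0 : ∀ s a, 0 ≤ π s a) (hπ1 : ∀ s, ∑ a, π s a = 1)
    (hπb0 : ∀ s a, 0 ≤ πb s a) (hπb1 : ∀ s, ∑ a, πb s a = 1)
    (hγ : ∀ s, 0 ≤ γf s ∧ γf s ≤ 1) (hγ1 : ∃ s, γf s < 1)
    (hlf : ∀ s, 0 ≤ lf s ∧ lf s ≤ 1) (hi : ∀ s, 0 ≤ iF s)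
    -- Assumption 1
    (hA1i : IsUnit (1 - Pmat p π * Matrix.diagonal γf))
    (hirr : ∀ s s', ∃ k : ℕ, 1 ≤ k ∧ 0 < (Pmat p πb ^ k) s s')
    (hsupp : ∀ s a, 0 < π s a → 0 < πb s a)
    -- steady-state distribution of the behavior policy
    (hd0 : ∀ s, 0 < d s) (hd1 : ∑ s, d s = 1)
    (hdstat : ∀ s', ∑ s, d s * Pmat p πb s s' = d s')
    -- i(s) > 0 for at least one state
    (hipos : ∃ s, 0 < iF s) :
    -- C = −Φ₁ᵀ Ĝ Φ₁, with Ĝ = M̂ (I − Q̂)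
    Cmat p π γf lf d iF Φ =
      -((Phi1 p π γf lf d iF Φ)ᵀ *
          (Mhat p π γf lf d iF * (1 - Qhat p π γf lf d iF)) * Phi1 p π γf lf d iF Φ) ∧
    -- Ĝ is positive definite
    (∀ x : EmphIdx p π γf lf d iF → ℝ, x ≠ 0 →
        0 < x ⬝ᵥ (Mhat p π γf lf d iF * (1 - Qhat p π γf lf d iF)).mulVec x) ∧
    -- diag(M̂) = (d¹_{π°,i})ᵀ (I − Q̂)⁻¹ with d¹_{π°,i}(s) = d_{π°}(s)·i(s), s ∈ 𝒥₁
    (∀ s : EmphIdx p π γf lf d iF,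
        MbarDiag p π γf lf d iF s.1 =
          Matrix.vecMul (fun s' : EmphIdx p π γf lf d iF => d s'.1 * iF s'.1)
            (1 - Qhat p π γf lf d iF)⁻¹ s) := by

  classical
  set P : Matrix (Fin N) (Fin N) ℝ := Pmat p π with hPdef
  set Γ : Matrix (Fin N) (Fin N) ℝ := Matrix.diagonal γf with hΓdef
  set Λ : Matrix (Fin N) (Fin N) ℝ := Matrix.diagonal lf with hΛdef
  set L : Matrix (Fin N) (Fin N) ℝ := Plam p π γf lf with hLdef
  set m : Fin N → ℝ := MbarDiag p π γf lf d iF with hmdef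
  set di : Fin N → ℝ := fun s => d s * iF s with hdidef
  -- basic facts about P
  have hmul_le : ∀ (a b : ℝ), 0 ≤ a → 0 ≤ b → b ≤ 1 → a * b ≤ a := by
    intro a b ha hb hb1; nlinarith
  have hP0 : ∀ i j, 0 ≤ P i j := by
    intro i j
    show 0 ≤ Pmat p π i j
    simp only [Pmat, Matrix.of_apply]
    exact Finset.sum_nonneg fun a _ => mul_nonneg (hπ0 i a) (hp0 i a j)
  have hProw : ∀ i, ∑ j, P i j = 1 := by
    intro i
    have : ∑ j, ∑ a, π i a * p i a j = ∑ a, ∑ j, π i a * p i a j := Finset.sum_comm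
    simp only [hPdef, Pmat, Matrix.of_apply]
    rw [this]
    have : ∀ a, ∑ j, π i a * p i a j = π i a := by
      intro a; rw [← Finset.mul_sum, hp1 i a, mul_one]
    rw [Finset.sum_congr rfl fun a _ => this a, hπ1 i]
  -- entries of P*Γ and P*Γ*Λ
  have hPΓe : ∀ i j, (P * Γ) i j = P i j * γf j := fun i j => Matrix.mul_diagonal _ _ _ _
  have hB₁e : ∀ i j, (P * Γ * Λ) i j = P i j * γf j * lf j := by
    intro i j; rw [Matrix.mul_diagonal, hPΓe]
  have hPΓ0 : ∀ i j, 0 ≤ (P * Γ) i j := by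
    intro i j; rw [hPΓe]; exact mul_nonneg (hP0 i j) (hγ j).1
  have hB₁0 : ∀ i j, 0 ≤ (P * Γ * Λ) i j := by
    intro i j; rw [hB₁e]; exact mul_nonneg (mul_nonneg (hP0 i j) (hγ j).1) (hlf j).1
  have hPΓrow : ∀ i, ∑ j, (P * Γ) i j ≤ 1 := by
    intro i
    calc ∑ j, (P * Γ) i j ≤ ∑ j, P i j := by
          apply Finset.sum_le_sum; intro j _; rw [hPΓe]
          exact hmul_le _ _ (hP0 i j) (hγ j).1 (hγ j).2
      _ = 1 := hProw i
  have hB₁row : ∀ i, ∑ j, (P * Γ * Λ) i j ≤ 1 := by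
    intro i
    calc ∑ j, (P * Γ * Λ) i j ≤ ∑ j, P i j := by
          apply Finset.sum_le_sum; intro j _; rw [hB₁e]
          calc P i j * γf j * lf j ≤ P i j * γf j :=
                hmul_le _ _ (mul_nonneg (hP0 i j) (hγ j).1) (hlf j).1 (hlf j).2
            _ ≤ P i j := hmul_le _ _ (hP0 i j) (hγ j).1 (hγ j).2
      _ = 1 := hProw i
  -- 1 - P*Γ*Λ is a unit
  have hB₁unit : IsUnit (1 - P * Γ * Λ) := by
    apply unit_of_no_css _ hB₁0 hB₁row
    rintro ⟨A, hA, hst⟩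
    have hst' : ∀ i ∈ A, ∑ j ∈ A, (P * Γ) i j = 1 := by
      intro i hi
      have hle1 : ∑ j ∈ A, (P * Γ) i j ≤ 1 := by
        calc ∑ j ∈ A, (P * Γ) i j ≤ ∑ j, (P * Γ) i j :=
              Finset.sum_le_sum_of_subset_of_nonneg (Finset.subset_univ A)
                (fun j _ _ => hPΓ0 i j)
          _ ≤ 1 := hPΓrow i
      have hge1 : 1 ≤ ∑ j ∈ A, (P * Γ) i j := by
        rw [← hst i hi]
        apply Finset.sum_le_sum; intro j _
        rw [hB₁e, hPΓe]
        exact hmul_le _ _ (mul_nonneg (hP0 i j) (hγ j).1) (hlf j).1 (hlf j).2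
      linarith
    have hdet0 : (1 - P * Γ).det = 0 := css_det_zero _ hPΓ0 hPΓrow A hA hst'
    have := (Matrix.isUnit_iff_isUnit_det _).mp hA1i
    rw [hdet0] at this
    exact (isUnit_iff_ne_zero.mp this) rfl
  have hB₁detu : IsUnit (1 - P * Γ * Λ).det := (Matrix.isUnit_iff_isUnit_det _).mp hB₁unit
  have hB₁inv0 : ∀ i j, 0 ≤ (1 - P * Γ * Λ)⁻¹ i j := inv_entry_nonneg _ hB₁0 hB₁row hB₁unit
  -- the matrix L = Plam and its properties
  have hL : L = 1 - (1 - P * Γ * Λ)⁻¹ * (1 - P * Γ) := rfl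
  have hIL : 1 - L = (1 - P * Γ * Λ)⁻¹ * (1 - P * Γ) := by rw [hL]; abel
  have hL2 : L = (1 - P * Γ * Λ)⁻¹ * (P * Γ - P * Γ * Λ) := by
    rw [hL]
    have : (1 : Matrix (Fin N) (Fin N) ℝ) =
        (1 - P * Γ * Λ)⁻¹ * (1 - P * Γ * Λ) := (Matrix.nonsing_inv_mul _ hB₁detu).symm
    nth_rewrite 1 [this]
    rw [← Matrix.mul_sub]
    congr 1
    abel
  have hL0 : ∀ i j, 0 ≤ L i j := by
    intro i j
    rw [hL2, Matrix.mul_apply]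
    apply Finset.sum_nonneg
    intro k _
    apply mul_nonneg (hB₁inv0 i k)
    rw [Matrix.sub_apply, hB₁e, hPΓe]
    have := hmul_le _ _ (mul_nonneg (hP0 k j) (hγ j).1) (hlf j).1 (hlf j).2
    linarith
  have hLrow : ∀ i, ∑ j, L i j ≤ 1 := by
    intro i
    have hexp : ∀ j, L i j = (1 : Matrix (Fin N) (Fin N) ℝ) i j
        - ((1 - P * Γ * Λ)⁻¹ * (1 - P * Γ)) i j := by
      intro j; rw [hL]; simp [Matrix.sub_apply]
    have hone : ∑ j, (1 : Matrix (Fin N) (Fin N) ℝ) i j = 1 := by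
      rw [Finset.sum_eq_single i] <;> simp [Matrix.one_apply]
      intro b hb; simp [Ne.symm hb]
    have hnn : 0 ≤ ∑ j, ((1 - P * Γ * Λ)⁻¹ * (1 - P * Γ)) i j := by
      have hswap : ∑ j, ((1 - P * Γ * Λ)⁻¹ * (1 - P * Γ)) i j
          = ∑ k, (1 - P * Γ * Λ)⁻¹ i k * (1 - ∑ j, (P * Γ) k j) := by
        simp only [Matrix.mul_apply]
        rw [Finset.sum_comm]
        apply Finset.sum_congr rfl
        intro k _
        rw [← Finset.mul_sum]
        congr 1
        have : ∀ j, (1 - P * Γ) k j = (1 : Matrix (Fin N) (Fin N) ℝ) k j - (P * Γ) k j := by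
          intro j; simp [Matrix.sub_apply]
        rw [Finset.sum_congr rfl fun j _ => this j, Finset.sum_sub_distrib]
        congr 1
        rw [Finset.sum_eq_single k] <;> simp [Matrix.one_apply]
        intro b hb; simp [Ne.symm hb]
      rw [hswap]
      apply Finset.sum_nonneg
      intro k _
      apply mul_nonneg (hB₁inv0 i k)
      linarith [hPΓrow k]
    rw [Finset.sum_congr rfl fun j _ => hexp j, Finset.sum_sub_distrib, hone]
    linarith
  have hILunit : IsUnit (1 - L) := by
    rw [hIL]
    apply IsUnit.mul _ hA1i
    exact Matrix.isUnit_nonsing_inv_iff.mpr hB₁unit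
  have hILdetu : IsUnit (1 - L).det := (Matrix.isUnit_iff_isUnit_det _).mp hILunit
  have hILinv0 : ∀ i j, 0 ≤ (1 - L)⁻¹ i j := inv_entry_nonneg _ hL0 hLrow hILunit
  -- the emphasis weights
  have hdi0 : ∀ j, 0 ≤ di j := fun j => mul_nonneg (le_of_lt (hd0 j)) (hi j)
  have hm0 : ∀ j, 0 ≤ m j := by
    intro j
    rw [hmdef]
    show 0 ≤ Matrix.vecMul (fun s => d s * iF s) (1 - Plam p π γf lf)⁻¹ j
    rw [Matrix.vecMul]
    apply Finset.sum_nonneg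
    intro k _
    exact mul_nonneg (hdi0 k) (hILinv0 k j)
  have hmvm : Matrix.vecMul m (1 - L) = di := by
    rw [hmdef]
    show Matrix.vecMul (Matrix.vecMul di (1 - L)⁻¹) (1 - L) = di
    rw [Matrix.vecMul_vecMul, Matrix.nonsing_inv_mul _ hILdetu, Matrix.vecMul_one]
  have hmsolve : ∀ j, m j - ∑ i, m i * L i j = di j := by
    intro j
    have := congrFun hmvm j
    rw [Matrix.vecMul] at this
    simp only [dotProduct, Matrix.sub_apply] at this
    rw [show ∑ i, m i * ((1 : Matrix (Fin N) (Fin N) ℝ) i j - L i j)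
        = ∑ i, (m i * (1 : Matrix (Fin N) (Fin N) ℝ) i j - m i * L i j) from
        Finset.sum_congr rfl fun i _ => by ring, Finset.sum_sub_distrib] at this
    have hone : ∑ i, m i * (1 : Matrix (Fin N) (Fin N) ℝ) i j = m j := by
      rw [Finset.sum_eq_single j] <;> simp [Matrix.one_apply]
      intro b hb; simp [hb]
    rw [hone] at this
    exact this
  have hstruct : ∀ j, m j = 0 → ∀ i, m i * L i j = 0 := by
    intro j hj i
    have h1 := hmsolve j
    rw [hj, zero_sub] at h1
    have h2 : ∑ i, m i * L i j ≤ 0 := by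
      have := hdi0 j; linarith
    have hnn : ∀ i ∈ Finset.univ, 0 ≤ m i * L i j := fun i _ =>
      mul_nonneg (hm0 i) (hL0 i j)
    have h3 : ∑ i, m i * L i j = 0 :=
      le_antisymm h2 (Finset.sum_nonneg hnn)
    exact (Finset.sum_eq_zero_iff_of_nonneg hnn).mp h3 i (Finset.mem_univ i)

  -- conversion between sums over the emphasized subtype and filtered sums
  have hconv : ∀ f : Fin N → ℝ, ∑ i : EmphIdx p π γf lf d iF, f i.1
      = ∑ i ∈ Finset.univ.filter (fun s => 0 < m s), f i := by
    intro f
    refine Finset.sum_bij' (fun (a : EmphIdx p π γf lf d iF) _ => a.1)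
      (fun b hb => (⟨b, (Finset.mem_filter.mp hb).2⟩ : EmphIdx p π γf lf d iF))
      ?_ ?_ ?_ ?_ ?_
    · intro a _; exact Finset.mem_filter.mpr ⟨Finset.mem_univ _, a.2⟩
    · intro b hb; exact Finset.mem_univ _
    · intro a _; rfl
    · intro b hb; rfl
    · intro a _; rfl
  have hsplit : ∀ f : Fin N → ℝ, (∑ i : EmphIdx p π γf lf d iF, f i.1)
      + ∑ i ∈ Finset.univ.filter (fun s => ¬ 0 < m s), f i = ∑ i, f i := by
    intro f
    rw [hconv]
    exact Finset.sum_filter_add_sum_filter_not Finset.univ _ f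
  -- properties of Qhat
  set Q : Matrix (EmphIdx p π γf lf d iF) (EmphIdx p π γf lf d iF) ℝ := Qhat p π γf lf d iF
    with hQdef
  have hQe : ∀ i j : EmphIdx p π γf lf d iF, Q i j = L i.1 j.1 := fun i j => rfl
  have hQ0 : ∀ i j, 0 ≤ Q i j := fun i j => hL0 i.1 j.1
  have hQrow : ∀ i : EmphIdx p π γf lf d iF, ∑ j, Q i j ≤ 1 := by
    intro i
    have h1 : ∑ j : EmphIdx p π γf lf d iF, Q i j
        = ∑ j ∈ Finset.univ.filter (fun s => 0 < m s), L i.1 j := by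
      rw [← hconv (fun j => L i.1 j)]
      rfl
    rw [h1]
    calc ∑ j ∈ Finset.univ.filter (fun s => 0 < m s), L i.1 j
        ≤ ∑ j, L i.1 j := Finset.sum_le_sum_of_subset_of_nonneg
          (Finset.subset_univ _) (fun j _ _ => hL0 i.1 j)
      _ ≤ 1 := hLrow i.1
  have hQunit : IsUnit (1 - Q) := by
    apply unit_of_no_css _ hQ0 hQrow
    rintro ⟨A, hA, hst⟩
    have hstodd : ∀ i ∈ A.image Subtype.val, ∑ j ∈ A.image Subtype.val, L i j = 1 := by
      intro i' hi'
      obtain ⟨i, hiA, hival⟩ := Finset.mem_image.mp hi'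
      have himg : ∑ j ∈ A.image Subtype.val, L i' j = ∑ j ∈ A, L i' j.1 :=
        Finset.sum_image (fun a _ b _ hab => Subtype.ext hab)
      rw [himg, ← hival]
      exact hst i hiA
    have hdet0 : (1 - L).det = 0 := css_det_zero _ hL0 hLrow (A.image Subtype.val)
      ⟨(hA.choose).1, Finset.mem_image.mpr ⟨hA.choose, hA.choose_spec, rfl⟩⟩ hstodd
    rw [hdet0] at hILdetu
    exact (isUnit_iff_ne_zero.mp hILdetu) rfl
  have hQdetu : IsUnit (1 - Q).det := (Matrix.isUnit_iff_isUnit_det _).mp hQunit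
  -- column identity on the emphasized set
  have hQcol : ∀ j : EmphIdx p π γf lf d iF,
      ∑ i : EmphIdx p π γf lf d iF, m i.1 * Q i j = m j.1 - di j.1 := by
    intro j
    have h2 : ∑ i ∈ Finset.univ.filter (fun s => ¬ 0 < m s), m i * L i j.1 = 0 := by
      apply Finset.sum_eq_zero
      intro i hi
      have : m i = 0 := le_antisymm (not_lt.mp (Finset.mem_filter.mp hi).2) (hm0 i)
      rw [this, zero_mul]
    have h3 : ∑ i, m i * L i j.1 = ∑ i : EmphIdx p π γf lf d iF, m i.1 * Q i j := by
      rw [← hsplit (fun i => m i * L i j.1), h2, add_zero]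
      rfl
    rw [← h3]
    have := hmsolve j.1
    linarith
  -- vecMul identity for the restricted system
  have hQvm : Matrix.vecMul (fun s : EmphIdx p π γf lf d iF => m s.1) (1 - Q)
      = (fun s : EmphIdx p π γf lf d iF => di s.1) := by
    funext j
    rw [Matrix.vecMul]
    simp only [dotProduct, Matrix.sub_apply]
    rw [show ∑ i : EmphIdx p π γf lf d iF,
        m i.1 * ((1 : Matrix _ _ ℝ) i j - Q i j)
        = ∑ i : EmphIdx p π γf lf d iF,
          (m i.1 * (1 : Matrix _ _ ℝ) i j - m i.1 * Q i j) from
      Finset.sum_congr rfl fun i _ => by ring, Finset.sum_sub_distrib]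
    have hone : ∑ i : EmphIdx p π γf lf d iF, m i.1 * (1 : Matrix _ _ ℝ) i j = m j.1 := by
      rw [Finset.sum_eq_single j] <;> simp [Matrix.one_apply]
      intro b hb; simp [hb]
    rw [hone, hQcol j]
    ring

  have hMh : Mhat p π γf lf d iF
      = Matrix.diagonal (fun s : EmphIdx p π γf lf d iF => m s.1) := rfl
  have hmpos : ∀ s : EmphIdx p π γf lf d iF, 0 < m s.1 := fun s => s.2
  refine ⟨?_, ?_, ?_⟩
  · -- C = -Φ₁ᵀ Ĝ Φ₁
    have hC : Cmat p π γf lf d iF Φ = -(Φᵀ * Matrix.diagonal m * (1 - L) * Φ) := rfl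
    rw [hC]
    apply neg_inj.mpr
    ext a b
    have lhs : (Φᵀ * Matrix.diagonal m * (1 - L) * Φ : Matrix (Fin n) (Fin n) ℝ) a b
        = ∑ i, ∑ j, Φ i a * m i * ((1 - L) i j * Φ j b) := by
      calc (Φᵀ * Matrix.diagonal m * (1 - L) * Φ : Matrix (Fin n) (Fin n) ℝ) a b
          = ∑ j, (∑ i, (Φᵀ * Matrix.diagonal m) a i * (1 - L) i j) * Φ j b := by
            rw [Matrix.mul_apply]
            exact Finset.sum_congr rfl fun j _ => by rw [Matrix.mul_apply]
        _ = ∑ j, ∑ i, Φ i a * m i * ((1 - L) i j * Φ j b) := by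
            apply Finset.sum_congr rfl; intro j _
            rw [Finset.sum_mul]
            apply Finset.sum_congr rfl; intro i _
            rw [Matrix.mul_diagonal, Matrix.transpose_apply]; ring
        _ = ∑ i, ∑ j, Φ i a * m i * ((1 - L) i j * Φ j b) := Finset.sum_comm
    have rhs : ((Phi1 p π γf lf d iF Φ)ᵀ * (Mhat p π γf lf d iF * (1 - Q))
          * Phi1 p π γf lf d iF Φ : Matrix (Fin n) (Fin n) ℝ) a b
        = ∑ i : EmphIdx p π γf lf d iF, ∑ j : EmphIdx p π γf lf d iF,
            Φ i.1 a * m i.1 * ((1 - Q) i j * Φ j.1 b) := by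
      calc ((Phi1 p π γf lf d iF Φ)ᵀ * (Mhat p π γf lf d iF * (1 - Q))
            * Phi1 p π γf lf d iF Φ : Matrix (Fin n) (Fin n) ℝ) a b
          = ∑ j : EmphIdx p π γf lf d iF, (∑ i : EmphIdx p π γf lf d iF,
              (Phi1 p π γf lf d iF Φ)ᵀ a i * (Mhat p π γf lf d iF * (1 - Q)) i j)
                * (Phi1 p π γf lf d iF Φ) j b := by
            rw [Matrix.mul_apply]
            exact Finset.sum_congr rfl fun j _ => by rw [Matrix.mul_apply]
        _ = ∑ j : EmphIdx p π γf lf d iF, ∑ i : EmphIdx p π γf lf d iF,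
              Φ i.1 a * m i.1 * ((1 - Q) i j * Φ j.1 b) := by
            apply Finset.sum_congr rfl; intro j _
            rw [Finset.sum_mul]
            apply Finset.sum_congr rfl; intro i _
            rw [hMh, Matrix.diagonal_mul, Matrix.transpose_apply]
            show Φ i.1 a * (m i.1 * (1 - Q) i j) * Φ j.1 b
              = Φ i.1 a * m i.1 * ((1 - Q) i j * Φ j.1 b)
            ring
        _ = ∑ i : EmphIdx p π γf lf d iF, ∑ j : EmphIdx p π γf lf d iF,
              Φ i.1 a * m i.1 * ((1 - Q) i j * Φ j.1 b) := Finset.sum_comm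
    rw [lhs, rhs]
    -- restrict the outer sum
    have houter0 : ∑ i ∈ Finset.univ.filter (fun s => ¬ 0 < m s),
        (∑ j, Φ i a * m i * ((1 - L) i j * Φ j b)) = 0 := by
      apply Finset.sum_eq_zero
      intro i hi
      have hmi : m i = 0 := le_antisymm (not_lt.mp (Finset.mem_filter.mp hi).2) (hm0 i)
      apply Finset.sum_eq_zero
      intro j _
      rw [hmi]; ring
    have houter : ∑ i, (∑ j, Φ i a * m i * ((1 - L) i j * Φ j b))
        = ∑ i : EmphIdx p π γf lf d iF, ∑ j, Φ i.1 a * m i.1 * ((1 - L) i.1 j * Φ j b) := by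
      rw [← hsplit (fun i => ∑ j, Φ i a * m i * ((1 - L) i j * Φ j b)), houter0, add_zero]
    rw [houter]
    -- restrict the inner sums
    apply Finset.sum_congr rfl
    intro i _
    have hinner0 : ∑ j ∈ Finset.univ.filter (fun s => ¬ 0 < m s),
        Φ i.1 a * m i.1 * ((1 - L) i.1 j * Φ j b) = 0 := by
      apply Finset.sum_eq_zero
      intro j hj
      have hmj : m j = 0 := le_antisymm (not_lt.mp (Finset.mem_filter.mp hj).2) (hm0 j)
      have hne : i.1 ≠ j := by
        intro h
        have := hmpos i
        rw [h, hmj] at this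
        exact lt_irrefl 0 this
      have hLij : L i.1 j = 0 := by
        have h1 := hstruct j hmj i.1
        have h2 : m i.1 ≠ 0 := ne_of_gt (hmpos i)
        rcases mul_eq_zero.mp h1 with h | h
        · exact absurd h h2
        · exact h
      rw [Matrix.sub_apply, Matrix.one_apply, if_neg hne, hLij]
      ring
    have hinner : ∑ j, Φ i.1 a * m i.1 * ((1 - L) i.1 j * Φ j b)
        = ∑ j : EmphIdx p π γf lf d iF, Φ i.1 a * m i.1 * ((1 - L) i.1 j.1 * Φ j.1 b) := by
      rw [← hsplit (fun j => Φ i.1 a * m i.1 * ((1 - L) i.1 j * Φ j b)), hinner0, add_zero]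
    rw [hinner]
    apply Finset.sum_congr rfl
    intro j _
    have hentry : (1 - L) i.1 j.1 = (1 - Q) i j := by
      rw [Matrix.sub_apply, Matrix.sub_apply, Matrix.one_apply, Matrix.one_apply, hQe]
      congr 1
      by_cases h : i = j
      · simp [h]
      · have : i.1 ≠ j.1 := fun hv => h (Subtype.ext hv)
        simp [h, this]
    rw [hentry]
  · -- positive definiteness
    intro x hx
    -- entries of Ĝ = M̂ (1 - Q̂)
    have hGe : ∀ i j : EmphIdx p π γf lf d iF,
        (Mhat p π γf lf d iF * (1 - Q)) i j
          = m i.1 * ((1 : Matrix _ _ ℝ) i j - Q i j) := by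
      intro i j
      rw [hMh, Matrix.diagonal_mul, Matrix.sub_apply]
    -- the quadratic form
    have hinner : ∀ i : EmphIdx p π γf lf d iF,
        ∑ j, (m i.1 * ((1 : Matrix _ _ ℝ) i j - Q i j)) * x j
          = m i.1 * x i - ∑ j, (m i.1 * Q i j) * x j := by
      intro i
      rw [show (∑ j, (m i.1 * ((1 : Matrix _ _ ℝ) i j - Q i j)) * x j)
          = ∑ j, (m i.1 * (1 : Matrix _ _ ℝ) i j * x j - (m i.1 * Q i j) * x j) from
        Finset.sum_congr rfl fun j _ => by ring, Finset.sum_sub_distrib]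
      congr 1
      rw [Finset.sum_eq_single i] <;> simp [Matrix.one_apply]
      intro b hb; simp [Ne.symm hb]
    have hq : x ⬝ᵥ (Mhat p π γf lf d iF * (1 - Q)) *ᵥ x
        = (∑ i, m i.1 * x i ^ 2) - ∑ i, ∑ j, (m i.1 * Q i j) * (x i * x j) := by
      calc x ⬝ᵥ (Mhat p π γf lf d iF * (1 - Q)) *ᵥ x
          = ∑ i, x i * (∑ j, (m i.1 * ((1 : Matrix _ _ ℝ) i j - Q i j)) * x j) := by
            simp only [dotProduct, Matrix.mulVec]
            apply Finset.sum_congr rfl; intro i _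
            congr 1
            exact Finset.sum_congr rfl fun j _ => by rw [hGe]
        _ = ∑ i, (m i.1 * x i ^ 2 - ∑ j, (m i.1 * Q i j) * (x i * x j)) := by
            apply Finset.sum_congr rfl; intro i _
            rw [hinner, mul_sub]
            congr 1
            · ring
            · rw [Finset.mul_sum]
              exact Finset.sum_congr rfl fun j _ => by ring
        _ = _ := Finset.sum_sub_distrib _ _
    -- names for the pieces
    set S1 : ℝ := ∑ i : EmphIdx p π γf lf d iF, m i.1 * x i ^ 2 with hS1
    set S2 : ℝ := ∑ i : EmphIdx p π γf lf d iF,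
      ∑ j : EmphIdx p π γf lf d iF, (m i.1 * Q i j) * (x i * x j) with hS2
    set A3 : ℝ := ∑ i : EmphIdx p π γf lf d iF,
      (m i.1 * (∑ j, Q i j)) * x i ^ 2 with hA3
    set A4 : ℝ := ∑ j : EmphIdx p π γf lf d iF, (m j.1 - di j.1) * x j ^ 2 with hA4
    set A5 : ℝ := ∑ i : EmphIdx p π γf lf d iF,
      ∑ j : EmphIdx p π γf lf d iF, (m i.1 * Q i j) * (x i - x j) ^ 2 with hA5
    set g1 : ℝ := ∑ i : EmphIdx p π γf lf d iF,
      (m i.1 * (1 - ∑ j, Q i j)) * x i ^ 2 with hg1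
    set g2 : ℝ := ∑ j : EmphIdx p π γf lf d iF, di j.1 * x j ^ 2 with hg2
    -- algebraic identities
    have e1 : g1 = S1 - A3 := by
      rw [hg1, hS1, hA3, ← Finset.sum_sub_distrib]
      exact Finset.sum_congr rfl fun i _ => by ring
    have e2 : A4 = S1 - g2 := by
      rw [hA4, hS1, hg2, ← Finset.sum_sub_distrib]
      exact Finset.sum_congr rfl fun j _ => by ring
    have e3 : A5 = A3 - 2 * S2 + A4 := by
      have inner5 : ∀ i : EmphIdx p π γf lf d iF,
          ∑ j, (m i.1 * Q i j) * (x i - x j) ^ 2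
            = ((m i.1 * (∑ j, Q i j)) * x i ^ 2
              - 2 * (∑ j, (m i.1 * Q i j) * (x i * x j)))
              + ∑ j, (m i.1 * Q i j) * x j ^ 2 := by
        intro i
        rw [show (∑ j, (m i.1 * Q i j) * (x i - x j) ^ 2)
            = ∑ j, (((m i.1 * Q i j) * x i ^ 2 - 2 * ((m i.1 * Q i j) * (x i * x j)))
                + (m i.1 * Q i j) * x j ^ 2) from
          Finset.sum_congr rfl fun j _ => by ring, Finset.sum_add_distrib,
          Finset.sum_sub_distrib]
        have t1 : ∑ j : EmphIdx p π γf lf d iF, (m i.1 * Q i j) * x i ^ 2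
            = (m i.1 * (∑ j, Q i j)) * x i ^ 2 := by
          rw [Finset.mul_sum, Finset.sum_mul]
        have t2 : ∑ j : EmphIdx p π γf lf d iF, 2 * ((m i.1 * Q i j) * (x i * x j))
            = 2 * ∑ j, (m i.1 * Q i j) * (x i * x j) := (Finset.mul_sum _ _ _).symm
        rw [show (∑ j : EmphIdx p π γf lf d iF, 2 * ((m i.1 * Q i j) * (x i * x j)))
            = ∑ j : EmphIdx p π γf lf d iF, (2 * ((m i.1 * Q i j) * (x i * x j))) from rfl]
            at t2
        rw [t1, t2]
      have hA4' : A4 = ∑ i : EmphIdx p π γf lf d iF,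
          ∑ j : EmphIdx p π γf lf d iF, (m i.1 * Q i j) * x j ^ 2 := by
        rw [hA4, Finset.sum_comm]
        apply Finset.sum_congr rfl; intro j _
        rw [← hQcol j, Finset.sum_mul]
      rw [hA5, Finset.sum_congr rfl fun i _ => inner5 i, Finset.sum_add_distrib,
        Finset.sum_sub_distrib, ← hA3, ← Finset.mul_sum, ← hS2, ← hA4']
    have e4 : x ⬝ᵥ (Mhat p π γf lf d iF * (1 - Q)) *ᵥ x = S1 - S2 := hq
    -- nonnegativity of the pieces
    have hg1nn : ∀ i ∈ Finset.univ, (0:ℝ) ≤ (m i.1 * (1 - ∑ j, Q i j)) * x i ^ 2 := by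
      intro i _
      apply mul_nonneg _ (sq_nonneg _)
      apply mul_nonneg (le_of_lt (hmpos i))
      linarith [hQrow i]
    have hg2nn : ∀ j ∈ Finset.univ, (0:ℝ) ≤ di j.1 * x j ^ 2 := fun j _ =>
      mul_nonneg (hdi0 j.1) (sq_nonneg _)
    have hA5inn : ∀ i : EmphIdx p π γf lf d iF, ∀ j ∈ Finset.univ,
        (0:ℝ) ≤ (m i.1 * Q i j) * (x i - x j) ^ 2 := fun i j _ =>
      mul_nonneg (mul_nonneg (le_of_lt (hmpos i)) (hQ0 i j)) (sq_nonneg _)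
    have hA5nn : ∀ i ∈ Finset.univ, (0:ℝ) ≤
        ∑ j : EmphIdx p π γf lf d iF, (m i.1 * Q i j) * (x i - x j) ^ 2 := fun i _ =>
      Finset.sum_nonneg (hA5inn i)
    have hg1' : 0 ≤ g1 := Finset.sum_nonneg hg1nn
    have hg2' : 0 ≤ g2 := Finset.sum_nonneg hg2nn
    have hA5' : 0 ≤ A5 := Finset.sum_nonneg hA5nn
    -- strict positivity
    by_contra hq0
    push_neg at hq0
    rw [e4] at hq0
    have hzero : g1 = 0 ∧ g2 = 0 ∧ A5 = 0 := by
      constructor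
      · linarith
      constructor
      · linarith
      · linarith
    obtain ⟨hz1, hz2, hz5⟩ := hzero
    obtain ⟨k, hk⟩ := Function.ne_iff.mp hx
    have hkmem : k ∈ Finset.univ.filter (fun i : EmphIdx p π γf lf d iF => x i ≠ 0) := by
      simpa using hk
    -- each term of g1 vanishes
    have hterm1 : ∀ i : EmphIdx p π γf lf d iF, (m i.1 * (1 - ∑ j, Q i j)) * x i ^ 2 = 0 :=
      fun i => (Finset.sum_eq_zero_iff_of_nonneg hg1nn).mp hz1.symm.symm i (Finset.mem_univ i)
    have hterm5 : ∀ i j : EmphIdx p π γf lf d iF, (m i.1 * Q i j) * (x i - x j) ^ 2 = 0 := by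
      intro i j
      have hin := (Finset.sum_eq_zero_iff_of_nonneg hA5nn).mp hz5 i (Finset.mem_univ i)
      exact (Finset.sum_eq_zero_iff_of_nonneg (hA5inn i)).mp hin j (Finset.mem_univ j)
    -- states with x ≠ 0 form a closed stochastic set
    have hcss : ∀ i ∈ Finset.univ.filter (fun i : EmphIdx p π γf lf d iF => x i ≠ 0),
        ∑ j ∈ Finset.univ.filter (fun i : EmphIdx p π γf lf d iF => x i ≠ 0), Q i j = 1 := by
      intro i hi
      have hxi : x i ≠ 0 := (Finset.mem_filter.mp hi).2
      have hxi2 : x i ^ 2 ≠ 0 := pow_ne_zero 2 hxi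
      have hrow1 : ∑ j, Q i j = 1 := by
        rcases mul_eq_zero.mp (hterm1 i) with h | h
        · rcases mul_eq_zero.mp h with h' | h'
          · exact absurd h' (ne_of_gt (hmpos i))
          · linarith
        · exact absurd h hxi2
      have hout : ∑ j ∈ Finset.univ.filter
          (fun j : EmphIdx p π γf lf d iF => ¬ x j ≠ 0), Q i j = 0 := by
        apply Finset.sum_eq_zero
        intro j hj
        have hxj : x j = 0 := not_not.mp (Finset.mem_filter.mp hj).2
        have hdiff : (x i - x j) ^ 2 ≠ 0 := by
          rw [hxj, sub_zero]
          exact hxi2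
        rcases mul_eq_zero.mp (hterm5 i j) with h | h
        · rcases mul_eq_zero.mp h with h' | h'
          · exact absurd h' (ne_of_gt (hmpos i))
          · exact h'
        · exact absurd h hdiff
      have := Finset.sum_filter_add_sum_filter_not Finset.univ
        (fun j : EmphIdx p π γf lf d iF => x j ≠ 0) (fun j => Q i j)
      rw [hout, add_zero] at this
      rw [this, hrow1]
    have hdet0 : (1 - Q).det = 0 := css_det_zero _ hQ0 hQrow _ ⟨k, hkmem⟩ hcss
    rw [hdet0] at hQdetu
    exact (isUnit_iff_ne_zero.mp hQdetu) rfl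
  · -- diag(M̂) = d̂ᵀ (1 - Q̂)⁻¹
    have hfin : Matrix.vecMul (fun s : EmphIdx p π γf lf d iF => d s.1 * iF s.1) (1 - Q)⁻¹
        = fun s => m s.1 := by
      have hdq : (fun s : EmphIdx p π γf lf d iF => d s.1 * iF s.1)
          = Matrix.vecMul (fun s : EmphIdx p π γf lf d iF => m s.1) (1 - Q) := by
        rw [hQvm]
      rw [hdq, Matrix.vecMul_vecMul, Matrix.mul_nonsing_inv _ hQdetu, Matrix.vecMul_one]
    intro s
    exact (congrFun hfin s).symm

end ETD13
end
end
end

section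
/- Let Assumption 1 hold and suppose i(s) > 0 for at least one state s ∈ 𝒮. Then the matrix C satisfies: (i) range(C) = range(Cᵀ) = span{φ(s) : s ∈ 𝒥₁}; and (ii) there exists c > 0 such that xᵀCx ≤ −c|x|² for all x ∈ span{φ(s) : s ∈ 𝒥₁}. -/
/-!
Statement 14 (Prop. 5.1): under Assumption 1 and with i(s) > 0 for at least one state,
the matrix C satisfies (i) range(C) = range(Cᵀ) = span{φ(s) : s ∈ 𝒥₁}, and
(ii) there is c > 0 with xᵀCx ≤ −c|x|² for all x ∈ span{φ(s) : s ∈ 𝒥₁}.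
-/

open Matrix
open scoped Classical

noncomputable section
namespace ETD14

def Pmat {N M : ℕ} (p : Fin N → Fin M → Fin N → ℝ) (pol : Fin N → Fin M → ℝ) :
    Matrix (Fin N) (Fin N) ℝ :=
  Matrix.of fun s s' => ∑ a, pol s a * p s a s'

def Plam {N M : ℕ} (p : Fin N → Fin M → Fin N → ℝ) (pol : Fin N → Fin M → ℝ)
    (γf lf : Fin N → ℝ) : Matrix (Fin N) (Fin N) ℝ :=
  1 - (1 - Pmat p pol * Matrix.diagonal γf * Matrix.diagonal lf)⁻¹ *
      (1 - Pmat p pol * Matrix.diagonal γf)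

def MbarDiag {N M : ℕ} (p : Fin N → Fin M → Fin N → ℝ) (pol : Fin N → Fin M → ℝ)
    (γf lf d iF : Fin N → ℝ) : Fin N → ℝ :=
  Matrix.vecMul (fun s => d s * iF s) (1 - Plam p pol γf lf)⁻¹

def Cmat {N M n : ℕ} (p : Fin N → Fin M → Fin N → ℝ) (pol : Fin N → Fin M → ℝ)
    (γf lf d iF : Fin N → ℝ) (Φ : Matrix (Fin N) (Fin n) ℝ) : Matrix (Fin n) (Fin n) ℝ :=
  -(Φᵀ * Matrix.diagonal (MbarDiag p pol γf lf d iF) * (1 - Plam p pol γf lf) * Φ)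

section Aux

variable {ι : Type*} [Fintype ι] [DecidableEq ι]

/-- If `T` is entrywise nonnegative with row sums ≤ 1 and `1 - T` is invertible,
then any solution of `(1-T) x = b` with `b ≥ 0` is nonnegative. -/
lemma nonneg_solution (T : Matrix ι ι ℝ) (hT0 : ∀ s t, 0 ≤ T s t)
    (hTrow : ∀ s, ∑ t, T s t ≤ 1) (hU : IsUnit (1 - T))
    (x b : ι → ℝ) (hxb : (1 - T) *ᵥ x = b) (hb : ∀ s, 0 ≤ b s) :
    ∀ s, 0 ≤ x s := by
  by_contra hneg
  push_neg at hneg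
  obtain ⟨s₁, hs₁⟩ := hneg
  have hne : (Finset.univ : Finset ι).Nonempty := ⟨s₁, Finset.mem_univ _⟩
  obtain ⟨s₀, -, hmin⟩ := Finset.exists_min_image Finset.univ x hne
  set μ := x s₀ with hμdef
  have hμmin : ∀ t, μ ≤ x t := fun t => hmin t (Finset.mem_univ t)
  have hμneg : μ < 0 := lt_of_le_of_lt (hμmin s₁) hs₁
  -- basic equation at a state s
  have heq : ∀ s, x s - ∑ t, T s t * x t = b s := by
    intro s
    have h := congrFun hxb s
    simp only [Matrix.sub_mulVec, Pi.sub_apply, Matrix.one_mulVec] at h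
    have h2 : (T *ᵥ x) s = ∑ t, T s t * x t := by simp [Matrix.mulVec, dotProduct]
    rw [h2] at h
    exact h
  set U : Finset ι := Finset.univ.filter (fun s => x s = μ) with hUdef
  have hUne : s₀ ∈ U := by simp [hUdef, hμdef]
  -- key facts for s ∈ U
  have key : ∀ s ∈ U, (∀ t, T s t ≠ 0 → t ∈ U) ∧ ∑ t, T s t = 1 := by
    intro s hs
    have hxs : x s = μ := by simpa [hUdef] using hs
    have hS : ∑ t, T s t * μ ≤ ∑ t, T s t * x t :=
      Finset.sum_le_sum fun t _ => mul_le_mul_of_nonneg_left (hμmin t) (hT0 s t)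
    have hS2 : (∑ t, T s t) * μ = ∑ t, T s t * μ := by rw [Finset.sum_mul]
    have hrowμ : μ ≤ (∑ t, T s t) * μ := by
      nlinarith [hTrow s, hμneg]
    have hbs : b s ≤ 0 := by
      have := heq s
      nlinarith [hS, hrowμ]
    have hbs0 : b s = 0 := le_antisymm hbs (hb s)
    have hSeq : ∑ t, T s t * x t = μ := by
      have := heq s; rw [hbs0] at this; linarith [hxs]
    have hrow1 : (∑ t, T s t) * μ = μ := by
      have h2 : (∑ t, T s t) * μ ≤ μ := by rw [hS2]; linarith [hS, hSeq]
      linarith [hrowμ]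
    have hrow : ∑ t, T s t = 1 := by
      have := mul_right_cancel₀ (ne_of_lt hμneg) (by rw [hrow1, one_mul] : (∑ t, T s t) * μ = 1 * μ)
      exact this
    refine ⟨?_, hrow⟩
    -- each term T s t * (x t - μ) = 0
    have hsum0 : ∑ t, T s t * (x t - μ) = 0 := by
      have : ∑ t, T s t * (x t - μ) = (∑ t, T s t * x t) - (∑ t, T s t) * μ := by
        rw [Finset.sum_mul]; rw [← Finset.sum_sub_distrib]; congr 1; ext t; ring
      rw [this, hSeq, hrow1]; ring
    have hterm : ∀ t ∈ Finset.univ, T s t * (x t - μ) = 0 := by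
      rw [← Finset.sum_eq_zero_iff_of_nonneg]
      · exact hsum0
      · intro t _
        exact mul_nonneg (hT0 s t) (by linarith [hμmin t])
    intro t hTst
    have := hterm t (Finset.mem_univ t)
    have hx : x t - μ = 0 := by
      rcases mul_eq_zero.mp this with h | h
      · exact absurd h hTst
      · exact h
    simp [hUdef]; linarith [hx]
  -- build a nonzero left-kernel vector of 1 - T
  have hκne : Nonempty {a : ι // a ∈ U} := ⟨⟨s₀, hUne⟩⟩
  set T' : Matrix {a : ι // a ∈ U} {a : ι // a ∈ U} ℝ := Matrix.of (fun a b => T a b) with hT'def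
  have hdet : ((1 : Matrix {a : ι // a ∈ U} {a : ι // a ∈ U} ℝ) - T').det = 0 := by
    rw [← Matrix.exists_mulVec_eq_zero_iff]
    refine ⟨fun _ => 1, ?_, ?_⟩
    · intro h
      have := congrFun h hκne.some
      simp at this
    · ext a
      have hrow := (key a a.2).2
      have hsubU : ∑ t ∈ U, T a t = ∑ t, T a t := by
        apply Finset.sum_subset (Finset.subset_univ U)
        intro t _ htU
        by_contra h
        exact htU ((key a a.2).1 t h)
      have hsub : ∑ t : {a : ι // a ∈ U}, T a t = ∑ t, T a t := by
        rw [Finset.sum_coe_sort U (fun t => T a t)]; exact hsubU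
      have hmv : ((1 - T') *ᵥ fun _ => (1:ℝ)) a = 1 - ∑ t : {a : ι // a ∈ U}, T a t := by
        simp [Matrix.sub_mulVec, Matrix.one_mulVec, Matrix.mulVec, dotProduct, hT'def,
          Matrix.one_apply, Finset.sum_ite_eq, Finset.mem_attach]
      rw [hmv, hsub, hrow, Pi.zero_apply, sub_self]
  have hdetT : ((1 : Matrix {a : ι // a ∈ U} {a : ι // a ∈ U} ℝ) - T')ᵀ.det = 0 := by
    rw [Matrix.det_transpose]; exact hdet
  obtain ⟨u, hu0, hu⟩ := Matrix.exists_mulVec_eq_zero_iff.mpr hdetT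
  have huvm : u ᵥ* ((1 : Matrix {a : ι // a ∈ U} {a : ι // a ∈ U} ℝ) - T') = 0 := by
    rw [← Matrix.mulVec_transpose]; exact hu
  set w : ι → ℝ := fun s => if h : s ∈ U then u ⟨s, h⟩ else 0 with hwdef
  have hwker : w ᵥ* (1 - T) = 0 := by
    ext t
    have hcol : (w ᵥ* (1 - T)) t = ∑ s, w s * ((1 : Matrix ι ι ℝ) s t - T s t) := by
      simp [Matrix.vecMul, dotProduct, Matrix.sub_apply]
    rw [hcol]
    simp only [Pi.zero_apply]
    have hsplit : ∑ s, w s * ((1 : Matrix ι ι ℝ) s t - T s t)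
        = ∑ s ∈ U, w s * ((1 : Matrix ι ι ℝ) s t - T s t) := by
      symm
      apply Finset.sum_subset (Finset.subset_univ U)
      intro s _ hsU
      simp [hwdef, hsU]
    rw [hsplit]
    by_cases htU : t ∈ U
    · have := congrFun huvm ⟨t, htU⟩
      simp only [Matrix.vecMul, dotProduct, Pi.zero_apply] at this
      rw [← Finset.sum_coe_sort U (fun s => w s * ((1 : Matrix ι ι ℝ) s t - T s t))]
      rw [← this]
      apply Finset.sum_congr rfl
      intro a _
      simp [hwdef, dif_pos a.2, Matrix.sub_apply, Matrix.one_apply, hT'def,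
        Subtype.ext_iff]
    · apply Finset.sum_eq_zero
      intro s hsU
      have h1 : (1 : Matrix ι ι ℝ) s t = 0 := by
        rw [Matrix.one_apply]
        simp only [ite_eq_right_iff]
        intro h; subst h; exact absurd hsU htU
      have h2 : T s t = 0 := by
        by_contra h
        exact htU ((key s hsU).1 t h)
      rw [h1, h2]; ring
  have hw0 : w = 0 := by
    have : w ᵥ* ((1 - T) * (1 - T)⁻¹) = 0 ᵥ* (1 - T)⁻¹ := by
      rw [← Matrix.vecMul_vecMul, hwker]
    rw [Matrix.mul_nonsing_inv _ ((Matrix.isUnit_iff_isUnit_det _).mp hU), Matrix.vecMul_one,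
      Matrix.zero_vecMul] at this
    exact this
  obtain ⟨a, ha⟩ := Function.ne_iff.mp hu0
  have : w a = u a := by simp [hwdef, a.2]
  rw [hw0] at this
  exact ha (by simpa using this.symm)

/-- entrywise nonnegativity of `(1-T)⁻¹`. -/
lemma inv_one_sub_nonneg (T : Matrix ι ι ℝ) (hT0 : ∀ s t, 0 ≤ T s t)
    (hTrow : ∀ s, ∑ t, T s t ≤ 1) (hU : IsUnit (1 - T)) :
    ∀ i j, 0 ≤ (1 - T)⁻¹ i j := by
  intro i j
  have hx : (1 - T) *ᵥ (fun k => (1 - T)⁻¹ k j) = fun k => (1 : Matrix ι ι ℝ) k j := by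
    ext k
    have : ((1 - T) * (1 - T)⁻¹) k j = (1 : Matrix ι ι ℝ) k j := by
      rw [Matrix.mul_nonsing_inv _ ((Matrix.isUnit_iff_isUnit_det _).mp hU)]
    simpa [Matrix.mul_apply, Matrix.mulVec, dotProduct] using this
  exact nonneg_solution T hT0 hTrow hU _ _ hx
    (fun s => by rw [Matrix.one_apply]; positivity) i


variable {N n : ℕ}

lemma quad_identity (P : Matrix (Fin N) (Fin N) ℝ) (m dI : Fin N → ℝ)
    (hbal : ∀ s, m s = dI s + ∑ t, m t * P t s) (y : Fin N → ℝ) :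
    2 * (y ⬝ᵥ (Matrix.diagonal m * (1 - P)) *ᵥ y)
      = (∑ s, (m s * (1 - ∑ t, P s t) + dI s) * y s ^ 2)
        + ∑ s, ∑ t, m s * P s t * (y s - y t) ^ 2 := by
  have hA : ∀ s, ((Matrix.diagonal m * (1 - P)) *ᵥ y) s
      = m s * y s - ∑ t, m s * P s t * y t := by
    intro s
    have hterm : ∀ x, (Matrix.diagonal m * (1 - P)) s x * y x
        = (if s = x then m s * y x else 0) - m s * P s x * y x := by
      intro x
      simp only [Matrix.diagonal_mul, Matrix.sub_apply, Matrix.one_apply]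
      split_ifs <;> ring
    have hmv : ((Matrix.diagonal m * (1 - P)) *ᵥ y) s
        = ∑ x, (Matrix.diagonal m * (1 - P)) s x * y x := by
      simp [Matrix.mulVec, dotProduct]
    rw [hmv, Finset.sum_congr rfl fun x _ => hterm x, Finset.sum_sub_distrib,
      Finset.sum_ite_eq Finset.univ s (fun t => m s * y t)]
    simp only [Finset.mem_univ, if_true]
  have hLHS : y ⬝ᵥ (Matrix.diagonal m * (1 - P)) *ᵥ y
      = (∑ s, m s * y s ^ 2) - ∑ s, ∑ t, m s * P s t * y s * y t := by
    have hterm : ∀ s, y s * ((Matrix.diagonal m * (1 - P)) *ᵥ y) s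
        = m s * y s ^ 2 - ∑ t, m s * P s t * y s * y t := by
      intro s
      rw [hA s, mul_sub, Finset.mul_sum]
      congr 1
      · ring
      · apply Finset.sum_congr rfl; intro t _; ring
    simp only [dotProduct]
    rw [Finset.sum_congr rfl fun s _ => hterm s, Finset.sum_sub_distrib]
  -- expand the RHS
  have hsq : ∑ s, ∑ t, m s * P s t * (y s - y t) ^ 2
      = (∑ s, (m s * ∑ t, P s t) * y s ^ 2)
        - 2 * (∑ s, ∑ t, m s * P s t * y s * y t)
        + ∑ t, (∑ s, m s * P s t) * y t ^ 2 := by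
    have h1 : ∀ s, ∑ t, m s * P s t * (y s - y t) ^ 2
        = (m s * ∑ t, P s t) * y s ^ 2 - 2 * (∑ t, m s * P s t * y s * y t)
          + ∑ t, m s * P s t * y t ^ 2 := by
      intro s
      rw [Finset.mul_sum, Finset.sum_mul, Finset.mul_sum, ← Finset.sum_sub_distrib,
        ← Finset.sum_add_distrib]
      apply Finset.sum_congr rfl; intro t _; ring
    rw [Finset.sum_congr rfl (fun s _ => h1 s), Finset.sum_add_distrib,
      Finset.sum_sub_distrib, ← Finset.mul_sum]
    congr 1
    rw [Finset.sum_comm]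
    apply Finset.sum_congr rfl; intro t _
    rw [Finset.sum_mul]
  have hcol : ∀ t, (∑ s, m s * P s t) * y t ^ 2 = (m t - dI t) * y t ^ 2 := by
    intro t
    have := hbal t
    have h : ∑ s, m s * P s t = m t - dI t := by linarith
    rw [h]
  have hr : ∑ s, (m s * (1 - ∑ t, P s t) + dI s) * y s ^ 2
      = (∑ s, m s * y s ^ 2) - (∑ s, (m s * ∑ t, P s t) * y s ^ 2)
        + ∑ s, dI s * y s ^ 2 := by
    rw [← Finset.sum_sub_distrib, ← Finset.sum_add_distrib]
    apply Finset.sum_congr rfl; intro s _; ring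
  have hsplit : ∑ t, (m t - dI t) * y t ^ 2
      = (∑ t, m t * y t ^ 2) - ∑ t, dI t * y t ^ 2 := by
    rw [← Finset.sum_sub_distrib]
    apply Finset.sum_congr rfl; intro t _; ring
  rw [hLHS, hsq, hr, Finset.sum_congr rfl (fun t _ => hcol t), hsplit]
  ring


lemma col_zero (P : Matrix (Fin N) (Fin N) ℝ) (m dI : Fin N → ℝ)
    (hP0 : ∀ s t, 0 ≤ P s t) (hm0 : ∀ s, 0 ≤ m s) (hdI : ∀ s, 0 ≤ dI s)
    (hbal : ∀ s, m s = dI s + ∑ t, m t * P t s) :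
    ∀ t, m t = 0 → dI t = 0 ∧ ∀ s, m s * P s t = 0 := by
  intro t hmt
  have h := hbal t
  rw [hmt] at h
  have hnn : 0 ≤ ∑ s, m s * P s t := Finset.sum_nonneg (fun s _ =>
    mul_nonneg (hm0 s) (hP0 s t))
  have hsum0 : ∑ s, m s * P s t = 0 := by linarith [hdI t]
  refine ⟨by linarith, ?_⟩
  intro s
  exact (Finset.sum_eq_zero_iff_of_nonneg (fun s _ =>
    mul_nonneg (hm0 s) (hP0 s t))).mp hsum0 s (Finset.mem_univ s)

lemma vanish_on_J (P : Matrix (Fin N) (Fin N) ℝ) (m dI : Fin N → ℝ)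
    (hP0 : ∀ s t, 0 ≤ P s t) (hProw : ∀ s, ∑ t, P s t ≤ 1)
    (hm0 : ∀ s, 0 ≤ m s) (hdI : ∀ s, 0 ≤ dI s)
    (hbal : ∀ s, m s = dI s + ∑ t, m t * P t s)
    (hker : ∀ w : Fin N → ℝ, w ᵥ* (1 - P) = 0 → w = 0)
    (y : Fin N → ℝ)
    (hr : ∀ s, (m s * (1 - ∑ t, P s t) + dI s) * y s ^ 2 = 0)
    (hedge : ∀ s t, m s * P s t * (y s - y t) ^ 2 = 0) :
    ∀ s, 0 < m s → y s = 0 := by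
  by_contra hcon
  push_neg at hcon
  obtain ⟨s₁, hms₁, hys₁⟩ := hcon
  set U : Finset (Fin N) := Finset.univ.filter (fun s => 0 < m s ∧ y s ≠ 0) with hUdef
  have hs₁U : s₁ ∈ U := by simp [hUdef, hms₁, hys₁]
  have hUprop : ∀ s ∈ U, 0 < m s ∧ y s ≠ 0 := by
    intro s hs; simpa [hUdef] using hs
  have hdIU : ∀ s ∈ U, dI s = 0 := by
    intro s hs
    obtain ⟨hms, hys⟩ := hUprop s hs
    have h0 : m s * (1 - ∑ t, P s t) + dI s = 0 := by
      rcases mul_eq_zero.mp (hr s) with h | h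
      · exact h
      · exact absurd (pow_eq_zero_iff (by norm_num)|>.mp h) hys
    have h1 : 0 ≤ m s * (1 - ∑ t, P s t) := mul_nonneg (hm0 s) (by linarith [hProw s])
    linarith [hdI s]
  have hedge0 : ∀ s t, 0 < m s → P s t ≠ 0 → y t = y s := by
    intro s t hms hPst
    have hmP : m s * P s t ≠ 0 :=
      ne_of_gt (mul_pos hms (lt_of_le_of_ne (hP0 s t) (Ne.symm hPst)))
    rcases mul_eq_zero.mp (hedge s t) with h | h
    · exact absurd h hmP
    · have h2 := pow_eq_zero_iff (n := 2) (by norm_num) |>.mp h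
      linarith [h2]
  set w : Fin N → ℝ := fun s => if s ∈ U then m s else 0 with hwdef
  have hwker : w ᵥ* (1 - P) = 0 := by
    ext t
    have hcol : (w ᵥ* (1 - P)) t = ∑ s, w s * ((1 : Matrix (Fin N) (Fin N) ℝ) s t - P s t) := by
      simp [Matrix.vecMul, dotProduct, Matrix.sub_apply]
    rw [hcol]
    simp only [Pi.zero_apply]
    have hsplit : ∑ s, w s * ((1 : Matrix (Fin N) (Fin N) ℝ) s t - P s t)
        = ∑ s ∈ U, m s * ((1 : Matrix (Fin N) (Fin N) ℝ) s t - P s t) := by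
      rw [← Finset.sum_subset (Finset.subset_univ U)
        (fun s _ hsU => by simp [hwdef, hsU])]
      apply Finset.sum_congr rfl
      intro s hs
      simp [hwdef, hs]
    rw [hsplit]
    by_cases htU : t ∈ U
    · have hone : ∑ s ∈ U, m s * (1 : Matrix (Fin N) (Fin N) ℝ) s t = m t := by
        have : ∀ s ∈ U, m s * (1 : Matrix (Fin N) (Fin N) ℝ) s t
            = if s = t then m s else 0 := by
          intro s _
          rw [Matrix.one_apply]
          split_ifs <;> ring
        rw [Finset.sum_congr rfl this, Finset.sum_ite_eq' U t m]
        simp [htU]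
      have hPfull : ∑ s ∈ U, m s * P s t = ∑ s, m s * P s t := by
        apply Finset.sum_subset (Finset.subset_univ U)
        intro s _ hsU
        by_cases hms : m s = 0
        · rw [hms]; ring
        · have hms' : 0 < m s := lt_of_le_of_ne (hm0 s) (Ne.symm hms)
          have hys : y s = 0 := by
            by_contra hys
            exact hsU (by simp [hUdef, hms', hys])
          by_cases hPst : P s t = 0
          · rw [hPst]; ring
          · have hyt := hedge0 s t hms' hPst
            rw [hys] at hyt
            exact absurd hyt (hUprop t htU).2
      have hbalt : ∑ s, m s * P s t = m t := by
        have h1 := hbal t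
        have h2 := hdIU t htU
        linarith
      have hexp : ∑ s ∈ U, m s * ((1 : Matrix (Fin N) (Fin N) ℝ) s t - P s t)
          = (∑ s ∈ U, m s * (1 : Matrix (Fin N) (Fin N) ℝ) s t)
            - ∑ s ∈ U, m s * P s t := by
        rw [← Finset.sum_sub_distrib]
        apply Finset.sum_congr rfl; intro s _; ring
      rw [hexp, hone, hPfull, hbalt, sub_self]
    · apply Finset.sum_eq_zero
      intro s hsU
      obtain ⟨hms, hys⟩ := hUprop s hsU
      have h1 : (1 : Matrix (Fin N) (Fin N) ℝ) s t = 0 := by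
        rw [Matrix.one_apply, if_neg]
        intro h; subst h; exact htU hsU
      have h2 : P s t = 0 := by
        by_contra hPst
        have hyt := hedge0 s t hms hPst
        have hyt0 : y t ≠ 0 := by rw [hyt]; exact hys
        have hmt : 0 < m t := by
          have hterm : m s * P s t ≤ ∑ u, m u * P u t := by
            apply Finset.single_le_sum (fun u _ => mul_nonneg (hm0 u) (hP0 u t))
              (Finset.mem_univ s)
          have := hbal t
          have hpos : 0 < m s * P s t :=
            mul_pos hms (lt_of_le_of_ne (hP0 s t) (Ne.symm hPst))
          nlinarith [hdI t]
        exact htU (by simp [hUdef, hmt, hyt0])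
      rw [h1, h2]; ring
  have hw0 := hker w hwker
  have : w s₁ = m s₁ := by simp [hwdef, hs₁U]
  rw [hw0] at this
  exact (ne_of_gt hms₁) (by simpa using this.symm)


/-- Main structural result, in terms of abstract `P`, `m`, `dI`. -/
theorem main_structure (P : Matrix (Fin N) (Fin N) ℝ) (m dI : Fin N → ℝ)
    (Φ : Matrix (Fin N) (Fin n) ℝ)
    (hP0 : ∀ s t, 0 ≤ P s t) (hProw : ∀ s, ∑ t, P s t ≤ 1)
    (hm0 : ∀ s, 0 ≤ m s) (hdI : ∀ s, 0 ≤ dI s)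
    (hbal : ∀ s, m s = dI s + ∑ t, m t * P t s)
    (hker : ∀ w : Fin N → ℝ, w ᵥ* (1 - P) = 0 → w = 0) :
    LinearMap.range (-(Φᵀ * Matrix.diagonal m * (1 - P) * Φ)).mulVecLin =
        Submodule.span ℝ {x : Fin n → ℝ | ∃ s : Fin N, 0 < m s ∧ x = (Φ s : Fin n → ℝ)} ∧
    LinearMap.range ((-(Φᵀ * Matrix.diagonal m * (1 - P) * Φ))ᵀ).mulVecLin =
        Submodule.span ℝ {x : Fin n → ℝ | ∃ s : Fin N, 0 < m s ∧ x = (Φ s : Fin n → ℝ)} ∧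
    ∃ c : ℝ, 0 < c ∧
      ∀ x : Fin n → ℝ,
        x ∈ Submodule.span ℝ {x : Fin n → ℝ | ∃ s : Fin N, 0 < m s ∧ x = (Φ s : Fin n → ℝ)} →
        x ⬝ᵥ (-(Φᵀ * Matrix.diagonal m * (1 - P) * Φ)).mulVec x ≤ -c * (x ⬝ᵥ x) := by
  set K : Matrix (Fin N) (Fin N) ℝ := 1 - P with hKdef
  set B : Matrix (Fin N) (Fin N) ℝ := Matrix.diagonal m * K with hBdef
  set C : Matrix (Fin n) (Fin n) ℝ := -(Φᵀ * Matrix.diagonal m * K * Φ) with hCdef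
  set Sp : Submodule ℝ (Fin n → ℝ) :=
    Submodule.span ℝ {x : Fin n → ℝ | ∃ s : Fin N, 0 < m s ∧ x = (Φ s : Fin n → ℝ)} with hSpdef
  -- mulVec formula
  have hCx : ∀ x : Fin n → ℝ, C *ᵥ x = Φᵀ *ᵥ (-(B *ᵥ (Φ *ᵥ x))) := by
    intro x
    rw [hCdef, Matrix.neg_mulVec, Matrix.mulVec_neg]
    congr 1
    rw [Matrix.mulVec_mulVec, Matrix.mulVec_mulVec, hBdef,
      Matrix.mul_assoc Φᵀ (Matrix.diagonal m) K]
  -- rows of B indexed outside J₁ vanish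
  have hBrow : ∀ (v : Fin N → ℝ) (s : Fin N), m s = 0 → (B *ᵥ v) s = 0 := by
    intro v s hms
    have : (B *ᵥ v) s = ∑ t, m s * K s t * v t := by
      simp [hBdef, Matrix.mulVec, dotProduct, Matrix.diagonal_mul]
    rw [this]
    apply Finset.sum_eq_zero
    intro t _
    rw [hms]; ring
  -- Φᵀ *ᵥ z as a linear combination of rows of Φ
  have hPhiT : ∀ z : Fin N → ℝ, Φᵀ *ᵥ z = ∑ s, z s • (Φ s : Fin n → ℝ) := by
    intro z
    ext j
    simp [Matrix.mulVec, dotProduct, Matrix.transpose_apply, Finset.sum_apply, mul_comm]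
  -- membership of C x in the span
  have hComb : ∀ z : Fin N → ℝ, (∀ s, m s = 0 → z s = 0) → Φᵀ *ᵥ z ∈ Sp := by
    intro z hz
    rw [hPhiT]
    apply Submodule.sum_mem
    intro s _
    by_cases hms : m s = 0
    · rw [hz s hms, zero_smul]; exact Submodule.zero_mem _
    · have : 0 < m s := lt_of_le_of_ne (hm0 s) (Ne.symm hms)
      exact Submodule.smul_mem _ _ (Submodule.subset_span ⟨s, this, rfl⟩)
  have hrange1 : ∀ x, C *ᵥ x ∈ Sp := by
    intro x
    rw [hCx]
    apply hComb
    intro s hms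
    rw [Pi.neg_apply, hBrow _ s hms, neg_zero]
  -- transpose
  have hCT : Cᵀ = -(Φᵀ * (Kᵀ * Matrix.diagonal m) * Φ) := by
    rw [hCdef, Matrix.transpose_neg, Matrix.transpose_mul, Matrix.transpose_mul,
      Matrix.transpose_mul, Matrix.diagonal_transpose, Matrix.transpose_transpose]
    simp only [Matrix.mul_assoc]
  have hBTrow : ∀ (v : Fin N → ℝ) (s : Fin N), m s = 0 → ((Kᵀ * Matrix.diagonal m) *ᵥ v) s = 0 := by
    intro v s hms
    have hcz := col_zero P m dI hP0 hm0 hdI hbal s hms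
    have : ((Kᵀ * Matrix.diagonal m) *ᵥ v) s = ∑ t, K t s * m t * v t := by
      simp [Matrix.mulVec, dotProduct, Matrix.mul_diagonal, Matrix.transpose_apply]
    rw [this]
    apply Finset.sum_eq_zero
    intro t _
    have hKts : K t s * m t = 0 := by
      rw [hKdef]
      by_cases hts : t = s
      · subst hts; simp [Matrix.sub_apply, Matrix.one_apply, hms]
      · have h1 : (1 - P) t s = -P t s := by
          simp [Matrix.sub_apply, Matrix.one_apply, hts]
        rw [h1]
        linear_combination -(hcz.2 t)
    rw [hKts, zero_mul]
  have hrangeT1 : ∀ x, Cᵀ *ᵥ x ∈ Sp := by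
    intro x
    have hform : Cᵀ *ᵥ x = Φᵀ *ᵥ (-((Kᵀ * Matrix.diagonal m) *ᵥ (Φ *ᵥ x))) := by
      rw [hCT, Matrix.neg_mulVec, Matrix.mulVec_neg]
      congr 1
      rw [Matrix.mulVec_mulVec, Matrix.mulVec_mulVec, Matrix.mul_assoc]
    rw [hform]
    apply hComb
    intro s hms
    rw [Pi.neg_apply, hBTrow _ s hms, neg_zero]
  -- quadratic form
  have hquad : ∀ x : Fin n → ℝ, x ⬝ᵥ C *ᵥ x = -((Φ *ᵥ x) ⬝ᵥ (B *ᵥ (Φ *ᵥ x))) := by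
    intro x
    rw [hCx, Matrix.mulVec_neg, dotProduct_neg]
    congr 1
    rw [Matrix.dotProduct_mulVec x Φᵀ, Matrix.vecMul_transpose]
  have hQnonneg : ∀ y : Fin N → ℝ, 0 ≤ y ⬝ᵥ (B *ᵥ y) := by
    intro y
    have hid := quad_identity P m dI hbal y
    have h1 : 0 ≤ ∑ s, (m s * (1 - ∑ t, P s t) + dI s) * y s ^ 2 :=
      Finset.sum_nonneg fun s _ => mul_nonneg
        (add_nonneg (mul_nonneg (hm0 s) (by linarith [hProw s])) (hdI s)) (sq_nonneg _)
    have h2 : 0 ≤ ∑ s, ∑ t, m s * P s t * (y s - y t) ^ 2 :=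
      Finset.sum_nonneg fun s _ => Finset.sum_nonneg fun t _ =>
        mul_nonneg (mul_nonneg (hm0 s) (hP0 s t)) (sq_nonneg _)
    rw [hBdef] at *
    nlinarith [hid]
  have hQzero : ∀ y : Fin N → ℝ, y ⬝ᵥ (B *ᵥ y) = 0 → ∀ s, 0 < m s → y s = 0 := by
    intro y hy
    have hid := quad_identity P m dI hbal y
    rw [hBdef] at hy
    rw [hy, mul_zero] at hid
    have h1 : ∀ s ∈ Finset.univ, (0:ℝ) ≤ (m s * (1 - ∑ t, P s t) + dI s) * y s ^ 2 :=
      fun s _ => mul_nonneg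
        (add_nonneg (mul_nonneg (hm0 s) (by linarith [hProw s])) (hdI s)) (sq_nonneg _)
    have h2 : ∀ s ∈ Finset.univ, (0:ℝ) ≤ ∑ t, m s * P s t * (y s - y t) ^ 2 :=
      fun s _ => Finset.sum_nonneg fun t _ =>
        mul_nonneg (mul_nonneg (hm0 s) (hP0 s t)) (sq_nonneg _)
    have hz1 : ∑ s, (m s * (1 - ∑ t, P s t) + dI s) * y s ^ 2 = 0 := by
      have hne1 := Finset.sum_nonneg h1
      have hne2 := Finset.sum_nonneg h2
      linarith
    have hz2 : ∑ s, ∑ t, m s * P s t * (y s - y t) ^ 2 = 0 := by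
      have hne1 := Finset.sum_nonneg h1
      have hne2 := Finset.sum_nonneg h2
      linarith
    have hr : ∀ s, (m s * (1 - ∑ t, P s t) + dI s) * y s ^ 2 = 0 :=
      fun s => (Finset.sum_eq_zero_iff_of_nonneg h1).mp hz1 s (Finset.mem_univ s)
    have hedge : ∀ s t, m s * P s t * (y s - y t) ^ 2 = 0 := by
      intro s t
      have hrow : ∑ t, m s * P s t * (y s - y t) ^ 2 = 0 :=
        (Finset.sum_eq_zero_iff_of_nonneg h2).mp hz2 s (Finset.mem_univ s)
      exact (Finset.sum_eq_zero_iff_of_nonneg fun t _ =>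
        mul_nonneg (mul_nonneg (hm0 s) (hP0 s t)) (sq_nonneg _)).mp hrow t (Finset.mem_univ t)
    exact vanish_on_J P m dI hP0 hProw hm0 hdI hbal hker y hr hedge
  -- perpendicularity: x ∈ Sp and Φ x vanishing on J₁ forces x = 0
  have hperp : ∀ x : Fin n → ℝ, x ∈ Sp → (∀ s, 0 < m s → (Φ *ᵥ x) s = 0) → x = 0 := by
    intro x hx hv
    let f : (Fin n → ℝ) →ₗ[ℝ] ℝ :=
      { toFun := fun v => v ⬝ᵥ x
        map_add' := fun a b => add_dotProduct a b x
        map_smul' := fun c a => smul_dotProduct c a x }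
    have hgen : {v : Fin n → ℝ | ∃ s : Fin N, 0 < m s ∧ v = (Φ s : Fin n → ℝ)}
        ⊆ (LinearMap.ker f : Set (Fin n → ℝ)) := by
      rintro v ⟨s, hms, rfl⟩
      have : (Φ s : Fin n → ℝ) ⬝ᵥ x = (Φ *ᵥ x) s := rfl
      simp only [SetLike.mem_coe, LinearMap.mem_ker]
      show (Φ s : Fin n → ℝ) ⬝ᵥ x = 0
      rw [this]
      exact hv s hms
    have hle : Sp ≤ LinearMap.ker f := by
      rw [hSpdef]
      exact Submodule.span_le.mpr hgen
    have : f x = 0 := hle hx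
    have hxx : x ⬝ᵥ x = 0 := this
    exact (dotProduct_self_eq_zero).mp hxx
  -- strict positivity on Sp
  have hposdef : ∀ x : Fin n → ℝ, x ∈ Sp → x ≠ 0 → 0 < -(x ⬝ᵥ C *ᵥ x) := by
    intro x hx hx0
    rw [hquad, neg_neg]
    rcases lt_or_eq_of_le (hQnonneg (Φ *ᵥ x)) with h | h
    · exact h
    · exfalso
      apply hx0
      apply hperp x hx
      exact hQzero (Φ *ᵥ x) h.symm
  -- injectivity of C on Sp, giving surjectivity
  have hCzero : ∀ x : Fin n → ℝ, x ∈ Sp → C *ᵥ x = 0 → x = 0 := by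
    intro x hx hCx0
    by_contra hx0
    have := hposdef x hx hx0
    rw [hCx0] at this
    simp at this
  have hrange_eq : ∀ (D : Matrix (Fin n) (Fin n) ℝ), (∀ x, D *ᵥ x ∈ Sp) →
      (∀ x ∈ Sp, D *ᵥ x = 0 → x = 0) → LinearMap.range D.mulVecLin = Sp := by
    intro D hDmem hDinj
    apply le_antisymm
    · rintro _ ⟨x, rfl⟩
      exact hDmem x
    · intro y hy
      let L : Sp →ₗ[ℝ] Sp := (D.mulVecLin).restrict (fun x hx => hDmem x)
      have hinj : Function.Injective L := by
        rw [← LinearMap.ker_eq_bot]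
        rw [LinearMap.ker_eq_bot']
        intro z hz
        have : D *ᵥ (z : Fin n → ℝ) = 0 := by
          have := congrArg (Subtype.val) hz
          exact this
        have := hDinj z z.2 this
        exact Subtype.ext (by simpa using this)
      have hsurj := (LinearMap.injective_iff_surjective).mp hinj
      obtain ⟨z, hz⟩ := hsurj ⟨y, hy⟩
      refine ⟨(z : Fin n → ℝ), ?_⟩
      have := congrArg (Subtype.val) hz
      exact this
  have hquadT : ∀ x : Fin n → ℝ, x ⬝ᵥ Cᵀ *ᵥ x = x ⬝ᵥ C *ᵥ x := by
    intro x
    rw [Matrix.mulVec_transpose, dotProduct_comm, Matrix.dotProduct_mulVec]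
  have hCTzero : ∀ x : Fin n → ℝ, x ∈ Sp → Cᵀ *ᵥ x = 0 → x = 0 := by
    intro x hx hCx0
    by_contra hx0
    have hp := hposdef x hx hx0
    rw [← hquadT x, hCx0] at hp
    simp at hp
  have hds : ∀ v : Fin n → ℝ, 0 ≤ v ⬝ᵥ v :=
    fun v => Finset.sum_nonneg fun i _ => mul_self_nonneg (v i)
  have hunit : ∀ v : Fin n → ℝ, 0 < v ⬝ᵥ v →
      ((Real.sqrt (v ⬝ᵥ v))⁻¹ • v) ⬝ᵥ ((Real.sqrt (v ⬝ᵥ v))⁻¹ • v) = 1 := by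
    intro v hvv
    have hsq : Real.sqrt (v ⬝ᵥ v) * Real.sqrt (v ⬝ᵥ v) = v ⬝ᵥ v :=
      Real.mul_self_sqrt (hds v)
    rw [smul_dotProduct, dotProduct_smul]
    simp only [smul_eq_mul]
    have h1 : (Real.sqrt (v ⬝ᵥ v))⁻¹ * ((Real.sqrt (v ⬝ᵥ v))⁻¹ * (v ⬝ᵥ v))
        = (Real.sqrt (v ⬝ᵥ v) * Real.sqrt (v ⬝ᵥ v))⁻¹ * (v ⬝ᵥ v) := by
      rw [mul_inv]; ring
    rw [h1, hsq]
    exact inv_mul_cancel₀ (ne_of_gt hvv)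
  refine ⟨hrange_eq C hrange1 hCzero, hrange_eq Cᵀ hrangeT1 hCTzero, ?_⟩
  -- the uniform constant
  by_cases hSp : Sp = ⊥
  · refine ⟨1, one_pos, ?_⟩
    intro x hx
    rw [hSp] at hx
    have : x = 0 := by simpa using hx
    subst this
    simp
  · -- compactness argument
    have hdotcont : Continuous fun x : Fin n → ℝ => x ⬝ᵥ x := by
      unfold dotProduct
      exact continuous_finset_sum _ fun i _ => (continuous_apply i).mul (continuous_apply i)
    have hgcont : Continuous fun x : Fin n → ℝ => -(x ⬝ᵥ C *ᵥ x) := by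
      apply Continuous.neg
      unfold dotProduct Matrix.mulVec dotProduct
      exact continuous_finset_sum _ fun i _ => (continuous_apply i).mul
        (continuous_finset_sum _ fun j _ => continuous_const.mul (continuous_apply j))
    set T : Set (Fin n → ℝ) := {x | x ∈ Sp ∧ x ⬝ᵥ x = 1} with hTdef
    have hTclosed : IsClosed T := by
      apply IsClosed.inter
      · exact Submodule.closed_of_finiteDimensional Sp
      · exact isClosed_eq hdotcont continuous_const
    have hTbdd : Bornology.IsBounded T := by
      apply Bornology.IsBounded.subset (Metric.isBounded_closedBall (x := (0 : Fin n → ℝ)) (r := 1))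
      intro x hx
      obtain ⟨-, hx1⟩ := hx
      simp only [Metric.mem_closedBall, dist_zero_right]
      rw [pi_norm_le_iff_of_nonneg zero_le_one]
      intro i
      have hterm : x i * x i ≤ 1 := by
        have := Finset.single_le_sum (f := fun j => x j * x j)
          (fun j _ => mul_self_nonneg (x j)) (Finset.mem_univ i)
        rw [show ∑ j, x j * x j = x ⬝ᵥ x from rfl, hx1] at this
        exact this
      rw [Real.norm_eq_abs]
      nlinarith [abs_nonneg (x i), abs_mul_abs_self (x i)]
    have hTcompact : IsCompact T := Metric.isCompact_of_isClosed_isBounded hTclosed hTbdd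
    have hTne : T.Nonempty := by
      obtain ⟨v, hv, hv0⟩ := Submodule.exists_mem_ne_zero_of_ne_bot hSp
      have hvv : 0 < v ⬝ᵥ v := by
        rcases lt_or_eq_of_le (hds v) with h | h
        · exact h
        · exact absurd (dotProduct_self_eq_zero.mp h.symm) hv0
      exact ⟨(Real.sqrt (v ⬝ᵥ v))⁻¹ • v, Submodule.smul_mem _ _ hv, hunit v hvv⟩
    obtain ⟨x₀, hx₀T, hmin⟩ := hTcompact.exists_isMinOn hTne hgcont.continuousOn
    have hx₀0 : x₀ ≠ 0 := by
      intro h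
      rw [h] at hx₀T
      obtain ⟨-, h1⟩ := hx₀T
      simp at h1
    set c : ℝ := -(x₀ ⬝ᵥ C *ᵥ x₀) with hcdef
    have hc0 : 0 < c := hposdef x₀ hx₀T.1 hx₀0
    refine ⟨c, hc0, ?_⟩
    intro x hx
    by_cases hx0 : x = 0
    · subst hx0; simp
    · have hxx : 0 < x ⬝ᵥ x := by
        rcases lt_or_eq_of_le (hds x) with h | h
        · exact h
        · exact absurd (dotProduct_self_eq_zero.mp h.symm) hx0
      set a : ℝ := Real.sqrt (x ⬝ᵥ x) with hadef
      have ha : 0 < a := Real.sqrt_pos.mpr hxx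
      have ha2 : a * a = x ⬝ᵥ x := Real.mul_self_sqrt (le_of_lt hxx)
      set u : Fin n → ℝ := a⁻¹ • x with hudef
      have huSp : u ∈ Sp := Submodule.smul_mem _ _ hx
      have huu : u ⬝ᵥ u = 1 := by
        rw [hudef, hadef]
        exact hunit x hxx
      have huT : u ∈ T := ⟨huSp, huu⟩
      have hmin_u : c ≤ -(u ⬝ᵥ C *ᵥ u) := hmin huT
      have hscale : x ⬝ᵥ C *ᵥ x = (a * a) * (u ⬝ᵥ C *ᵥ u) := by
        have hxau : x = a • u := by
          rw [hudef, smul_smul]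
          field_simp
          rw [one_smul]
        rw [hxau, Matrix.mulVec_smul, dotProduct_smul, smul_dotProduct]
        simp only [smul_eq_mul]
        ring
      rw [hscale, ha2]
      nlinarith [hmin_u, hxx]


theorem case_b {N : ℕ} (Pp : Matrix (Fin N) (Fin N) ℝ) (γf lf dI : Fin N → ℝ)
    (hPπ0 : ∀ s t, 0 ≤ Pp s t) (hPπrow : ∀ s, ∑ t, Pp s t = 1)
    (hγ : ∀ s, 0 ≤ γf s ∧ γf s ≤ 1) (hlf : ∀ s, 0 ≤ lf s ∧ lf s ≤ 1)
    (hdI : ∀ s, 0 ≤ dI s)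
    (hA1i : IsUnit (1 - Pp * Matrix.diagonal γf))
    (hWu : IsUnit (1 - Pp * Matrix.diagonal γf * Matrix.diagonal lf)) :
    (∀ s t, 0 ≤ (1 - (1 - Pp * Matrix.diagonal γf * Matrix.diagonal lf)⁻¹ *
        (1 - Pp * Matrix.diagonal γf)) s t) ∧
    (∀ s, ∑ t, (1 - (1 - Pp * Matrix.diagonal γf * Matrix.diagonal lf)⁻¹ *
        (1 - Pp * Matrix.diagonal γf)) s t ≤ 1) ∧
    (∀ s, 0 ≤ (dI ᵥ* (1 - (1 - (1 - Pp * Matrix.diagonal γf * Matrix.diagonal lf)⁻¹ *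
        (1 - Pp * Matrix.diagonal γf)))⁻¹) s) ∧
    (∀ s, (dI ᵥ* (1 - (1 - (1 - Pp * Matrix.diagonal γf * Matrix.diagonal lf)⁻¹ *
        (1 - Pp * Matrix.diagonal γf)))⁻¹) s
        = dI s + ∑ t, (dI ᵥ* (1 - (1 - (1 - Pp * Matrix.diagonal γf * Matrix.diagonal lf)⁻¹ *
            (1 - Pp * Matrix.diagonal γf)))⁻¹) t *
          (1 - (1 - Pp * Matrix.diagonal γf * Matrix.diagonal lf)⁻¹ *
            (1 - Pp * Matrix.diagonal γf)) t s) ∧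
    (∀ w : Fin N → ℝ, w ᵥ* (1 - (1 - (1 - Pp * Matrix.diagonal γf * Matrix.diagonal lf)⁻¹ *
        (1 - Pp * Matrix.diagonal γf))) = 0 → w = 0) := by
  set G : Matrix (Fin N) (Fin N) ℝ := Matrix.diagonal γf with hGdef
  set L : Matrix (Fin N) (Fin N) ℝ := Matrix.diagonal lf with hLdef
  set W : Matrix (Fin N) (Fin N) ℝ := 1 - Pp * G * L with hWdef
  set PL : Matrix (Fin N) (Fin N) ℝ := 1 - W⁻¹ * (1 - Pp * G) with hPLdef
  set K : Matrix (Fin N) (Fin N) ℝ := 1 - PL with hKdef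
  set m : Fin N → ℝ := dI ᵥ* K⁻¹ with hmdef
  have hTGL : ∀ s t, (Pp * G * L) s t = Pp s t * γf t * lf t := by
    intro s t
    rw [hGdef, hLdef, Matrix.mul_diagonal, Matrix.mul_diagonal]
  have hTGL0 : ∀ s t, 0 ≤ (Pp * G * L) s t := by
    intro s t
    rw [hTGL]
    exact mul_nonneg (mul_nonneg (hPπ0 s t) (hγ t).1) (hlf t).1
  have hTGLrow : ∀ s, ∑ t, (Pp * G * L) s t ≤ 1 := by
    intro s
    rw [← hPπrow s]
    apply Finset.sum_le_sum
    intro t _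
    rw [hTGL]
    have h1 : γf t * lf t ≤ 1 :=
      mul_le_one₀ (hγ t).2 (hlf t).1 (hlf t).2
    nlinarith [mul_nonneg (hPπ0 s t) (sub_nonneg.mpr h1)]
  have hWinv0 : ∀ i j, 0 ≤ W⁻¹ i j := by
    have := inv_one_sub_nonneg (Pp * G * L) hTGL0 hTGLrow (by rw [← hWdef] at *; exact hWu)
    rw [← hWdef] at this
    exact this
  have hWdet : IsUnit W.det := (Matrix.isUnit_iff_isUnit_det W).mp hWu
  have hA1det : IsUnit (1 - Pp * G).det := (Matrix.isUnit_iff_isUnit_det _).mp hA1i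
  have hKform : K = W⁻¹ * (1 - Pp * G) := by
    rw [hKdef, hPLdef, sub_sub_cancel]
  have hPLform : PL = W⁻¹ * (Pp * G - Pp * G * L) := by
    have h : W⁻¹ * W = 1 := Matrix.nonsing_inv_mul W hWdet
    rw [hPLdef]
    calc 1 - W⁻¹ * (1 - Pp * G)
        = W⁻¹ * W - W⁻¹ * (1 - Pp * G) := by rw [h]
      _ = W⁻¹ * (W - (1 - Pp * G)) := (Matrix.mul_sub _ _ _).symm
      _ = W⁻¹ * (Pp * G - Pp * G * L) := by
          rw [hWdef]
          congr 1
          abel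
  have hE0 : ∀ s t, 0 ≤ (Pp * G - Pp * G * L) s t := by
    intro s t
    rw [Matrix.sub_apply, hTGL, hGdef, Matrix.mul_diagonal]
    nlinarith [mul_nonneg (mul_nonneg (hPπ0 s t) (hγ t).1) (sub_nonneg.mpr (hlf t).2)]
  have hP0 : ∀ s t, 0 ≤ PL s t := by
    intro s t
    rw [hPLform, Matrix.mul_apply]
    exact Finset.sum_nonneg fun u _ => mul_nonneg (hWinv0 s u) (hE0 u t)
  have hKrow : ∀ s, 0 ≤ ∑ t, K s t := by
    intro s
    rw [hKform]
    have hswap : ∑ t, (W⁻¹ * (1 - Pp * G)) s t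
        = ∑ u, W⁻¹ s u * (∑ t, (1 - Pp * G) u t) := by
      simp only [Matrix.mul_apply]
      rw [Finset.sum_comm]
      apply Finset.sum_congr rfl
      intro u _
      rw [Finset.mul_sum]
    rw [hswap]
    apply Finset.sum_nonneg
    intro u _
    apply mul_nonneg (hWinv0 s u)
    have h1 : ∑ t, (1 - Pp * G) u t = 1 - ∑ t, Pp u t * γf t := by
      have hterm : ∀ t, (1 - Pp * G) u t
          = (1 : Matrix (Fin N) (Fin N) ℝ) u t - Pp u t * γf t := by
        intro t
        rw [Matrix.sub_apply, hGdef, Matrix.mul_diagonal]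
      rw [Finset.sum_congr rfl fun t _ => hterm t, Finset.sum_sub_distrib]
      congr 1
      simp [Matrix.one_apply]
    rw [h1]
    have h2 : ∑ t, Pp u t * γf t ≤ ∑ t, Pp u t := by
      apply Finset.sum_le_sum
      intro t _
      nlinarith [hPπ0 u t, (hγ t).1, (hγ t).2]
    rw [hPπrow u] at h2
    linarith
  have hProw : ∀ s, ∑ t, PL s t ≤ 1 := by
    intro s
    have hsum : ∑ t, PL s t + ∑ t, K s t = 1 := by
      rw [← Finset.sum_add_distrib]
      have hterm : ∀ t, PL s t + K s t = (1 : Matrix (Fin N) (Fin N) ℝ) s t := by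
        intro t
        rw [hKdef, Matrix.sub_apply]
        ring
      rw [Finset.sum_congr rfl fun t _ => hterm t]
      exact (by simp [Matrix.one_apply] : ∑ t, (1 : Matrix (Fin N) (Fin N) ℝ) s t = 1)
    linarith [hKrow s]
  have hKright : K * ((1 - Pp * G)⁻¹ * W) = 1 := by
    rw [hKform, Matrix.mul_assoc, ← Matrix.mul_assoc (1 - Pp * G),
      Matrix.mul_nonsing_inv _ hA1det, Matrix.one_mul, Matrix.nonsing_inv_mul _ hWdet]
  have hKdet : IsUnit K.det := by
    have := congrArg Matrix.det hKright
    rw [Matrix.det_mul, Matrix.det_one] at this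
    exact IsUnit.of_mul_eq_one _ this
  have hbalmat : m ᵥ* K = dI := by
    rw [hmdef, Matrix.vecMul_vecMul, Matrix.nonsing_inv_mul _ hKdet, Matrix.vecMul_one]
  have hKinv0 : ∀ i j, 0 ≤ K⁻¹ i j := by
    have h := inv_one_sub_nonneg PL hP0 hProw (by
      rw [← hKdef]; exact (Matrix.isUnit_iff_isUnit_det K).mpr hKdet)
    rw [← hKdef] at h
    exact h
  have hm0 : ∀ s, 0 ≤ m s := by
    intro s
    rw [hmdef]
    have : (dI ᵥ* K⁻¹) s = ∑ t, dI t * K⁻¹ t s := by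
      simp [Matrix.vecMul, dotProduct]
    rw [this]
    exact Finset.sum_nonneg fun t _ => mul_nonneg (hdI t) (hKinv0 t s)
  have hbal : ∀ s, m s = dI s + ∑ t, m t * PL t s := by
    intro s
    have h1 : (m ᵥ* K) s = dI s := by rw [hbalmat]
    have h2 : (m ᵥ* K) s = m s - ∑ t, m t * PL t s := by
      rw [hKdef]
      have : ∀ t, m t * (1 - PL) t s
          = (if t = s then m t else 0) - m t * PL t s := by
        intro t
        rw [Matrix.sub_apply, Matrix.one_apply]
        split_ifs <;> ring
      simp only [Matrix.vecMul, dotProduct]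
      rw [Finset.sum_congr rfl fun t _ => this t, Finset.sum_sub_distrib,
        Finset.sum_ite_eq' Finset.univ s m]
      simp
    rw [h2] at h1
    linarith
  have hker : ∀ w : Fin N → ℝ, w ᵥ* K = 0 → w = 0 := by
    intro w hw
    have : w ᵥ* (K * K⁻¹) = 0 ᵥ* K⁻¹ := by
      rw [← Matrix.vecMul_vecMul, hw]
    rw [Matrix.mul_nonsing_inv _ hKdet, Matrix.vecMul_one, Matrix.zero_vecMul] at this
    exact this
  exact ⟨hP0, hProw, hm0, hbal, hker⟩


end Aux

theorem range_and_negdef_on_span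
    {N M n : ℕ}
    (p : Fin N → Fin M → Fin N → ℝ) (π πb : Fin N → Fin M → ℝ)
    (γf lf iF d : Fin N → ℝ) (Φ : Matrix (Fin N) (Fin n) ℝ)
    (hp0 : ∀ s a s', 0 ≤ p s a s') (hp1 : ∀ s a, ∑ s', p s a s' = 1)
    (hπ0 : ∀ s a, 0 ≤ π s a) (hπ1 : ∀ s, ∑ a, π s a = 1)
    (hπb0 : ∀ s a, 0 ≤ πb s a) (hπb1 : ∀ s, ∑ a, πb s a = 1)
    (hγ : ∀ s, 0 ≤ γf s ∧ γf s ≤ 1) (hγ1 : ∃ s, γf s < 1)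
    (hlf : ∀ s, 0 ≤ lf s ∧ lf s ≤ 1) (hi : ∀ s, 0 ≤ iF s)
    -- Assumption 1
    (hA1i : IsUnit (1 - Pmat p π * Matrix.diagonal γf))
    (hirr : ∀ s s', ∃ k : ℕ, 1 ≤ k ∧ 0 < (Pmat p πb ^ k) s s')
    (hsupp : ∀ s a, 0 < π s a → 0 < πb s a)
    -- steady-state distribution of the behavior policy
    (hd0 : ∀ s, 0 < d s) (hd1 : ∑ s, d s = 1)
    (hdstat : ∀ s', ∑ s, d s * Pmat p πb s s' = d s')
    -- i(s) > 0 for at least one state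
    (hipos : ∃ s, 0 < iF s) :
    -- (i) range(C) = range(Cᵀ) = span{φ(s) : s ∈ 𝒥₁}
    LinearMap.range (Cmat p π γf lf d iF Φ).mulVecLin =
        Submodule.span ℝ {x : Fin n → ℝ |
          ∃ s : Fin N, 0 < MbarDiag p π γf lf d iF s ∧ x = (Φ s : Fin n → ℝ)} ∧
    LinearMap.range ((Cmat p π γf lf d iF Φ)ᵀ).mulVecLin =
        Submodule.span ℝ {x : Fin n → ℝ |
          ∃ s : Fin N, 0 < MbarDiag p π γf lf d iF s ∧ x = (Φ s : Fin n → ℝ)} ∧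
    -- (ii) ∃ c > 0 with xᵀCx ≤ −c|x|² on span{φ(s) : s ∈ 𝒥₁}
    ∃ c : ℝ, 0 < c ∧
      ∀ x : Fin n → ℝ,
        x ∈ Submodule.span ℝ {x : Fin n → ℝ |
            ∃ s : Fin N, 0 < MbarDiag p π γf lf d iF s ∧ x = (Φ s : Fin n → ℝ)} →
        x ⬝ᵥ (Cmat p π γf lf d iF Φ).mulVec x ≤ -c * (x ⬝ᵥ x) := by
  have hCeq : Cmat p π γf lf d iF Φ
      = -(Φᵀ * Matrix.diagonal (MbarDiag p π γf lf d iF) * (1 - Plam p π γf lf) * Φ) := rfl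
  have hPπ0 : ∀ s t, 0 ≤ Pmat p π s t := by
    intro s t
    show 0 ≤ ∑ a, π s a * p s a t
    exact Finset.sum_nonneg fun a _ => mul_nonneg (hπ0 s a) (hp0 s a t)
  have hPπrow : ∀ s, ∑ t, Pmat p π s t = 1 := by
    intro s
    show ∑ t, ∑ a, π s a * p s a t = 1
    rw [Finset.sum_comm]
    have h : ∀ a, ∑ t, π s a * p s a t = π s a := by
      intro a
      rw [← Finset.mul_sum, hp1 s a, mul_one]
    rw [Finset.sum_congr rfl fun a _ => h a, hπ1 s]
  by_cases hWu : IsUnit (1 - Pmat p π * Matrix.diagonal γf * Matrix.diagonal lf)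
  · obtain ⟨hP0, hProw, hm0, hbal, hker⟩ :=
      case_b (Pmat p π) γf lf (fun s => d s * iF s) hPπ0 hPπrow hγ hlf
        (fun s => mul_nonneg (hd0 s).le (hi s)) hA1i hWu
    have hPlameq : (1 - (1 - Pmat p π * Matrix.diagonal γf * Matrix.diagonal lf)⁻¹ *
        (1 - Pmat p π * Matrix.diagonal γf)) = Plam p π γf lf := rfl
    have hMeq : ((fun s => d s * iF s) ᵥ*
        (1 - (1 - (1 - Pmat p π * Matrix.diagonal γf * Matrix.diagonal lf)⁻¹ *
          (1 - Pmat p π * Matrix.diagonal γf)))⁻¹) = MbarDiag p π γf lf d iF := rfl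
    rw [hMeq] at hm0 hbal
    rw [hPlameq] at hP0 hProw hbal hker
    have h := main_structure (Plam p π γf lf) (MbarDiag p π γf lf d iF)
      (fun s => d s * iF s) Φ hP0 hProw hm0
      (fun s => mul_nonneg (hd0 s).le (hi s)) hbal hker
    rw [hCeq]
    exact h
  · -- degenerate case: the relevant matrix is 0 and the span is ⊥
    have : Nonempty (Fin N) := ⟨hipos.choose⟩
    have hdet0 : ¬IsUnit (1 - Pmat p π * Matrix.diagonal γf * Matrix.diagonal lf).det :=
      fun h => hWu ((Matrix.isUnit_iff_isUnit_det _).mpr h)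
    have hWinv : (1 - Pmat p π * Matrix.diagonal γf * Matrix.diagonal lf)⁻¹ = 0 :=
      Matrix.nonsing_inv_apply_not_isUnit _ hdet0
    have hPlam1 : Plam p π γf lf = 1 := by
      unfold Plam
      rw [hWinv, Matrix.zero_mul, sub_zero]
    have hK0 : 1 - Plam p π γf lf = (0 : Matrix (Fin N) (Fin N) ℝ) := by
      rw [hPlam1, sub_self]
    have hZinv : (0 : Matrix (Fin N) (Fin N) ℝ)⁻¹ = 0 := by
      apply Matrix.nonsing_inv_apply_not_isUnit
      rw [Matrix.det_zero]
      exact not_isUnit_zero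
    have hM0 : MbarDiag p π γf lf d iF = 0 := by
      unfold MbarDiag
      rw [hK0, hZinv, Matrix.vecMul_zero]
    have hC0 : Cmat p π γf lf d iF Φ = 0 := by
      rw [hCeq, hM0]
      rw [show Matrix.diagonal (0 : Fin N → ℝ) = (0 : Matrix (Fin N) (Fin N) ℝ) from
        Matrix.diagonal_zero]
      rw [Matrix.mul_zero, Matrix.zero_mul, Matrix.zero_mul, neg_zero]
    have hSet : {x : Fin n → ℝ |
        ∃ s : Fin N, 0 < MbarDiag p π γf lf d iF s ∧ x = (Φ s : Fin n → ℝ)} = ∅ := by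
      ext x
      simp [hM0]
    rw [hC0, hSet, Submodule.span_empty]
    refine ⟨?_, ?_, 1, one_pos, ?_⟩
    · rw [show ((0 : Matrix (Fin n) (Fin n) ℝ)).mulVecLin = 0 from Matrix.mulVecLin_zero]
      exact LinearMap.range_zero
    · rw [Matrix.transpose_zero]
      rw [show ((0 : Matrix (Fin n) (Fin n) ℝ)).mulVecLin = 0 from Matrix.mulVecLin_zero]
      exact LinearMap.range_zero
    · intro x hx
      have : x = 0 := by simpa using hx
      subst this
      simp


end ETD14
end
end

section
/- Let Assumption 1(ii) hold and fix a constant stepsize α > 0. Let Q(dθ′ | ξ, θ) be the stochastic kernel on B given Ξ×B describing the conditional distribution of θ_{t+1}^α given ξ_t = ξ and θ_t^α = θ, for iterates generated by the perturbed version of constrained ETD(λ) (or of Variant 1 or Variant 2). Then for each bounded set E ⊂ Ξ there exist β ∈ (0,1] and a probability measure Q₁ on B such that Q(dθ′ | ξ, θ) ≥ β·Q₁(dθ′) for all ξ ∈ E and θ ∈ B. -/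
/-!
Statement 19 (Lemma 4.4): for the perturbed constrained ETD(λ) algorithm (or its
Variant 1/Variant 2) with constant stepsize α > 0, the stochastic kernel
Q(dθ′ | ξ, θ) describing the conditional law of θ_{t+1} given (ξ_t, θ_t) admits, for
each bounded set E ⊂ Ξ, a minorization Q(dθ′ | ξ, θ) ≥ β Q₁(dθ′) for all ξ ∈ E, θ ∈ B.
-/

open MeasureTheory Filter Topology Matrix
open scoped ENNReal Classical

noncomputable section
namespace ETD19

def rho {N M : ℕ} (π πb : Fin N → Fin M → ℝ) (s : Fin N) (a : Fin M) : ℝ := π s a / πb s a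

def Pmat {N M : ℕ} (p : Fin N → Fin M → Fin N → ℝ) (pol : Fin N → Fin M → ℝ) :
    Matrix (Fin N) (Fin N) ℝ :=
  Matrix.of fun s s' => ∑ a, pol s a * p s a s'

def eunorm {n : ℕ} (x : Fin n → ℝ) : ℝ := Real.sqrt (∑ j, x j ^ 2)

def projB {n : ℕ} (rB : ℝ) (x : Fin n → ℝ) : Fin n → ℝ :=
  if eunorm x ≤ rB then x else (rB / eunorm x) • x

/-- The space Ξ = ℝ^{n+1} × 𝒮 × 𝒜 × 𝒮 of ξ = (e, F, s, a, s'). -/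
abbrev XiSpace (N M n : ℕ) := ((Fin n → ℝ) × ℝ) × Fin N × Fin M × Fin N

theorem kernel_minorization
    {N M n : ℕ}
    (p : Fin N → Fin M → Fin N → ℝ) (π πb : Fin N → Fin M → ℝ)
    (γf : Fin N → ℝ) (Φ : Matrix (Fin N) (Fin n) ℝ)
    (hp0 : ∀ s a s', 0 ≤ p s a s') (hp1 : ∀ s a, ∑ s', p s a s' = 1)
    (hπ0 : ∀ s a, 0 ≤ π s a) (hπ1 : ∀ s, ∑ a, π s a = 1)
    (hπb0 : ∀ s a, 0 ≤ πb s a) (hπb1 : ∀ s, ∑ a, πb s a = 1)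
    -- Assumption 1(ii)
    (hirr : ∀ s s', ∃ k : ℕ, 1 ≤ k ∧ 0 < (Pmat p πb ^ k) s s')
    (hsupp : ∀ s a, 0 < π s a → 0 < πb s a)
    -- reward distributions
    (q : Fin N → Fin M → Fin N → Measure ℝ)
    (hq : ∀ s a s', IsProbabilityMeasure (q s a s'))
    -- the constant stepsize and the radius of B
    (α : ℝ) (hα : 0 < α) (rB : ℝ) (hrB : 0 < rB)
    -- law of the i.i.d. perturbations: zero mean, finite variance, positive
    -- continuous density w.r.t. Lebesgue measure
    (pΔ : Measure (Fin n → ℝ)) (hpΔ : IsProbabilityMeasure pΔ)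
    (hpΔmean : ∫ x, x ∂pΔ = 0)
    (hpΔvar : Integrable (fun x : (Fin n → ℝ) => ‖x‖ ^ 2) pΔ)
    (hpΔdens : ∃ ρd : (Fin n → ℝ) → ℝ, Continuous ρd ∧ (∀ x, 0 < ρd x) ∧
        pΔ = MeasureTheory.volume.withDensity (fun x => ENNReal.ofReal (ρd x)))
    -- the bounded Lipschitz truncation ψ_K used by the variants
    (K : ℝ) (hK : 0 < K) (ψK : (Fin n → ℝ) → (Fin n → ℝ))
    (hψbdd : ∃ Cb : ℝ, ∀ x, ‖ψK x‖ ≤ Cb)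
    (hψlip : ∃ L : NNReal, LipschitzWith L ψK)
    (hψle : ∀ x, ‖ψK x‖ ≤ ‖x‖)
    (hψeq : ∀ x : Fin n → ℝ, ‖x‖ ≤ K → ψK x = x)
    -- the (unperturbed) increment Y of the algorithm: constrained ETD(λ), or
    -- Variant 1, or Variant 2
    (Yf : XiSpace N M n → (Fin n → ℝ) → ℝ → (Fin n → ℝ))
    (hYf :
      (∀ ξ θ r, Yf ξ θ r = (rho π πb ξ.2.1 ξ.2.2.1 *
          (r + γf ξ.2.2.2 * ((Φ ξ.2.2.2 : Fin n → ℝ) ⬝ᵥ θ) -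
            (Φ ξ.2.1 : Fin n → ℝ) ⬝ᵥ θ)) • ξ.1.1) ∨
      (∀ ξ θ r, Yf ξ θ r = (rho π πb ξ.2.1 ξ.2.2.1 *
          (r + γf ξ.2.2.2 * ((Φ ξ.2.2.2 : Fin n → ℝ) ⬝ᵥ θ) -
            (Φ ξ.2.1 : Fin n → ℝ) ⬝ᵥ θ)) • ψK ξ.1.1) ∨
      (∀ ξ θ r, Yf ξ θ r = ψK ((rho π πb ξ.2.1 ξ.2.2.1 *
          (r + γf ξ.2.2.2 * ((Φ ξ.2.2.2 : Fin n → ℝ) ⬝ᵥ θ) -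
            (Φ ξ.2.1 : Fin n → ℝ) ⬝ᵥ θ)) • ξ.1.1))) :
    -- conclusion: minorization of the one-step kernel of the θ-iterate,
    -- Q(D | ξ, θ) = ∫∫ 1(Π_B(θ + αY(ξ,θ,r) + αΔ) ∈ D) pΔ(dΔ) q(dr | s,a,s'),
    -- uniformly over bounded sets E ⊂ Ξ and θ ∈ B
    ∀ E : Set (XiSpace N M n),
      (∃ R : ℝ, ∀ ξ ∈ E, ‖ξ.1.1‖ ≤ R ∧ |ξ.1.2| ≤ R) →
      ∃ β : ℝ, 0 < β ∧ β ≤ 1 ∧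
      ∃ Q₁ : Measure (Fin n → ℝ), IsProbabilityMeasure Q₁ ∧
        Q₁ {θ' : Fin n → ℝ | eunorm θ' ≤ rB} = 1 ∧
        ∀ ξ ∈ E, ∀ θ : Fin n → ℝ, eunorm θ ≤ rB →
          ∀ D : Set (Fin n → ℝ), MeasurableSet D →
            ENNReal.ofReal β * Q₁ D ≤
              ∫⁻ r, ∫⁻ Δ, D.indicator (fun _ => (1 : ℝ≥0∞))
                  (projB rB (θ + α • Yf ξ θ r + α • Δ)) ∂pΔ ∂(q ξ.2.1 ξ.2.2.1 ξ.2.2.2) := by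
  intro E hE
  obtain ⟨R, hR⟩ := hE
  obtain ⟨ρd, hρc, hρpos, hρeq⟩ := hpΔdens
  classical
  -- choose a radius T capturing at least half of each reward distribution
  have hball : ∀ t : Fin N × Fin M × Fin N, ∃ k : ℕ,
      (1/2 : ℝ≥0∞) < q t.1 t.2.1 t.2.2 (Metric.closedBall 0 k) := by
    intro t
    have hprob := hq t.1 t.2.1 t.2.2
    have hmono : Monotone (fun k : ℕ => Metric.closedBall (0:ℝ) k) :=
      fun a b hab => Metric.closedBall_subset_closedBall (by exact_mod_cast hab)
    have hdir : Directed (· ⊆ ·) (fun k : ℕ => Metric.closedBall (0:ℝ) k) := hmono.directed_le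
    have hu : ⋃ k : ℕ, Metric.closedBall (0:ℝ) k = Set.univ := by
      ext x; simp only [Set.mem_iUnion, Metric.mem_closedBall, Set.mem_univ, iff_true]
      exact ⟨⌈|x|⌉₊, by simpa [Real.dist_eq] using Nat.le_ceil |x|⟩
    have h := hdir.measure_iUnion (μ := q t.1 t.2.1 t.2.2)
    rw [hu, measure_univ] at h
    have hlt : (1/2 : ℝ≥0∞) < ⨆ k : ℕ, q t.1 t.2.1 t.2.2 (Metric.closedBall 0 k) := by
      rw [← h]; exact ENNReal.half_lt_self one_ne_zero ENNReal.one_ne_top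
    exact lt_iSup_iff.mp hlt
  choose kT hkT using hball
  set T : ℝ := ((Finset.univ.sup kT : ℕ) : ℝ) with hTdef
  have hT0 : (0:ℝ) ≤ T := Nat.cast_nonneg _
  -- constants
  set R' : ℝ := max R 0 with hR'def
  have hR'0 : (0:ℝ) ≤ R' := le_max_right _ _
  set Cρ : ℝ := ∑ s, ∑ a, |rho π πb s a| with hCρdef
  set Cγ : ℝ := ∑ s, |γf s| with hCγdef
  set CΦ : ℝ := ∑ s, ∑ j, |Φ s j| with hCΦdef
  have hCρ0 : (0:ℝ) ≤ Cρ :=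
    Finset.sum_nonneg fun _ _ => Finset.sum_nonneg fun _ _ => abs_nonneg _
  have hCγ0 : (0:ℝ) ≤ Cγ := Finset.sum_nonneg fun _ _ => abs_nonneg _
  have hCΦ0 : (0:ℝ) ≤ CΦ :=
    Finset.sum_nonneg fun _ _ => Finset.sum_nonneg fun _ _ => abs_nonneg _
  set Csc : ℝ := Cρ * (T + Cγ * (CΦ * rB) + CΦ * rB) with hCscdef
  have hCsc0 : (0:ℝ) ≤ Csc := by
    apply mul_nonneg hCρ0
    have h1 : (0:ℝ) ≤ Cγ * (CΦ * rB) := mul_nonneg hCγ0 (mul_nonneg hCΦ0 hrB.le)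
    have h2 : (0:ℝ) ≤ CΦ * rB := mul_nonneg hCΦ0 hrB.le
    linarith
  set C' : ℝ := rB + α * (Csc * R') with hC'def
  have hC'0 : (0:ℝ) ≤ C' :=
    add_nonneg hrB.le (mul_nonneg hα.le (mul_nonneg hCsc0 hR'0))
  set R₀ : ℝ := (rB + C') / α with hR₀def
  have hR₀0 : (0:ℝ) ≤ R₀ := div_nonneg (add_nonneg hrB.le hC'0) hα.le
  -- minimum of the density on the relevant compact ball
  have hK₀c : IsCompact (Metric.closedBall (0 : Fin n → ℝ) R₀) := isCompact_closedBall _ _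
  obtain ⟨x₀, hx₀, hmin'⟩ :=
    hK₀c.exists_isMinOn ⟨0, Metric.mem_closedBall_self hR₀0⟩ hρc.continuousOn
  have hmin : ∀ y ∈ Metric.closedBall (0 : Fin n → ℝ) R₀, ρd x₀ ≤ ρd y := fun y hy => hmin' hy
  set m : ℝ := ρd x₀ with hmdef
  have hm : 0 < m := hρpos x₀
  -- the ball S = B
  set S : Set (Fin n → ℝ) := {θ' | eunorm θ' ≤ rB} with hSdef
  have heucont : Continuous (eunorm (n := n)) := by
    unfold eunorm
    exact Real.continuous_sqrt.comp
      (continuous_finset_sum _ fun j _ => (continuous_apply j).pow 2)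
  have hSmeas : MeasurableSet S :=
    measurableSet_le heucont.measurable measurable_const
  have habs_le : ∀ (x : Fin n → ℝ) (j : Fin n), |x j| ≤ eunorm x := by
    intro x j
    have h1 : x j ^ 2 ≤ ∑ i, x i ^ 2 :=
      Finset.single_le_sum (fun i _ => sq_nonneg (x i)) (Finset.mem_univ j)
    calc |x j| = Real.sqrt (x j ^ 2) := (Real.sqrt_sq_eq_abs _).symm
      _ ≤ Real.sqrt (∑ i, x i ^ 2) := Real.sqrt_le_sqrt h1
  have hnorm_le : ∀ x ∈ S, ‖x‖ ≤ rB := by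
    intro x hx
    refine (pi_norm_le_iff_of_nonneg hrB.le).2 fun j => ?_
    simpa [Real.norm_eq_abs] using (habs_le x j).trans hx
  have hS0 : volume S ≠ 0 := by
    have hεpos : (0:ℝ) < rB / ((n:ℝ) + 1) := by positivity
    have hsub : Metric.ball (0 : Fin n → ℝ) (rB / ((n:ℝ)+1)) ⊆ S := by
      intro x hx
      rw [Metric.mem_ball, dist_zero_right] at hx
      show eunorm x ≤ rB
      have h1 : ∑ j, x j ^ 2 ≤ ∑ _j : Fin n, (rB / ((n:ℝ)+1)) ^ 2 := by
        refine Finset.sum_le_sum fun j _ => ?_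
        have hj : |x j| ≤ rB / ((n:ℝ)+1) := by
          have := norm_le_pi_norm x j
          rw [Real.norm_eq_abs] at this
          exact this.trans hx.le
        calc x j ^ 2 = |x j| ^ 2 := (sq_abs _).symm
          _ ≤ (rB / ((n:ℝ)+1)) ^ 2 := pow_le_pow_left₀ (abs_nonneg _) hj 2
      have h2 : (∑ _j : Fin n, (rB / ((n:ℝ)+1)) ^ 2) = (n:ℝ) * (rB / ((n:ℝ)+1)) ^ 2 := by
        rw [Finset.sum_const, Finset.card_univ, Fintype.card_fin, nsmul_eq_mul]
      have hkey : (n:ℝ) ≤ ((n:ℝ)+1) ^ 2 := by nlinarith [Nat.cast_nonneg (α := ℝ) n]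
      have h3 : (n:ℝ) * (rB / ((n:ℝ)+1)) ^ 2 ≤ rB ^ 2 := by
        calc (n:ℝ) * (rB / ((n:ℝ)+1)) ^ 2
            ≤ ((n:ℝ)+1) ^ 2 * (rB / ((n:ℝ)+1)) ^ 2 :=
              mul_le_mul_of_nonneg_right hkey (sq_nonneg _)
          _ = rB ^ 2 := by
              field_simp
      unfold eunorm
      calc Real.sqrt (∑ j, x j ^ 2) ≤ Real.sqrt (rB ^ 2) :=
            Real.sqrt_le_sqrt (h1.trans (h2 ▸ h3))
        _ = rB := Real.sqrt_sq hrB.le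
    exact ((Metric.measure_ball_pos volume _ hεpos).trans_le (measure_mono hsub)).ne'
  have hSfin : volume S ≠ ⊤ := by
    have hsub : S ⊆ Metric.closedBall 0 rB := by
      intro x hx
      rw [Metric.mem_closedBall, dist_zero_right]
      exact hnorm_le x hx
    exact ((measure_mono hsub).trans_lt measure_closedBall_lt_top).ne
  -- the minorizing measure
  set Q₁ : Measure (Fin n → ℝ) := (volume S)⁻¹ • volume.restrict S with hQ₁def
  have hQapp : ∀ D : Set (Fin n → ℝ), MeasurableSet D →
      Q₁ D = (volume S)⁻¹ * volume (D ∩ S) := by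
    intro D hD
    rw [hQ₁def, Measure.smul_apply, Measure.restrict_apply hD, smul_eq_mul]
  have hQS : Q₁ S = 1 := by
    rw [hQapp S hSmeas, Set.inter_self, ENNReal.inv_mul_cancel hS0 hSfin]
  have hQprob : IsProbabilityMeasure Q₁ := ⟨by
    rw [hQapp _ MeasurableSet.univ, Set.univ_inter, ENNReal.inv_mul_cancel hS0 hSfin]⟩
  -- the scaling constant and β
  set cα : ℝ≥0∞ := ENNReal.ofReal |(α ^ Module.finrank ℝ (Fin n → ℝ))⁻¹| with hcαdef
  have hcα0 : cα ≠ 0 := by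
    rw [hcαdef]
    exact (ENNReal.ofReal_pos.2 (abs_pos.2 (inv_ne_zero (pow_ne_zero _ hα.ne')))).ne'
  have hcαtop : cα ≠ ⊤ := ENNReal.ofReal_ne_top
  set V : ℝ≥0∞ := (1/2) * (ENNReal.ofReal m * (cα * volume S)) with hVdef
  have hV0 : V ≠ 0 := by
    rw [hVdef]
    refine mul_ne_zero (by norm_num) (mul_ne_zero ?_ (mul_ne_zero hcα0 hS0))
    exact (ENNReal.ofReal_pos.2 hm).ne'
  have hVtop : V ≠ ⊤ := by
    rw [hVdef]
    exact ENNReal.mul_ne_top (by norm_num)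
      (ENNReal.mul_ne_top ENNReal.ofReal_ne_top (ENNReal.mul_ne_top hcαtop hSfin))
  refine ⟨min 1 V.toReal, lt_min one_pos (ENNReal.toReal_pos hV0 hVtop),
    min_le_left _ _, Q₁, hQprob, hQS, ?_⟩
  intro ξ hξ θ hθ D hD
  have hβle : ENNReal.ofReal (min 1 V.toReal) * Q₁ D ≤
      (1/2) * (ENNReal.ofReal m * (cα * volume (D ∩ S))) := by
    rw [hQapp D hD]
    have h1 : ENNReal.ofReal (min 1 V.toReal) ≤ V :=
      (ENNReal.ofReal_le_ofReal (min_le_right _ _)).trans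
        (le_of_eq (ENNReal.ofReal_toReal hVtop))
    have hc : volume S * ((volume S)⁻¹ * volume (D ∩ S)) = volume (D ∩ S) := by
      rw [← mul_assoc, ENNReal.mul_inv_cancel hS0 hSfin, one_mul]
    calc ENNReal.ofReal (min 1 V.toReal) * ((volume S)⁻¹ * volume (D ∩ S))
        ≤ V * ((volume S)⁻¹ * volume (D ∩ S)) := mul_le_mul_left h1 _
      _ = (1/2) * (ENNReal.ofReal m * (cα * (volume S * ((volume S)⁻¹ * volume (D ∩ S))))) := by
          rw [hVdef]; ring
      _ = (1/2) * (ENNReal.ofReal m * (cα * volume (D ∩ S))) := by rw [hc]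
  refine hβle.trans ?_
  set L₀ : ℝ≥0∞ := ENNReal.ofReal m * (cα * volume (D ∩ S)) with hL₀def
  have hθnorm : ‖θ‖ ≤ rB := hnorm_le θ hθ
  -- inner bound, uniform over |r| ≤ T
  have hinner : ∀ r ∈ Metric.closedBall (0:ℝ) T, L₀ ≤
      ∫⁻ Δ, D.indicator (fun _ => (1:ℝ≥0∞)) (projB rB (θ + α • Yf ξ θ r + α • Δ)) ∂pΔ := by
    intro r hr
    have hrT : |r| ≤ T := by
      rw [Metric.mem_closedBall, Real.dist_eq, sub_zero] at hr; exact hr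
    -- bound on the increment
    have hρb : ∀ s a, |rho π πb s a| ≤ Cρ := by
      intro s a
      calc |rho π πb s a| ≤ ∑ a', |rho π πb s a'| :=
            Finset.single_le_sum (f := fun a' => |rho π πb s a'|)
              (fun _ _ => abs_nonneg _) (Finset.mem_univ a)
        _ ≤ Cρ := by
            rw [hCρdef]
            exact Finset.single_le_sum (f := fun s' => ∑ a', |rho π πb s' a'|)
              (fun _ _ => Finset.sum_nonneg fun _ _ => abs_nonneg _) (Finset.mem_univ s)
    have hγb : ∀ s, |γf s| ≤ Cγ := by
      intro s
      rw [hCγdef]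
      exact Finset.single_le_sum (f := fun s' => |γf s'|)
        (fun _ _ => abs_nonneg _) (Finset.mem_univ s)
    have hΦb : ∀ s, |(Φ s : Fin n → ℝ) ⬝ᵥ θ| ≤ CΦ * rB := by
      intro s
      have hj : ∀ j, |θ j| ≤ rB := fun j => (habs_le θ j).trans hθ
      calc |(Φ s : Fin n → ℝ) ⬝ᵥ θ| = |∑ j, Φ s j * θ j| := by rw [dotProduct]
        _ ≤ ∑ j, |Φ s j * θ j| := Finset.abs_sum_le_sum_abs _ _
        _ ≤ ∑ j, |Φ s j| * rB := Finset.sum_le_sum fun j _ => by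
            rw [abs_mul]; exact mul_le_mul_of_nonneg_left (hj j) (abs_nonneg _)
        _ = (∑ j, |Φ s j|) * rB := (Finset.sum_mul _ _ _).symm
        _ ≤ CΦ * rB := by
            rw [hCΦdef]
            exact mul_le_mul_of_nonneg_right
              (Finset.single_le_sum (f := fun s' => ∑ j, |Φ s' j|)
                (fun _ _ => Finset.sum_nonneg fun _ _ => abs_nonneg _)
                (Finset.mem_univ s)) hrB.le
    have hsc : |rho π πb ξ.2.1 ξ.2.2.1 *
        (r + γf ξ.2.2.2 * ((Φ ξ.2.2.2 : Fin n → ℝ) ⬝ᵥ θ) - (Φ ξ.2.1 : Fin n → ℝ) ⬝ᵥ θ)| ≤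
        Csc := by
      rw [abs_mul, hCscdef]
      refine mul_le_mul (hρb _ _) ?_ (abs_nonneg _) hCρ0
      have h1 : |γf ξ.2.2.2 * ((Φ ξ.2.2.2 : Fin n → ℝ) ⬝ᵥ θ)| ≤ Cγ * (CΦ * rB) := by
        rw [abs_mul]
        exact mul_le_mul (hγb _) (hΦb _) (abs_nonneg _) hCγ0
      calc |r + γf ξ.2.2.2 * ((Φ ξ.2.2.2 : Fin n → ℝ) ⬝ᵥ θ) - (Φ ξ.2.1 : Fin n → ℝ) ⬝ᵥ θ|
          ≤ |r + γf ξ.2.2.2 * ((Φ ξ.2.2.2 : Fin n → ℝ) ⬝ᵥ θ)| +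
            |(Φ ξ.2.1 : Fin n → ℝ) ⬝ᵥ θ| := abs_sub _ _
        _ ≤ (|r| + |γf ξ.2.2.2 * ((Φ ξ.2.2.2 : Fin n → ℝ) ⬝ᵥ θ)|) +
            |(Φ ξ.2.1 : Fin n → ℝ) ⬝ᵥ θ| :=
            add_le_add (abs_add_le _ _) le_rfl
        _ ≤ (T + Cγ * (CΦ * rB)) + CΦ * rB :=
            add_le_add (add_le_add hrT h1) (hΦb _)
        _ = T + Cγ * (CΦ * rB) + CΦ * rB := rfl
    have he : ‖ξ.1.1‖ ≤ R' := (hR ξ hξ).1.trans (le_max_left _ _)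
    have hYbound : ‖Yf ξ θ r‖ ≤ Csc * R' := by
      rcases hYf with h | h | h <;> rw [h ξ θ r]
      · rw [norm_smul, Real.norm_eq_abs]
        exact mul_le_mul hsc he (norm_nonneg _) hCsc0
      · rw [norm_smul, Real.norm_eq_abs]
        exact mul_le_mul hsc ((hψle _).trans he) (norm_nonneg _) hCsc0
      · refine (hψle _).trans ?_
        rw [norm_smul, Real.norm_eq_abs]
        exact mul_le_mul hsc he (norm_nonneg _) hCsc0
    set c : Fin n → ℝ := θ + α • Yf ξ θ r with hcdef
    have hcnorm : ‖c‖ ≤ C' := by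
      calc ‖c‖ ≤ ‖θ‖ + ‖α • Yf ξ θ r‖ := norm_add_le _ _
        _ ≤ rB + α * (Csc * R') := by
            rw [norm_smul, Real.norm_eq_abs, abs_of_pos hα]
            exact add_le_add hθnorm (mul_le_mul_of_nonneg_left hYbound hα.le)
        _ = C' := hC'def.symm
    set A : Set (Fin n → ℝ) := (fun Δ => c + α • Δ) ⁻¹' (D ∩ S) with hAdef
    have hAmeas : MeasurableSet A := by
      have hcont : Continuous (fun Δ : Fin n → ℝ => c + α • Δ) :=
        continuous_const.add (continuous_id.const_smul α)
      exact hcont.measurable (hD.inter hSmeas)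
    have hAsub : A ⊆ Metric.closedBall 0 R₀ := by
      intro Δ hΔ
      have hmem : c + α • Δ ∈ D ∩ S := hΔ
      have h1 : ‖c + α • Δ‖ ≤ rB := hnorm_le _ hmem.2
      have h2 : ‖α • Δ‖ ≤ rB + C' := by
        have heq : α • Δ = (c + α • Δ) - c := by abel
        rw [heq]
        exact (norm_sub_le _ _).trans (add_le_add h1 hcnorm)
      rw [norm_smul, Real.norm_eq_abs, abs_of_pos hα] at h2
      rw [Metric.mem_closedBall, dist_zero_right, hR₀def, le_div_iff₀ hα]
      linarith
    have hvolA : volume A = cα * volume (D ∩ S) := by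
      have hsplit : A = (α • ·) ⁻¹' ((fun x => c + x) ⁻¹' (D ∩ S)) := by
        ext Δ; simp [hAdef, Set.mem_preimage]
      rw [hsplit, Measure.addHaar_preimage_smul volume hα.ne', measure_preimage_add, hcαdef]
    have hstep1 : L₀ = ENNReal.ofReal m * volume A := by rw [hvolA, hL₀def]
    calc L₀ = ENNReal.ofReal m * volume A := hstep1
      _ = ∫⁻ _Δ in A, ENNReal.ofReal m ∂volume := (setLIntegral_const A _).symm
      _ ≤ ∫⁻ Δ in A, ENNReal.ofReal (ρd Δ) ∂volume :=
          setLIntegral_mono (ENNReal.measurable_ofReal.comp hρc.measurable)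
            (fun Δ hΔ => ENNReal.ofReal_le_ofReal (hmin Δ (hAsub hΔ)))
      _ = pΔ A := by rw [hρeq, withDensity_apply _ hAmeas]
      _ = ∫⁻ Δ, A.indicator (fun _ => (1:ℝ≥0∞)) Δ ∂pΔ := by
          rw [lintegral_indicator_const hAmeas, one_mul]
      _ ≤ ∫⁻ Δ, D.indicator (fun _ => (1:ℝ≥0∞)) (projB rB (θ + α • Yf ξ θ r + α • Δ)) ∂pΔ := by
          refine lintegral_mono fun Δ => ?_
          by_cases hΔ : Δ ∈ A
          · rw [Set.indicator_of_mem hΔ]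
            have hmem : c + α • Δ ∈ D ∩ S := hΔ
            have hproj : projB rB (θ + α • Yf ξ θ r + α • Δ) = c + α • Δ := by
              have hmem2 : eunorm (c + α • Δ) ≤ rB := hmem.2
              show projB rB (c + α • Δ) = c + α • Δ
              unfold projB
              rw [if_pos hmem2]
            rw [hproj, Set.indicator_of_mem hmem.1]
          · rw [Set.indicator_of_notMem hΔ]
            exact zero_le
  -- outer bound
  have hTk : Metric.closedBall (0:ℝ) (kT (ξ.2.1, ξ.2.2.1, ξ.2.2.2)) ⊆
      Metric.closedBall 0 T := by
    refine Metric.closedBall_subset_closedBall ?_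
    rw [hTdef]
    exact_mod_cast Finset.le_sup (Finset.mem_univ _)
  have hq2 : (1/2 : ℝ≥0∞) ≤ q ξ.2.1 ξ.2.2.1 ξ.2.2.2 (Metric.closedBall 0 T) :=
    (hkT (ξ.2.1, ξ.2.2.1, ξ.2.2.2)).le.trans (measure_mono hTk)
  calc (1/2) * L₀ = L₀ * (1/2) := mul_comm _ _
    _ ≤ L₀ * q ξ.2.1 ξ.2.2.1 ξ.2.2.2 (Metric.closedBall 0 T) := mul_le_mul_right hq2 _
    _ = ∫⁻ r, (Metric.closedBall (0:ℝ) T).indicator (fun _ => L₀) r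
          ∂(q ξ.2.1 ξ.2.2.1 ξ.2.2.2) := by
        rw [lintegral_indicator_const measurableSet_closedBall]
    _ ≤ ∫⁻ r, ∫⁻ Δ, D.indicator (fun _ => (1:ℝ≥0∞))
          (projB rB (θ + α • Yf ξ θ r + α • Δ)) ∂pΔ ∂(q ξ.2.1 ξ.2.2.1 ξ.2.2.2) := by
        refine lintegral_mono fun r => ?_
        by_cases hr : r ∈ Metric.closedBall (0:ℝ) T
        · rw [Set.indicator_of_mem hr]
          exact hinner r hr
        · rw [Set.indicator_of_notMem hr]
          exact zero_le


end ETD19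
end
end
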